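/- arXiv:1411.4855 — 5 statements merged into one kernel-verified Lean document; each statement's English description precedes it below -/
import Mathlib

section
/- If C is a sparse Cantor subset of the circle S¹ = ℝ/ℤ, then the group of homeomorphisms of C arising as restrictions to C of C¹ diffeomorphisms of S¹ preserving C is countable. -/
open Set Filter Topology Asymptotics

/-- A Cantor subset of the reals: nonempty, compact, perfect, totally disconnected. -/
def IsCantorSet (C : Set ℝ) : Prop :=
  C.Nonempty ∧ IsCompact C ∧ Perfect C ∧ IsTotallyDisconnected C

/-- `C` is `σ`-sparse: any two points of `C` bound a complementary open interval of
relative length at least `σ`. -/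
def SparseSet (σ : ℝ) (C : Set ℝ) : Prop :=
  ∀ a ∈ C, ∀ b ∈ C, a < b →
    ∃ α β : ℝ, a ≤ α ∧ α < β ∧ β ≤ b ∧ Set.Ioo α β ∩ C = ∅ ∧ σ * (b - a) ≤ β - α

/-- `φ` is a `C¹` diffeomorphism of `ℝ` with inverse `ψ`. -/
def IsC1DiffeoPair (φ ψ : ℝ → ℝ) : Prop :=
  ContDiff ℝ 1 φ ∧ ContDiff ℝ 1 ψ ∧ Function.LeftInverse ψ φ ∧ Function.RightInverse ψ φ
/-- A 1-periodic subset of ℝ (the lift of a subset of the circle ℝ/ℤ). -/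
def CirclePeriodic (C : Set ℝ) : Prop := ∀ x : ℝ, x ∈ C ↔ x + 1 ∈ C

/-- Lift of a Cantor subset of the circle `ℝ/ℤ`. -/
def IsCircleCantorLift (C : Set ℝ) : Prop :=
  C.Nonempty ∧ IsClosed C ∧ Perfect C ∧ IsTotallyDisconnected C ∧ CirclePeriodic C

/-- Sparseness for a subset of the circle, via its periodic lift: any arc between two
points of `C` contains a complementary arc of relative length at least `σ`. -/
def CircleSparse (σ : ℝ) (C : Set ℝ) : Prop :=
  ∀ a ∈ C, ∀ b ∈ C, a < b → b < a + 1 →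
    ∃ α β : ℝ, a ≤ α ∧ α < β ∧ β ≤ b ∧ Set.Ioo α β ∩ C = ∅ ∧ σ * (b - a) ≤ β - α

/-- Lift of a `C¹` diffeomorphism of the circle `ℝ/ℤ`: a `C¹` diffeomorphism of ℝ
commuting with the unit translation up to sign (degree ±1). -/
def IsCircleDiffeoLift (φ ψ : ℝ → ℝ) : Prop :=
  IsC1DiffeoPair φ ψ ∧ ((∀ x, φ (x + 1) = φ x + 1) ∨ (∀ x, φ (x + 1) = φ x - 1))

noncomputable section

namespace SparseRigidity

open Function

/-- A (maximal) gap of `C`. -/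
def IsGap (C : Set ℝ) (p q : ℝ) : Prop :=
  p ∈ C ∧ q ∈ C ∧ p < q ∧ Ioo p q ∩ C = ∅

variable {C : Set ℝ} {σ : ℝ}

lemma mem_tr (hper : CirclePeriodic C) (k : ℤ) {x : ℝ} (hx : x ∈ C) : x + k ∈ C := by
  induction k using Int.induction_on with
  | zero => simpa using hx
  | succ n ih =>
      have := (hper (x + n)).1 ih
      have e : x + ((n:ℤ)+1 : ℤ) = x + n + 1 := by push_cast; ring
      rwa [e]
  | pred n ih =>
      have : x + (-(n:ℤ) - 1 : ℤ) + 1 ∈ C := by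
        have e : x + (-(n:ℤ) - 1 : ℤ) + 1 = x + (-(n:ℤ) : ℤ) := by push_cast; ring
        rwa [e]
      exact (hper _).2 this

lemma gap_overlap_eq {p q p' q' z : ℝ} (h1 : IsGap C p q) (h2 : IsGap C p' q')
    (hz1 : z ∈ Ioo p q) (hz2 : z ∈ Ioo p' q') : p = p' ∧ q = q' := by
  obtain ⟨hp, hq, hpq, hint⟩ := h1
  obtain ⟨hp', hq', hpq', hint'⟩ := h2
  have hpp' : p' ≤ p := by
    by_contra hlt
    push_neg at hlt
    have : p' ∈ Ioo p q ∩ C := ⟨⟨hlt, lt_trans hz2.1 hz1.2⟩, hp'⟩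
    simp [hint] at this
  have hpp : p ≤ p' := by
    by_contra hlt
    push_neg at hlt
    have : p ∈ Ioo p' q' ∩ C := ⟨⟨hlt, lt_trans hz1.1 hz2.2⟩, hp⟩
    simp [hint'] at this
  have hqq' : q ≤ q' := by
    by_contra hlt
    push_neg at hlt
    have : q' ∈ Ioo p q ∩ C := ⟨⟨lt_trans hz1.1 hz2.2, hlt⟩, hq'⟩
    simp [hint] at this
  have hqq : q' ≤ q := by
    by_contra hlt
    push_neg at hlt
    have : q ∈ Ioo p' q' ∩ C := ⟨⟨lt_trans hz2.1 hz1.2, hlt⟩, hq⟩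
    simp [hint'] at this
  exact ⟨le_antisymm hpp hpp', le_antisymm hqq' hqq⟩

lemma gap_translate (hper : CirclePeriodic C) (k : ℤ) {p q : ℝ} (h : IsGap C p q) :
    IsGap C (p + k) (q + k) := by
  obtain ⟨hp, hq, hpq, hint⟩ := h
  refine ⟨mem_tr hper k hp, mem_tr hper k hq, by linarith, ?_⟩
  ext z; simp only [mem_inter_iff, mem_Ioo, mem_empty_iff_false, iff_false, not_and]
  intro hz1 hzC
  have : z - k ∈ Ioo p q ∩ C := by
    constructor
    · constructor <;> [linarith [hz1.1]; linarith [hz1.2]]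
    · have := mem_tr hper (-k) hzC; simpa [sub_eq_add_neg] using this
  simp [hint] at this

lemma gap_image {h : ℝ → ℝ} (hm : StrictMono h) (him : h '' C = C) {p q : ℝ}
    (hg : IsGap C p q) : IsGap C (h p) (h q) := by
  obtain ⟨hp, hq, hpq, hint⟩ := hg
  refine ⟨him ▸ mem_image_of_mem h hp, him ▸ mem_image_of_mem h hq, hm hpq, ?_⟩
  ext z; simp only [mem_inter_iff, mem_Ioo, mem_empty_iff_false, iff_false, not_and]
  rintro ⟨hz1, hz2⟩ hzC
  rw [← him] at hzC
  obtain ⟨w, hw, rfl⟩ := hzC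
  have : w ∈ Ioo p q ∩ C := ⟨⟨(hm.lt_iff_lt).1 hz1, (hm.lt_iff_lt).1 hz2⟩, hw⟩
  simp [hint] at this

lemma gap_image_anti {h : ℝ → ℝ} (hm : StrictAnti h) (him : h '' C = C) {p q : ℝ}
    (hg : IsGap C p q) : IsGap C (h q) (h p) := by
  obtain ⟨hp, hq, hpq, hint⟩ := hg
  refine ⟨him ▸ mem_image_of_mem h hq, him ▸ mem_image_of_mem h hp, hm hpq, ?_⟩
  ext z; simp only [mem_inter_iff, mem_Ioo, mem_empty_iff_false, iff_false, not_and]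
  rintro ⟨hz1, hz2⟩ hzC
  rw [← him] at hzC
  obtain ⟨w, hw, rfl⟩ := hzC
  have : w ∈ Ioo p q ∩ C := ⟨⟨(hm.lt_iff_gt).1 hz2, (hm.lt_iff_gt).1 hz1⟩, hw⟩
  simp [hint] at this

lemma gap_len_le_one (hper : CirclePeriodic C) (hne : C.Nonempty) {p q : ℝ}
    (h : IsGap C p q) : q - p ≤ 1 := by
  by_contra hlt
  push_neg at hlt
  obtain ⟨c, hc⟩ := hne
  -- c + k ∈ (p, p+1] ⊆ (p,q)
  set k : ℤ := ⌊p - c⌋ + 1 with hk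
  have h1 : p < c + k := by
    have := Int.lt_floor_add_one (p - c)
    push_cast [hk]; linarith
  have h2 : c + k ≤ p + 1 := by
    have := Int.floor_le (p - c)
    push_cast [hk]; linarith
  have : c + k ∈ Ioo p q ∩ C := ⟨⟨h1, by linarith⟩, mem_tr hper k hc⟩
  simp [h.2.2.2] at this

/-- maximalize a sparse gap to have endpoints in `C`. -/
lemma gapBetween (hσ : 0 < σ) (hsp : CircleSparse σ C) (hcl : IsClosed C)
    {a b : ℝ} (ha : a ∈ C) (hb : b ∈ C) (hab : a < b) (hb1 : b < a + 1) :
    ∃ p q, IsGap C p q ∧ a ≤ p ∧ q ≤ b ∧ σ * (b - a) ≤ q - p := by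
  obtain ⟨α, β, haα, hαβ, hβb, hint, hlen⟩ := hsp a ha b hb hab hb1
  set p := sSup (C ∩ Icc a α) with hp
  set q := sInf (C ∩ Icc β b) with hq
  have hPne : (C ∩ Icc a α).Nonempty := ⟨a, ha, le_refl a, haα⟩
  have hQne : (C ∩ Icc β b).Nonempty := ⟨b, hb, hβb, le_refl b⟩
  have hPcl : IsClosed (C ∩ Icc a α) := hcl.inter isClosed_Icc
  have hQcl : IsClosed (C ∩ Icc β b) := hcl.inter isClosed_Icc
  have hPbdd : BddAbove (C ∩ Icc a α) := ⟨α, fun x hx => hx.2.2⟩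
  have hQbdd : BddBelow (C ∩ Icc β b) := ⟨β, fun x hx => hx.2.1⟩
  have hpmem : p ∈ C ∩ Icc a α := hPcl.csSup_mem hPne hPbdd
  have hqmem : q ∈ C ∩ Icc β b := hQcl.csInf_mem hQne hQbdd
  refine ⟨p, q, ⟨hpmem.1, hqmem.1, ?_, ?_⟩, hpmem.2.1, hqmem.2.2, ?_⟩
  · calc p ≤ α := hpmem.2.2
      _ < β := hαβ
      _ ≤ q := hqmem.2.1
  · ext z; simp only [mem_inter_iff, mem_Ioo, mem_empty_iff_false, iff_false, not_and]
    rintro ⟨hz1, hz2⟩ hzC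
    rcases le_or_gt z α with hzα | hzα
    · have : z ∈ C ∩ Icc a α := ⟨hzC, le_trans hpmem.2.1 hz1.le, hzα⟩
      exact absurd (le_csSup hPbdd this) (not_le.2 hz1)
    · rcases lt_or_ge z β with hzβ | hzβ
      · have : z ∈ Ioo α β ∩ C := ⟨⟨hzα, hzβ⟩, hzC⟩
        simp [hint] at this
      · have : z ∈ C ∩ Icc β b := ⟨hzC, hzβ, le_trans hz2.le hqmem.2.2⟩
        exact absurd (csInf_le hQbdd this) (not_le.2 hz2)
  · have := hpmem.2.2; have := hqmem.2.1; linarith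


/-- The set of gaps is countable. -/
lemma gapSet_countable (C : Set ℝ) : Set.Countable {pq : ℝ × ℝ | IsGap C pq.1 pq.2} := by
  rw [Set.countable_iff_exists_injective]
  have hch : ∀ pq : {pq : ℝ × ℝ // pq ∈ {pq : ℝ × ℝ | IsGap C pq.1 pq.2}},
      ∃ r : ℚ, (r : ℝ) ∈ Ioo pq.1.1 pq.1.2 := by
    rintro ⟨⟨p, q⟩, hpq⟩
    obtain ⟨r, hr1, hr2⟩ := exists_rat_btwn hpq.2.2.1
    exact ⟨r, hr1, hr2⟩
  choose F hF using hch
  have hFinj : Function.Injective F := by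
    rintro ⟨⟨p, q⟩, h1⟩ ⟨⟨p', q'⟩, h2⟩ hEq
    have h1' := hF ⟨⟨p, q⟩, h1⟩
    have h2' := hF ⟨⟨p', q'⟩, h2⟩
    rw [hEq] at h1'
    have := gap_overlap_eq h1 h2 h1' h2'
    simp only [Subtype.mk.injEq, Prod.mk.injEq]
    exact this
  obtain ⟨e⟩ : Nonempty (ℚ ↪ ℕ) := ⟨(Denumerable.eqv ℚ).toEmbedding⟩
  exact ⟨fun x => e (F x), fun a b hab => hFinj (e.injective hab)⟩

lemma gap_floor_lt {δ : ℝ} (hδ : 0 < δ) {p q p' q' : ℝ} (hg : IsGap C p q)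
    (hg' : IsGap C p' q') (hlen : δ ≤ q - p) (hlt : p < p') : ⌊p / δ⌋ < ⌊p' / δ⌋ := by
  have hqp' : q ≤ p' := by
    by_contra hc
    push_neg at hc
    set z := (p' + min q q') / 2 with hz
    have hz1 : p' < z := by
      simp only [hz]
      have : p' < min q q' := lt_min hc hg'.2.2.1
      linarith
    have hz2 : z < q := by
      have : min q q' ≤ q := min_le_left _ _
      have : p' < q := hc
      simp only [hz]; cases' le_or_gt q q' with h h
      · simp [min_eq_left h]; linarith
      · simp [min_eq_right h.le]; linarith
    have hz3 : z < q' := by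
      have : p' < q' := hg'.2.2.1
      simp only [hz]; cases' le_or_gt q q' with h h
      · simp [min_eq_left h]; linarith
      · simp [min_eq_right h.le]; linarith
    have := gap_overlap_eq hg hg' ⟨lt_trans hlt hz1, hz2⟩ ⟨hz1, hz3⟩
    exact absurd this.1 hlt.ne
  have h1 : p / δ + 1 ≤ p' / δ := by
    rw [div_add' _ _ _ hδ.ne']
    exact div_le_div_of_nonneg_right (by linarith) hδ.le
  calc ⌊p / δ⌋ < ⌊p / δ⌋ + 1 := lt_add_one _
    _ = ⌊p / δ + 1⌋ := (Int.floor_add_one _).symm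
    _ ≤ ⌊p' / δ⌋ := Int.floor_le_floor h1

/-- Gaps of length at least `δ` within a bounded region form a finite set. -/
lemma bigGaps_finite (C : Set ℝ) {δ : ℝ} (hδ : 0 < δ) :
    Set.Finite {pq : ℝ × ℝ | IsGap C pq.1 pq.2 ∧ δ ≤ pq.2 - pq.1 ∧ -1 ≤ pq.1 ∧ pq.2 ≤ 2} := by
  set S := {pq : ℝ × ℝ | IsGap C pq.1 pq.2 ∧ δ ≤ pq.2 - pq.1 ∧ -1 ≤ pq.1 ∧ pq.2 ≤ 2}
  have himg : (fun pq : ℝ × ℝ => ⌊pq.1 / δ⌋) '' S ⊆ Icc (⌊(-1 : ℝ)/δ⌋) (⌊(2:ℝ)/δ⌋) := by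
    rintro k ⟨⟨p, q⟩, hpq, rfl⟩
    refine ⟨Int.floor_le_floor (div_le_div_of_nonneg_right hpq.2.2.1 hδ.le), ?_⟩
    refine Int.floor_le_floor (div_le_div_of_nonneg_right ?_ hδ.le)
    have := hpq.1.2.2.1
    linarith [hpq.2.2.2]
  refine Set.Finite.of_finite_image (Set.Finite.subset (Set.finite_Icc _ _) himg) ?_
  rintro ⟨p, q⟩ h1 ⟨p', q'⟩ h2 hEq
  simp only at hEq
  rcases lt_trichotomy p p' with hlt | heq | hlt
  · exact absurd hEq (gap_floor_lt hδ h1.1 h2.1 h1.2.1 hlt).ne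
  · subst heq
    have hq : q = q' := by
      set z := (p + min q q') / 2 with hz
      have hz0 : p < min q q' := lt_min h1.1.2.2.1 h2.1.2.2.1
      have hz1 : p < z := by simp only [hz]; linarith
      have hz2 : z < q := by
        have : z < min q q' := by simp only [hz]; linarith
        exact lt_of_lt_of_le this (min_le_left _ _)
      have hz3 : z < q' := by
        have : z < min q q' := by simp only [hz]; linarith
        exact lt_of_lt_of_le this (min_le_right _ _)
      exact (gap_overlap_eq h1.1 h2.1 ⟨hz1, hz2⟩ ⟨hz1, hz3⟩).2
    simp [hq]
  · exact absurd hEq.symm (gap_floor_lt hδ h2.1 h1.1 h2.2.1 hlt).ne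


lemma sign1 (hcl : IsClosed C) {h : ℝ → ℝ} (hc : Continuous h) (hmono : StrictMono h)
    (himg : h '' C = C) {x y : ℝ} (hx : x ∈ C) (hy : y ∈ C) (hxy : x < y)
    (hnf : ∀ w ∈ C, x ≤ w → w ≤ y → h w ≠ w)
    (hdx : x < h x) (hdy : h y < y) : False := by
  have hAcl : IsClosed (C ∩ Icc x y ∩ {w | w ≤ h w}) :=
    ((hcl.inter isClosed_Icc).inter (isClosed_le continuous_id hc))
  have hAne : (C ∩ Icc x y ∩ {w | w ≤ h w}).Nonempty := ⟨x, ⟨hx, le_refl x, hxy.le⟩, hdx.le⟩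
  have hAbdd : BddAbove (C ∩ Icc x y ∩ {w | w ≤ h w}) := ⟨y, fun w hw => hw.1.2.2⟩
  obtain ⟨z, hzA, hzub⟩ : ∃ z, z ∈ C ∩ Icc x y ∩ {w | w ≤ h w} ∧
      ∀ w ∈ C ∩ Icc x y ∩ {w | w ≤ h w}, w ≤ z :=
    ⟨_, hAcl.csSup_mem hAne hAbdd, fun w hw => le_csSup hAbdd hw⟩
  have hzC : z ∈ C := hzA.1.1
  have hzlt : z < h z := lt_of_le_of_ne hzA.2 (fun e => hnf z hzC hzA.1.2.1 hzA.1.2.2 e.symm)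
  have hzy : z < y := lt_of_le_of_ne hzA.1.2.2 (by rintro rfl; exact absurd hzlt (not_lt.2 hdy.le))
  have hBcl : IsClosed (C ∩ Icc z y ∩ {w | h w ≤ w}) :=
    ((hcl.inter isClosed_Icc).inter (isClosed_le hc continuous_id))
  have hBne : (C ∩ Icc z y ∩ {w | h w ≤ w}).Nonempty := ⟨y, ⟨hy, hzy.le, le_refl y⟩, hdy.le⟩
  have hBbdd : BddBelow (C ∩ Icc z y ∩ {w | h w ≤ w}) := ⟨z, fun w hw => hw.1.2.1⟩
  obtain ⟨z', hz'B, hz'lb⟩ : ∃ z', z' ∈ C ∩ Icc z y ∩ {w | h w ≤ w} ∧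
      ∀ w ∈ C ∩ Icc z y ∩ {w | h w ≤ w}, z' ≤ w :=
    ⟨_, hBcl.csInf_mem hBne hBbdd, fun w hw => csInf_le hBbdd hw⟩
  have hz'C : z' ∈ C := hz'B.1.1
  have hxz : x ≤ z := hzA.1.2.1
  have hz'lt : h z' < z' :=
    lt_of_le_of_ne hz'B.2 (hnf z' hz'C (le_trans hxz hz'B.1.2.1) hz'B.1.2.2)
  have hzz' : z < z' := by
    rcases lt_or_eq_of_le hz'B.1.2.1 with hlt | heq
    · exact hlt
    · exact absurd (heq ▸ hz'lt) (not_lt.2 hzlt.le)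
  have hgap : Ioo z z' ∩ C = ∅ := by
    ext w; simp only [mem_inter_iff, mem_Ioo, mem_empty_iff_false, iff_false, not_and]
    rintro ⟨hw1, hw2⟩ hwC
    have hwy : w ≤ y := le_trans hw2.le hz'B.1.2.2
    have hwx : x ≤ w := le_trans hxz hw1.le
    rcases lt_or_ge w (h w) with hlt | hle
    · exact absurd (hzub w ⟨⟨hwC, hwx, hwy⟩, hlt.le⟩) (not_le.2 hw1)
    · exact absurd (hz'lb w ⟨⟨hwC, hw1.le, hwy⟩, hle⟩) (not_le.2 hw2)
  have hhzC : h z ∈ C := himg ▸ mem_image_of_mem h hzC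
  have hge : z' ≤ h z := by
    by_contra hc'
    push_neg at hc'
    have : h z ∈ Ioo z z' ∩ C := ⟨⟨hzlt, hc'⟩, hhzC⟩
    simp [hgap] at this
  have := hmono hzz'
  linarith

lemma sign2 (hcl : IsClosed C) {h : ℝ → ℝ} (hc : Continuous h) (hmono : StrictMono h)
    (himg : h '' C = C) {x y : ℝ} (hx : x ∈ C) (hy : y ∈ C) (hxy : x < y)
    (hnf : ∀ w ∈ C, x ≤ w → w ≤ y → h w ≠ w)
    (hdx : h x < x) (hdy : y < h y) : False := by
  have hAcl : IsClosed (C ∩ Icc x y ∩ {w | h w ≤ w}) :=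
    ((hcl.inter isClosed_Icc).inter (isClosed_le hc continuous_id))
  have hAne : (C ∩ Icc x y ∩ {w | h w ≤ w}).Nonempty := ⟨x, ⟨hx, le_refl x, hxy.le⟩, hdx.le⟩
  have hAbdd : BddAbove (C ∩ Icc x y ∩ {w | h w ≤ w}) := ⟨y, fun w hw => hw.1.2.2⟩
  obtain ⟨z, hzA, hzub⟩ : ∃ z, z ∈ C ∩ Icc x y ∩ {w | h w ≤ w} ∧
      ∀ w ∈ C ∩ Icc x y ∩ {w | h w ≤ w}, w ≤ z :=
    ⟨_, hAcl.csSup_mem hAne hAbdd, fun w hw => le_csSup hAbdd hw⟩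
  have hzC : z ∈ C := hzA.1.1
  have hzlt : h z < z := lt_of_le_of_ne hzA.2 (hnf z hzC hzA.1.2.1 hzA.1.2.2)
  have hzy : z < y := lt_of_le_of_ne hzA.1.2.2 (by rintro rfl; exact absurd hzlt (not_lt.2 hdy.le))
  have hBcl : IsClosed (C ∩ Icc z y ∩ {w | w ≤ h w}) :=
    ((hcl.inter isClosed_Icc).inter (isClosed_le continuous_id hc))
  have hBne : (C ∩ Icc z y ∩ {w | w ≤ h w}).Nonempty := ⟨y, ⟨hy, hzy.le, le_refl y⟩, hdy.le⟩
  have hBbdd : BddBelow (C ∩ Icc z y ∩ {w | w ≤ h w}) := ⟨z, fun w hw => hw.1.2.1⟩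
  obtain ⟨z'', hz''B, hz''lb⟩ : ∃ z'', z'' ∈ C ∩ Icc z y ∩ {w | w ≤ h w} ∧
      ∀ w ∈ C ∩ Icc z y ∩ {w | w ≤ h w}, z'' ≤ w :=
    ⟨_, hBcl.csInf_mem hBne hBbdd, fun w hw => csInf_le hBbdd hw⟩
  have hz''C : z'' ∈ C := hz''B.1.1
  have hxz : x ≤ z := hzA.1.2.1
  have hz''lt : z'' < h z'' :=
    lt_of_le_of_ne hz''B.2 (fun e => hnf z'' hz''C (le_trans hxz hz''B.1.2.1) hz''B.1.2.2 e.symm)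
  have hzz'' : z < z'' := by
    rcases lt_or_eq_of_le hz''B.1.2.1 with hlt | heq
    · exact hlt
    · exact absurd (heq ▸ hz''lt) (not_lt.2 hzlt.le)
  have hgap : Ioo z z'' ∩ C = ∅ := by
    ext w; simp only [mem_inter_iff, mem_Ioo, mem_empty_iff_false, iff_false, not_and]
    rintro ⟨hw1, hw2⟩ hwC
    have hwy : w ≤ y := le_trans hw2.le hz''B.1.2.2
    have hwx : x ≤ w := le_trans hxz hw1.le
    rcases lt_or_ge (h w) w with hlt | hle
    · exact absurd (hzub w ⟨⟨hwC, hwx, hwy⟩, hlt.le⟩) (not_le.2 hw1)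
    · exact absurd (hz''lb w ⟨⟨hwC, hw1.le, hwy⟩, hle⟩) (not_le.2 hw2)
  have hgap' : IsGap C (h z) (h z'') :=
    gap_image hmono himg ⟨hzC, hz''C, hzz'', hgap⟩
  have : z ∈ Ioo (h z) (h z'') ∩ C := ⟨⟨hzlt, lt_trans hzz'' hz''lt⟩, hzC⟩
  rw [hgap'.2.2.2] at this
  exact this

theorem core (hσ : 0 < σ) (hcl : IsClosed C) (hsp : CircleSparse σ C)
    {g : ℝ → ℝ} (hg : StrictMono g) (hgC : g '' C = C) (hgd : Differentiable ℝ g)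
    {u v b : ℝ} (huC : u ∈ C) (hbC : b ∈ C)
    (hgu : g u = u) (hub : u < b) (hbv : b < v) (hv1 : v < u + 1)
    (hmoves : ∀ x, x ∈ C → u < x → x < v → g x < x)
    (hder : ∀ x ∈ Icc u v, (1 + σ/2)⁻¹ ≤ deriv g x) : False := by
  obtain ⟨p, q, hgap, hup, hqb, hlen⟩ := gapBetween hσ hsp hcl huC hbC hub (by linarith)
  set t := b - u with ht
  have ht0 : 0 < t := by simp [ht]; linarith
  have hmemC : ∀ w, w ∈ C → g w ∈ C := fun w hw => hgC ▸ mem_image_of_mem g hw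
  rcases eq_or_lt_of_le hup with hpu | hpu
  · -- p = u : immediate contradiction
    have hq1 : q ∈ C := hgap.2.1
    have hq2 : u < q := hpu ▸ hgap.2.2.1
    have hq3 : q < v := lt_of_le_of_lt hqb hbv
    have h1 : g q < q := hmoves q hq1 hq2 hq3
    have h2 : u < g q := by have := hg hq2; rwa [hgu] at this
    have : g q ∈ Ioo p q ∩ C := ⟨⟨hpu ▸ h2, h1⟩, hmemC q hq1⟩
    rw [hgap.2.2.2] at this
    exact this
  set r : ℝ := (1 + σ/2)⁻¹ with hr
  have hr0 : 0 < r := by positivity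
  have hr1 : r < 1 := by
    rw [hr, inv_lt_one_iff₀]; right; linarith
  set P : ℕ → ℝ := fun j => g^[j] p with hP
  set Q : ℕ → ℝ := fun j => g^[j] q with hQ
  have hP0 : P 0 = p := rfl
  have hQ0 : Q 0 = q := rfl
  have hPs : ∀ j, P (j+1) = g (P j) := fun j => Function.iterate_succ_apply' g j p
  have hQs : ∀ j, Q (j+1) = g (Q j) := fun j => Function.iterate_succ_apply' g j q
  have Ind : ∀ j, P j ∈ C ∧ Q j ∈ C ∧ u < P j ∧ P j < Q j ∧ Q j ≤ b ∧
      Ioo (P j) (Q j) ∩ C = ∅ ∧ σ * t * r ^ j ≤ Q j - P j := by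
    intro j
    induction j with
    | zero =>
        refine ⟨hgap.1, hgap.2.1, hpu, hgap.2.2.1, hqb, hgap.2.2.2, ?_⟩
        simpa [hP0, hQ0] using hlen
    | succ j ih =>
        obtain ⟨hPC, hQC, huP, hPQ, hQb, hioo, hlow⟩ := ih
        have hQv : Q j < v := lt_of_le_of_lt hQb hbv
        have hPv : P j < v := lt_trans hPQ hQv
        have hgq : g (Q j) < Q j := hmoves _ hQC (lt_trans huP hPQ) hQv
        have hgp : g (P j) < P j := hmoves _ hPC huP hPv
        have huP' : u < g (P j) := by have := hg huP; rwa [hgu] at this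
        -- MVT for the length
        obtain ⟨ξ, hξ, hslope⟩ := exists_hasDerivAt_eq_slope g (deriv g) hPQ
          (hgd.continuous.continuousOn) (fun x _ => (hgd x).hasDerivAt)
        have hξuv : ξ ∈ Icc u v := ⟨le_trans huP.le hξ.1.le, le_trans hξ.2.le hQv.le⟩
        have hslope' : r ≤ (g (Q j) - g (P j)) / (Q j - P j) := hslope ▸ hder ξ hξuv
        have hlen' : r * (Q j - P j) ≤ g (Q j) - g (P j) :=
          (le_div_iff₀ (by linarith)).1 hslope'
        refine ⟨hPs j ▸ hmemC _ hPC, hQs j ▸ hmemC _ hQC, hPs j ▸ huP', ?_, ?_, ?_, ?_⟩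
        · rw [hPs j, hQs j]; exact hg hPQ
        · rw [hQs j]; linarith
        · rw [hPs j, hQs j]
          exact (gap_image hg hgC ⟨hPC, hQC, hPQ, hioo⟩).2.2.2
        · rw [hPs j, hQs j, pow_succ]
          calc σ * t * (r ^ j * r) = r * (σ * t * r ^ j) := by ring
            _ ≤ r * (Q j - P j) := by
                exact mul_le_mul_of_nonneg_left hlow hr0.le
            _ ≤ g (Q j) - g (P j) := hlen'
  have hQP : ∀ j, Q (j+1) ≤ P j := by
    intro j
    obtain ⟨hPC, hQC, huP, hPQ, hQb, hioo, _⟩ := Ind j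
    have hQv : Q j < v := lt_of_le_of_lt hQb hbv
    have hgq : g (Q j) < Q j := hmoves _ hQC (lt_trans huP hPQ) hQv
    have hgqC : g (Q j) ∈ C := hmemC _ hQC
    by_contra hc
    push_neg at hc
    have : g (Q j) ∈ Ioo (P j) (Q j) ∩ C := ⟨⟨hQs j ▸ hc, hgq⟩, hgqC⟩
    rw [hioo] at this
    exact this
  have Tel : ∀ J, ∑ j ∈ Finset.range (J+1), (Q j - P j) ≤ Q 0 - P J := by
    intro J
    induction J with
    | zero => simp
    | succ J ih =>
        rw [Finset.sum_range_succ]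
        have := hQP J
        linarith
  have hUB : ∀ J, σ * t * ∑ j ∈ Finset.range (J+1), r ^ j ≤ t := by
    intro J
    have h1 : ∑ j ∈ Finset.range (J+1), σ * t * r ^ j ≤ ∑ j ∈ Finset.range (J+1), (Q j - P j) :=
      Finset.sum_le_sum (fun j _ => (Ind j).2.2.2.2.2.2)
    have huPJ : u < P J := (Ind J).2.2.1
    have h2 : Q 0 - P J ≤ t := by
      simp only [hQ0, ht]
      linarith
    calc σ * t * ∑ j ∈ Finset.range (J+1), r ^ j
        = ∑ j ∈ Finset.range (J+1), σ * t * r ^ j := Finset.mul_sum _ _ _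
      _ ≤ ∑ j ∈ Finset.range (J+1), (Q j - P j) := h1
      _ ≤ Q 0 - P J := Tel J
      _ ≤ t := h2
  -- choose J with r^(J+1) < 1/2 and derive a contradiction
  obtain ⟨N, hN⟩ := exists_pow_lt_of_lt_one (by norm_num : (0:ℝ) < 1/2) hr1
  have hrS : ∑ j ∈ Finset.range (N+1), r ^ j = (1 - r^(N+1)) / (1 - r) := by
    rw [geom_sum_eq hr1.ne]
    rw [div_eq_div_iff (by linarith) (by linarith)]
    ring
  have hrN : r ^ (N+1) ≤ r ^ N := by
    rw [pow_succ]
    nlinarith [pow_pos hr0 N]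
  have hS2 : (1:ℝ)/2 ≤ (1 - r^(N+1)) := by linarith
  have h1r : 1 - r = (σ/2) / (1 + σ/2) := by
    rw [hr]; field_simp; ring
  have hSge : (1 + σ/2) / σ ≤ ∑ j ∈ Finset.range (N+1), r ^ j := by
    rw [hrS, h1r]
    rw [div_le_div_iff₀ (by positivity) (by positivity)]
    have key : (1 + σ/2) * (σ/2 / (1 + σ/2)) = σ/2 := by
      field_simp
    rw [key]
    nlinarith [hS2, hσ.le]
  have := hUB N
  have hcon : σ * t * ((1 + σ/2) / σ) ≤ t :=
    le_trans (mul_le_mul_of_nonneg_left hSge (by positivity)) this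
  have : σ * t * ((1 + σ/2) / σ) = t * (1 + σ/2) := by field_simp
  rw [this] at hcon
  nlinarith


theorem windowL (hσ : 0 < σ) (hσ1 : σ ≤ 1) (hcl : IsClosed C) (hper : CirclePeriodic C)
    (hsp : CircleSparse σ C) {h : ℝ → ℝ} {m : ℕ} (hm : 3 ≤ m)
    (hfix : ∀ p q, IsGap C p q → σ^2/(3*m) ≤ q - p → h p = p ∧ h q = q)
    {x₀ : ℝ} (hx₀ : x₀ ∈ C) (hmoved : h x₀ ≠ x₀) :
    ∃ w ∈ C, h w = w ∧ x₀ - 1/m ≤ w ∧ w < x₀ := by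
  have hm0 : (0:ℝ) < m := by positivity
  set r : ℝ := 1/m with hrdef
  have hr0 : 0 < r := by positivity
  have hr3 : r ≤ 1/3 := by
    rw [hrdef, div_le_div_iff₀ hm0 (by norm_num)]
    norm_num
    exact_mod_cast hm
  have hδ : σ^2/(3*m) = σ^2*r/3 := by rw [hrdef]; ring
  rcases eq_empty_or_nonempty (C ∩ Icc (x₀ - r) (x₀ - σ*r/3)) with hW | hW
  · -- big gap right next to x₀
    have hne1 : (C ∩ Iic (x₀ - r)).Nonempty := by
      refine ⟨x₀ + (-1 : ℤ), mem_tr hper _ hx₀, ?_⟩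
      simp only [mem_Iic]; push_cast; linarith
    have hbdd1 : BddAbove (C ∩ Iic (x₀ - r)) := ⟨x₀ - r, fun w hw => hw.2⟩
    have hcl1 : IsClosed (C ∩ Iic (x₀ - r)) := hcl.inter isClosed_Iic
    obtain ⟨p, hpmem, hpub⟩ : ∃ p, p ∈ C ∩ Iic (x₀ - r) ∧ ∀ w ∈ C ∩ Iic (x₀ - r), w ≤ p :=
      ⟨_, hcl1.csSup_mem hne1 hbdd1, fun w hw => le_csSup hbdd1 hw⟩
    have hne2 : (C ∩ Ici (x₀ - σ*r/3)).Nonempty := ⟨x₀, hx₀, by simp; positivity⟩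
    have hbdd2 : BddBelow (C ∩ Ici (x₀ - σ*r/3)) := ⟨x₀ - σ*r/3, fun w hw => hw.2⟩
    have hcl2 : IsClosed (C ∩ Ici (x₀ - σ*r/3)) := hcl.inter isClosed_Ici
    obtain ⟨q, hqmem, hqlb⟩ : ∃ q, q ∈ C ∩ Ici (x₀ - σ*r/3) ∧ ∀ w ∈ C ∩ Ici (x₀ - σ*r/3), q ≤ w :=
      ⟨_, hcl2.csInf_mem hne2 hbdd2, fun w hw => csInf_le hbdd2 hw⟩
    have hq1 : q ≤ x₀ := hqlb x₀ ⟨hx₀, by simp; positivity⟩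
    have hpq : p < q := by
      have h1 : p ≤ x₀ - r := hpmem.2
      have h2 : x₀ - σ*r/3 ≤ q := hqmem.2
      nlinarith
    have hgap : IsGap C p q := by
      refine ⟨hpmem.1, hqmem.1, hpq, ?_⟩
      ext z; simp only [mem_inter_iff, mem_Ioo, mem_empty_iff_false, iff_false, not_and]
      rintro ⟨hz1, hz2⟩ hzC
      rcases le_or_gt z (x₀ - r) with hz3 | hz3
      · exact absurd (hpub z ⟨hzC, hz3⟩) (not_le.2 hz1)
      · rcases lt_or_ge z (x₀ - σ*r/3) with hz4 | hz4
        · have : z ∈ C ∩ Icc (x₀ - r) (x₀ - σ*r/3) := ⟨hzC, hz3.le, hz4.le⟩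
          rw [hW] at this; exact this
        · exact absurd (hqlb z ⟨hzC, hz4⟩) (not_le.2 hz2)
    have hlen : σ^2/(3*m) ≤ q - p := by
      rw [hδ]
      have h1 : p ≤ x₀ - r := hpmem.2
      have h2 : x₀ - σ*r/3 ≤ q := hqmem.2
      nlinarith
    have hfx := (hfix p q hgap hlen).2
    refine ⟨q, hqmem.1, hfx, ?_, ?_⟩
    · have h2 : x₀ - σ*r/3 ≤ q := hqmem.2
      nlinarith
    · exact lt_of_le_of_ne hq1 (fun e => hmoved (e ▸ hfx))
  · -- sparse gap between sSup W and x₀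
    have hbdd : BddAbove (C ∩ Icc (x₀ - r) (x₀ - σ*r/3)) := ⟨x₀ - σ*r/3, fun w hw => hw.2.2⟩
    have hclW : IsClosed (C ∩ Icc (x₀ - r) (x₀ - σ*r/3)) := hcl.inter isClosed_Icc
    obtain ⟨c, hcmem⟩ : ∃ c, c ∈ C ∩ Icc (x₀ - r) (x₀ - σ*r/3) :=
      ⟨_, hclW.csSup_mem hW hbdd⟩
    have hc1 : c < x₀ := by
      have := hcmem.2.2; nlinarith
    have hc2 : x₀ < c + 1 := by
      have := hcmem.2.1; nlinarith [hr3]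
    obtain ⟨p, q, hgap, hcp, hqx, hlen⟩ := gapBetween hσ hsp hcl hcmem.1 hx₀ hc1 hc2
    have hlen' : σ^2/(3*m) ≤ q - p := by
      rw [hδ]
      have h2 : x₀ - c ≥ σ*r/3 := by have := hcmem.2.2; linarith
      nlinarith
    have hfx := (hfix p q hgap hlen').2
    refine ⟨q, hgap.2.1, hfx, ?_, ?_⟩
    · have : x₀ - r ≤ c := hcmem.2.1
      have : c ≤ p := hcp
      have : p < q := hgap.2.2.1
      linarith
    · exact lt_of_le_of_ne hqx (fun e => hmoved (e ▸ hfx))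

theorem windowR (hσ : 0 < σ) (hσ1 : σ ≤ 1) (hcl : IsClosed C) (hper : CirclePeriodic C)
    (hsp : CircleSparse σ C) {h : ℝ → ℝ} {m : ℕ} (hm : 3 ≤ m)
    (hfix : ∀ p q, IsGap C p q → σ^2/(3*m) ≤ q - p → h p = p ∧ h q = q)
    {x₀ : ℝ} (hx₀ : x₀ ∈ C) (hmoved : h x₀ ≠ x₀) :
    ∃ w ∈ C, h w = w ∧ x₀ < w ∧ w ≤ x₀ + 1/m := by
  have hm0 : (0:ℝ) < m := by positivity
  set r : ℝ := 1/m with hrdef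
  have hr0 : 0 < r := by positivity
  have hr3 : r ≤ 1/3 := by
    rw [hrdef, div_le_div_iff₀ hm0 (by norm_num)]
    norm_num
    exact_mod_cast hm
  have hδ : σ^2/(3*m) = σ^2*r/3 := by rw [hrdef]; ring
  rcases eq_empty_or_nonempty (C ∩ Icc (x₀ + σ*r/3) (x₀ + r)) with hW | hW
  · have hne1 : (C ∩ Ici (x₀ + r)).Nonempty := by
      refine ⟨x₀ + (1 : ℤ), mem_tr hper _ hx₀, ?_⟩
      simp only [mem_Ici]; push_cast; linarith
    have hbdd1 : BddBelow (C ∩ Ici (x₀ + r)) := ⟨x₀ + r, fun w hw => hw.2⟩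
    have hcl1 : IsClosed (C ∩ Ici (x₀ + r)) := hcl.inter isClosed_Ici
    obtain ⟨q, hqmem, hqlb⟩ : ∃ q, q ∈ C ∩ Ici (x₀ + r) ∧ ∀ w ∈ C ∩ Ici (x₀ + r), q ≤ w :=
      ⟨_, hcl1.csInf_mem hne1 hbdd1, fun w hw => csInf_le hbdd1 hw⟩
    have hne2 : (C ∩ Iic (x₀ + σ*r/3)).Nonempty := ⟨x₀, hx₀, by simp; positivity⟩
    have hbdd2 : BddAbove (C ∩ Iic (x₀ + σ*r/3)) := ⟨x₀ + σ*r/3, fun w hw => hw.2⟩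
    have hcl2 : IsClosed (C ∩ Iic (x₀ + σ*r/3)) := hcl.inter isClosed_Iic
    obtain ⟨p, hpmem, hpub⟩ : ∃ p, p ∈ C ∩ Iic (x₀ + σ*r/3) ∧ ∀ w ∈ C ∩ Iic (x₀ + σ*r/3), w ≤ p :=
      ⟨_, hcl2.csSup_mem hne2 hbdd2, fun w hw => le_csSup hbdd2 hw⟩
    have hp1 : x₀ ≤ p := hpub x₀ ⟨hx₀, by simp; positivity⟩
    have hpq : p < q := by
      have h1 : p ≤ x₀ + σ*r/3 := hpmem.2
      have h2 : x₀ + r ≤ q := hqmem.2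
      nlinarith
    have hgap : IsGap C p q := by
      refine ⟨hpmem.1, hqmem.1, hpq, ?_⟩
      ext z; simp only [mem_inter_iff, mem_Ioo, mem_empty_iff_false, iff_false, not_and]
      rintro ⟨hz1, hz2⟩ hzC
      rcases le_or_gt z (x₀ + σ*r/3) with hz3 | hz3
      · exact absurd (hpub z ⟨hzC, hz3⟩) (not_le.2 hz1)
      · rcases lt_or_ge z (x₀ + r) with hz4 | hz4
        · have : z ∈ C ∩ Icc (x₀ + σ*r/3) (x₀ + r) := ⟨hzC, hz3.le, hz4.le⟩
          rw [hW] at this; exact this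
        · exact absurd (hqlb z ⟨hzC, hz4⟩) (not_le.2 hz2)
    have hlen : σ^2/(3*m) ≤ q - p := by
      rw [hδ]
      have h1 : p ≤ x₀ + σ*r/3 := hpmem.2
      have h2 : x₀ + r ≤ q := hqmem.2
      nlinarith
    have hfx := (hfix p q hgap hlen).1
    refine ⟨p, hpmem.1, hfx, ?_, ?_⟩
    · exact lt_of_le_of_ne hp1 (fun e => hmoved (e ▸ hfx))
    · have h2 : p ≤ x₀ + σ*r/3 := hpmem.2
      nlinarith
  · have hbdd : BddBelow (C ∩ Icc (x₀ + σ*r/3) (x₀ + r)) := ⟨x₀ + σ*r/3, fun w hw => hw.2.1⟩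
    have hclW : IsClosed (C ∩ Icc (x₀ + σ*r/3) (x₀ + r)) := hcl.inter isClosed_Icc
    obtain ⟨c, hcmem⟩ : ∃ c, c ∈ C ∩ Icc (x₀ + σ*r/3) (x₀ + r) :=
      ⟨_, hclW.csInf_mem hW hbdd⟩
    have hc1 : x₀ < c := by
      have := hcmem.2.1; nlinarith
    have hc2 : c < x₀ + 1 := by
      have := hcmem.2.2; nlinarith [hr3]
    obtain ⟨p, q, hgap, hxp, hqc, hlen⟩ := gapBetween hσ hsp hcl hx₀ hcmem.1 hc1 hc2
    have hlen' : σ^2/(3*m) ≤ q - p := by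
      rw [hδ]
      have h2 : c - x₀ ≥ σ*r/3 := by have := hcmem.2.1; linarith
      nlinarith
    have hfx := (hfix p q hgap hlen').1
    refine ⟨p, hgap.1, hfx, ?_, ?_⟩
    · exact lt_of_le_of_ne hxp (fun e => hmoved (e ▸ hfx))
    · have : c ≤ x₀ + r := hcmem.2.2
      have : q ≤ c := hqc
      have : p < q := hgap.2.2.1
      linarith

theorem rigidity (hσ : 0 < σ) (hσ1 : σ ≤ 1)
    (hcl : IsClosed C) (hper : CirclePeriodic C) (hsp : CircleSparse σ C)
    {h h₂ : ℝ → ℝ} (hmono : StrictMono h)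
    (hli : Function.LeftInverse h₂ h) (hri : Function.RightInverse h₂ h)
    (hdh : Differentiable ℝ h) (hdh₂ : Differentiable ℝ h₂)
    (himg : h '' C = C) {m : ℕ} (hm : 3 ≤ m)
    (hosc : ∀ x y : ℝ, |x - y| ≤ 2/m → |deriv h x - deriv h y| ≤ σ/8)
    (hoscI : ∀ x y : ℝ, |x - y| ≤ 2/m → |deriv h₂ x - deriv h₂ y| ≤ σ/8)
    (hfix : ∀ p q, IsGap C p q → σ^2/(3*m) ≤ q - p → h p = p ∧ h q = q) :
    ∀ x ∈ C, h x = x := by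
  by_contra hcon
  push_neg at hcon
  obtain ⟨x₀, hx₀C, hmoved⟩ := hcon
  have hm0 : (0:ℝ) < m := by positivity
  obtain ⟨w1, hw1C, hw1fix, hw1l, hw1r⟩ := windowL hσ hσ1 hcl hper hsp hm hfix hx₀C hmoved
  obtain ⟨w2, hw2C, hw2fix, hw2l, hw2r⟩ := windowR hσ hσ1 hcl hper hsp hm hfix hx₀C hmoved
  have hhc : Continuous h := hdh.continuous
  have hFcl : IsClosed (C ∩ {x | h x = x}) :=
    hcl.inter (isClosed_eq hhc continuous_id)
  -- u
  have hAne : (C ∩ {x | h x = x} ∩ Icc w1 x₀).Nonempty := ⟨w1, ⟨hw1C, hw1fix⟩, le_refl _, hw1r.le⟩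
  have hAbdd : BddAbove (C ∩ {x | h x = x} ∩ Icc w1 x₀) := ⟨x₀, fun w hw => hw.2.2⟩
  obtain ⟨u, huA, huub⟩ : ∃ u, u ∈ C ∩ {x | h x = x} ∩ Icc w1 x₀ ∧
      ∀ w ∈ C ∩ {x | h x = x} ∩ Icc w1 x₀, w ≤ u :=
    ⟨_, (hFcl.inter isClosed_Icc).csSup_mem hAne hAbdd, fun w hw => le_csSup hAbdd hw⟩
  have huC : u ∈ C := huA.1.1
  have hufix : h u = u := huA.1.2
  have hux : u < x₀ := lt_of_le_of_ne huA.2.2 (fun e => hmoved (e ▸ hufix))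
  -- v
  have hBne : (C ∩ {x | h x = x} ∩ Icc x₀ w2).Nonempty := ⟨w2, ⟨hw2C, hw2fix⟩, hw2l.le, le_refl _⟩
  have hBbdd : BddBelow (C ∩ {x | h x = x} ∩ Icc x₀ w2) := ⟨x₀, fun w hw => hw.2.1⟩
  obtain ⟨v, hvB, hvlb⟩ : ∃ v, v ∈ C ∩ {x | h x = x} ∩ Icc x₀ w2 ∧
      ∀ w ∈ C ∩ {x | h x = x} ∩ Icc x₀ w2, v ≤ w :=
    ⟨_, (hFcl.inter isClosed_Icc).csInf_mem hBne hBbdd, fun w hw => csInf_le hBbdd hw⟩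
  have hvC : v ∈ C := hvB.1.1
  have hvfix : h v = v := hvB.1.2
  have hxv : x₀ < v := lt_of_le_of_ne hvB.2.1 (fun e => hmoved ((e.symm ▸ hvfix : h x₀ = x₀)))
  have huv : u < v := lt_trans hux hxv
  have hvu2 : v - u ≤ 2/m := by
    have h1 : x₀ - 1/m ≤ w1 := hw1l
    have h2 : w1 ≤ u := huA.2.1
    have h3 : v ≤ w2 := hvB.2.2
    have h4 : w2 ≤ x₀ + 1/m := hw2r
    have : (2:ℝ)/m = 1/m + 1/m := by ring
    linarith
  have hv1 : v < u + 1 := by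
    have : (2:ℝ)/m ≤ 2/3 := by
      rw [div_le_div_iff₀ hm0 (by norm_num)]
      have : (3:ℝ) ≤ m := by exact_mod_cast hm
      linarith
    linarith
  have hnofix : ∀ z ∈ C, u < z → z < v → h z ≠ z := by
    intro z hzC hz1 hz2 hzfix
    rcases le_or_gt z x₀ with hz3 | hz3
    · have : z ≤ u := huub z ⟨⟨hzC, hzfix⟩, le_trans huA.2.1 hz1.le, hz3⟩
      linarith
    · have : v ≤ z := hvlb z ⟨⟨hzC, hzfix⟩, hz3.le, le_trans hz2.le hvB.2.2⟩
      linarith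
  -- the derivative of h and h₂ is within σ/8 of 1 on [u,v]
  have habs : ∀ x ∈ Icc u v, ∀ ξ ∈ Ioo u v, |x - ξ| ≤ 2/m := by
    intro x hx ξ hξ
    rw [abs_le]
    constructor <;> [linarith [hx.1, hξ.2, hvu2]; linarith [hx.2, hξ.1, hvu2]]
  have hDh : ∀ x ∈ Icc u v, |deriv h x - 1| ≤ σ/8 := by
    obtain ⟨ξ, hξ, hslope⟩ := exists_hasDerivAt_eq_slope h (deriv h) huv
      (hhc.continuousOn) (fun x _ => (hdh x).hasDerivAt)
    have : deriv h ξ = 1 := by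
      rw [hslope, hufix, hvfix, div_self (by linarith : v - u ≠ 0)]
    intro x hx
    calc |deriv h x - 1| = |deriv h x - deriv h ξ| := by rw [this]
      _ ≤ σ/8 := hosc x ξ (habs x hx ξ hξ)
  have hh₂u : h₂ u = u := by conv_lhs => rw [← hufix]; rw [hli u]
  have hh₂v : h₂ v = v := by conv_lhs => rw [← hvfix]; rw [hli v]
  have hDh₂ : ∀ x ∈ Icc u v, |deriv h₂ x - 1| ≤ σ/8 := by
    obtain ⟨ξ, hξ, hslope⟩ := exists_hasDerivAt_eq_slope h₂ (deriv h₂) huv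
      (hdh₂.continuous.continuousOn) (fun x _ => (hdh₂ x).hasDerivAt)
    have : deriv h₂ ξ = 1 := by
      rw [hslope, hh₂u, hh₂v, div_self (by linarith : v - u ≠ 0)]
    intro x hx
    calc |deriv h₂ x - 1| = |deriv h₂ x - deriv h₂ ξ| := by rw [this]
      _ ≤ σ/8 := hoscI x ξ (habs x hx ξ hξ)
  have hlow : ∀ g : ℝ → ℝ, (∀ x ∈ Icc u v, |deriv g x - 1| ≤ σ/8) →
      ∀ x ∈ Icc u v, (1 + σ/2)⁻¹ ≤ deriv g x := by
    intro g hg x hx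
    have h1 := (abs_le.1 (hg x hx)).1
    have h2 : (1 + σ/2)⁻¹ ≤ 1 - σ/8 := by
      rw [inv_le_iff_one_le_mul₀ (by linarith)]
      nlinarith
    linarith
  have hh₂mono : StrictMono h₂ := by
    intro a b hab
    have := hri a ▸ hri b ▸ hab
    rw [← hmono.lt_iff_lt]
    rw [hri a, hri b]
    exact hab
  have hh₂img : h₂ '' C = C := by
    have h1 : h₂ '' (h '' C) = C := by
      rw [← Set.image_comp]
      have : h₂ ∘ h = id := funext hli
      rw [this, Set.image_id]
    calc h₂ '' C = h₂ '' (h '' C) := by rw [himg]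
      _ = C := h1
  rcases lt_or_gt_of_ne hmoved with hdir | hdir
  · -- h x₀ < x₀ : h moves everything in C ∩ (u,v) left
    have hmoves : ∀ z ∈ C, u < z → z < v → h z < z := by
      intro z hzC hz1 hz2
      rcases lt_trichotomy (h z) z with hc | hc | hc
      · exact hc
      · exact absurd hc (hnofix z hzC hz1 hz2)
      · exfalso
        rcases lt_trichotomy z x₀ with hzx | hzx | hzx
        · exact sign1 hcl hhc hmono himg hzC hx₀C hzx
            (fun w hwC hw1 hw2 => hnofix w hwC (lt_of_lt_of_le hz1 hw1) (lt_of_le_of_lt hw2 hxv))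
            hc hdir
        · subst hzx; exact absurd hc (not_lt.2 hdir.le)
        · exact sign2 hcl hhc hmono himg hx₀C hzC hzx
            (fun w hwC hw1 hw2 => hnofix w hwC (lt_of_lt_of_le hux hw1) (lt_of_le_of_lt hw2 hz2))
            hdir hc
    exact core hσ hcl hsp hmono himg hdh huC hx₀C hufix hux hxv hv1 hmoves
      (hlow h hDh)
  · -- h x₀ > x₀ : h₂ moves everything in C ∩ (u,v) left
    have hmovesh : ∀ z ∈ C, u < z → z < v → z < h z := by
      intro z hzC hz1 hz2
      rcases lt_trichotomy (h z) z with hc | hc | hc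
      · exfalso
        rcases lt_trichotomy z x₀ with hzx | hzx | hzx
        · exact sign2 hcl hhc hmono himg hzC hx₀C hzx
            (fun w hwC hw1 hw2 => hnofix w hwC (lt_of_lt_of_le hz1 hw1) (lt_of_le_of_lt hw2 hxv))
            hc hdir
        · subst hzx; exact absurd hc (not_lt.2 hdir.le)
        · exact sign1 hcl hhc hmono himg hx₀C hzC hzx
            (fun w hwC hw1 hw2 => hnofix w hwC (lt_of_lt_of_le hux hw1) (lt_of_le_of_lt hw2 hz2))
            hdir hc
      · exact absurd hc (hnofix z hzC hz1 hz2)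
      · exact hc
    have hmoves : ∀ z ∈ C, u < z → z < v → h₂ z < z := by
      intro z hzC hz1 hz2
      by_contra hc
      push_neg at hc
      have h1 : h z ≤ h (h₂ z) := hmono.monotone hc
      rw [hri z] at h1
      exact absurd (hmovesh z hzC hz1 hz2) (not_lt.2 h1)
    exact core hσ hcl hsp hh₂mono hh₂img hdh₂ huC hx₀C hh₂u hux hxv hv1 hmoves
      (hlow h₂ hDh₂)


section Diffeo

variable {φ ψ : ℝ → ℝ}

lemma chain_one (hφ : ContDiff ℝ 1 φ) (hψ : ContDiff ℝ 1 ψ)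
    (hli : Function.LeftInverse ψ φ) (x : ℝ) : deriv ψ (φ x) * deriv φ x = 1 := by
  have hdφ : Differentiable ℝ φ := hφ.differentiable one_ne_zero
  have hdψ : Differentiable ℝ ψ := hψ.differentiable one_ne_zero
  have h1 : HasDerivAt (ψ ∘ φ) (deriv ψ (φ x) * deriv φ x) x :=
    ((hdψ (φ x)).hasDerivAt).comp x ((hdφ x).hasDerivAt)
  have h2 : (ψ ∘ φ) = id := funext hli
  rw [h2] at h1
  exact h1.unique (hasDerivAt_id x)

lemma deriv_ne_zero (hφ : ContDiff ℝ 1 φ) (hψ : ContDiff ℝ 1 ψ)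
    (hli : Function.LeftInverse ψ φ) (x : ℝ) : deriv φ x ≠ 0 := by
  intro h
  have := chain_one hφ hψ hli x
  rw [h, mul_zero] at this
  norm_num at this

lemma mono_or_anti (hφ : ContDiff ℝ 1 φ) (hψ : ContDiff ℝ 1 ψ)
    (hli : Function.LeftInverse ψ φ) : StrictMono φ ∨ StrictAnti φ := by
  have hcd : Continuous (deriv φ) := hφ.continuous_deriv le_rfl
  have hne : ∀ x, deriv φ x ≠ 0 := deriv_ne_zero hφ hψ hli
  rcases lt_or_gt_of_ne (hne 0) with hneg | hpos
  · right
    apply strictAnti_of_deriv_neg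
    intro x
    rcases lt_or_gt_of_ne (hne x) with h | h
    · exact h
    · exfalso
      have h0 : (0:ℝ) ∈ uIcc (deriv φ 0) (deriv φ x) := by
        rw [mem_uIcc]; left; exact ⟨hneg.le, h.le⟩
      obtain ⟨c, _, hc⟩ := intermediate_value_uIcc (hcd.continuousOn (s := uIcc 0 x)) h0
      exact hne c hc
  · left
    apply strictMono_of_deriv_pos
    intro x
    rcases lt_or_gt_of_ne (hne x) with h | h
    · exfalso
      have h0 : (0:ℝ) ∈ uIcc (deriv φ 0) (deriv φ x) := by
        rw [mem_uIcc]; right; exact ⟨h.le, hpos.le⟩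
      obtain ⟨c, _, hc⟩ := intermediate_value_uIcc (hcd.continuousOn (s := uIcc 0 x)) h0
      exact hne c hc
    · exact h

lemma deg_plus_of_mono (hmono : StrictMono φ)
    (hdeg : (∀ x, φ (x + 1) = φ x + 1) ∨ (∀ x, φ (x + 1) = φ x - 1)) :
    ∀ x, φ (x + 1) = φ x + 1 := by
  rcases hdeg with h | h
  · exact h
  · exfalso
    have h1 : φ 0 < φ 1 := hmono (by norm_num)
    have := h 0
    norm_num at this
    linarith

lemma deg_minus_of_anti (hanti : StrictAnti φ)
    (hdeg : (∀ x, φ (x + 1) = φ x + 1) ∨ (∀ x, φ (x + 1) = φ x - 1)) :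
    ∀ x, φ (x + 1) = φ x - 1 := by
  rcases hdeg with h | h
  · exfalso
    have h1 : φ 1 < φ 0 := hanti (by norm_num)
    have := h 0
    norm_num at this
    linarith
  · exact h

lemma psi_plus (hli : Function.LeftInverse ψ φ) (hri : Function.RightInverse ψ φ)
    (hdeg : ∀ x, φ (x + 1) = φ x + 1) : ∀ y, ψ (y + 1) = ψ y + 1 := by
  intro y
  have h1 : φ (ψ y + 1) = y + 1 := by rw [hdeg, hri y]
  calc ψ (y + 1) = ψ (φ (ψ y + 1)) := by rw [h1]
    _ = ψ y + 1 := hli _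

lemma psi_minus (hli : Function.LeftInverse ψ φ) (hri : Function.RightInverse ψ φ)
    (hdeg : ∀ x, φ (x + 1) = φ x - 1) : ∀ y, ψ (y + 1) = ψ y - 1 := by
  intro y
  have h1 : φ (ψ (y+1) + 1) = y := by rw [hdeg, hri (y+1)]; ring
  have := hli (ψ (y+1) + 1)
  rw [h1] at this
  linarith

lemma deriv_per (hdeg : (∀ x, φ (x + 1) = φ x + 1) ∨ (∀ x, φ (x + 1) = φ x - 1)) :
    ∀ x, deriv φ (x + 1) = deriv φ x := by
  intro x
  have h1 : deriv (fun y => φ (y + 1)) x = deriv φ (x + 1) := by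
    rw [deriv_comp_add_const]
  rcases hdeg with h | h
  · have h2 : (fun y => φ (y + 1)) = fun y => φ y + 1 := funext h
    rw [h2] at h1
    rw [← h1, deriv_add_const]
  · have h2 : (fun y => φ (y + 1)) = fun y => φ y - 1 := funext h
    rw [h2] at h1
    rw [← h1, deriv_sub_const]

lemma per_int {F : ℝ → ℝ} (hp : ∀ x, F (x + 1) = F x) : ∀ (k : ℤ) (x : ℝ), F (x + k) = F x := by
  intro k
  induction k using Int.induction_on with
  | zero => simp
  | succ n ih =>
      intro x
      have e : x + (((n:ℤ) + 1 : ℤ) : ℝ) = (x + (n:ℤ)) + 1 := by push_cast; ring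
      rw [e, hp]
      exact ih x
  | pred n ih =>
      intro x
      have e : x + ((-(n:ℤ) - 1 : ℤ) : ℝ) + 1 = x + ((-(n:ℤ) : ℤ) : ℝ) := by push_cast; ring
      calc F (x + ((-(n:ℤ) - 1 : ℤ) : ℝ)) = F (x + ((-(n:ℤ) - 1 : ℤ) : ℝ) + 1) := (hp _).symm
        _ = F (x + ((-(n:ℤ) : ℤ) : ℝ)) := by rw [e]
        _ = F x := ih x

lemma lip_of_bound {f : ℝ → ℝ} (hd : Differentiable ℝ f) {K : ℝ}
    (hb : ∀ x, |deriv f x| ≤ K) : ∀ x y, |f x - f y| ≤ K * |x - y| := by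
  have main : ∀ x y, x < y → |f y - f x| ≤ K * (y - x) := by
    intro x y hxy
    obtain ⟨c, _, hc⟩ := exists_hasDerivAt_eq_slope f (deriv f) hxy
      (hd.continuous.continuousOn) (fun z _ => (hd z).hasDerivAt)
    have hne : y - x ≠ 0 := by intro e; rw [sub_eq_zero] at e; exact absurd e.symm hxy.ne
    have h1 : f y - f x = deriv f c * (y - x) := by
      rw [hc]
      field_simp
    rw [h1, abs_mul, abs_of_pos (by linarith : (0:ℝ) < y - x)]
    exact mul_le_mul_of_nonneg_right (hb c) (by linarith)
  intro x y
  rcases lt_trichotomy x y with h | h | h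
  · have h2 := main x y h
    rw [abs_sub_comm x y, abs_of_pos (by linarith : (0:ℝ) < y - x)]
    rwa [abs_sub_comm]
  · subst h; norm_num
  · have h2 := main y x h
    rw [abs_of_pos (by linarith : (0:ℝ) < x - y)]
    exact h2

lemma uc_per {F : ℝ → ℝ} (hc : Continuous F) (hp : ∀ x, F (x + 1) = F x) {ε : ℝ} (hε : 0 < ε) :
    ∃ δ : ℝ, 0 < δ ∧ ∀ x y : ℝ, |x - y| ≤ δ → |F x - F y| ≤ ε := by
  have huc := (isCompact_Icc (a := (-1:ℝ)) (b := 2)).uniformContinuousOn_of_continuous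
    (hc.continuousOn)
  rw [Metric.uniformContinuousOn_iff] at huc
  obtain ⟨δ, hδ0, hδ⟩ := huc ε hε
  refine ⟨min (δ/2) (1/2), by positivity, ?_⟩
  intro x y hxy
  have hδ2 : |x - y| ≤ δ/2 := le_trans hxy (min_le_left _ _)
  have h12 : |x - y| ≤ 1/2 := le_trans hxy (min_le_right _ _)
  set k : ℤ := ⌊x⌋ with hk
  have hx1 : x - k ∈ Icc (-1:ℝ) 2 := by
    constructor
    · have h1 := Int.floor_le x
      simp only [hk]; linarith
    · have := Int.lt_floor_add_one x
      simp only [hk]; linarith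
  have hy1 : y - k ∈ Icc (-1:ℝ) 2 := by
    rw [abs_le] at h12
    constructor
    · have := Int.floor_le x
      simp only [hk]; linarith [h12.2]
    · have := Int.lt_floor_add_one x
      simp only [hk]; linarith [h12.1]
  have hFx : F (x - k) = F x := by
    have := per_int hp (-k) x
    simpa [sub_eq_add_neg] using this
  have hFy : F (y - k) = F y := by
    have := per_int hp (-k) y
    simpa [sub_eq_add_neg] using this
  have hdist : dist (x - k) (y - k) < δ := by
    rw [Real.dist_eq]
    have : x - k - (y - k) = x - y := by ring
    rw [this]
    linarith [hδ2]
  have := hδ (x - k) hx1 (y - k) hy1 hdist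
  rw [Real.dist_eq, hFx, hFy] at this
  exact this.le

/-- Regularity class of a circle diffeomorphism. -/
def NiceClass (σ : ℝ) (n m : ℕ) (φ ψ : ℝ → ℝ) : Prop :=
  1 ≤ n ∧ 3 ≤ m ∧ (∀ x : ℝ, |deriv φ x| ≤ n ∧ |deriv ψ x| ≤ n) ∧
  (∀ x y : ℝ, |x - y| ≤ 2*n/m → |deriv φ x - deriv φ y| ≤ σ/(16*n) ∧
    |deriv ψ x - deriv ψ y| ≤ σ/(16*n))

lemma exists_class {σ : ℝ} (hσ : 0 < σ) (hd : IsCircleDiffeoLift φ ψ) :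
    ∃ n m : ℕ, NiceClass σ n m φ ψ := by
  obtain ⟨⟨hφ, hψ, hli, hri⟩, hdeg⟩ := hd
  have hψdeg : (∀ x, ψ (x + 1) = ψ x + 1) ∨ (∀ x, ψ (x + 1) = ψ x - 1) := by
    rcases hdeg with h | h
    · exact Or.inl (psi_plus hli hri h)
    · exact Or.inr (psi_minus hli hri h)
  have hpφ : ∀ x, deriv φ (x + 1) = deriv φ x := deriv_per hdeg
  have hpψ : ∀ x, deriv ψ (x + 1) = deriv ψ x := deriv_per hψdeg
  have hcφ : Continuous (deriv φ) := hφ.continuous_deriv le_rfl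
  have hcψ : Continuous (deriv ψ) := hψ.continuous_deriv le_rfl
  -- global bound via compactness and periodicity
  have hbd : ∀ (F : ℝ → ℝ), Continuous F → (∀ x, F (x + 1) = F x) → ∃ K : ℝ, ∀ x, |F x| ≤ K := by
    intro F hc hp
    obtain ⟨K, hK⟩ := (isCompact_Icc (a := (-1:ℝ)) (b := 2)).exists_bound_of_continuousOn
      hc.continuousOn
    refine ⟨K, fun x => ?_⟩
    have hx1 : x - (⌊x⌋:ℝ) ∈ Icc (-1:ℝ) 2 := by
      constructor
      · have := Int.floor_le x; linarith
      · have := Int.lt_floor_add_one x; linarith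
    have hFx : F (x - (⌊x⌋:ℝ)) = F x := by
      have := per_int hp (-⌊x⌋) x
      simpa [sub_eq_add_neg] using this
    have := hK _ hx1
    rwa [Real.norm_eq_abs, hFx] at this
  obtain ⟨K₁, hK₁⟩ := hbd (deriv φ) hcφ hpφ
  obtain ⟨K₂, hK₂⟩ := hbd (deriv ψ) hcψ hpψ
  set n : ℕ := max 1 ⌈max K₁ K₂⌉₊ with hn
  have hn1 : 1 ≤ n := le_max_left _ _
  have hnn : (1:ℝ) ≤ n := by exact_mod_cast hn1
  have hbφ : ∀ x, |deriv φ x| ≤ n := by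
    intro x
    calc |deriv φ x| ≤ K₁ := hK₁ x
      _ ≤ max K₁ K₂ := le_max_left _ _
      _ ≤ (⌈max K₁ K₂⌉₊ : ℝ) := Nat.le_ceil _
      _ ≤ n := by exact_mod_cast Nat.cast_le.2 (le_max_right 1 _)
  have hbψ : ∀ x, |deriv ψ x| ≤ n := by
    intro x
    calc |deriv ψ x| ≤ K₂ := hK₂ x
      _ ≤ max K₁ K₂ := le_max_right _ _
      _ ≤ (⌈max K₁ K₂⌉₊ : ℝ) := Nat.le_ceil _
      _ ≤ n := by exact_mod_cast Nat.cast_le.2 (le_max_right 1 _)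
  have hε : (0:ℝ) < σ/(16*n) := by positivity
  obtain ⟨δ₁, hδ₁0, hδ₁⟩ := uc_per hcφ hpφ hε
  obtain ⟨δ₂, hδ₂0, hδ₂⟩ := uc_per hcψ hpψ hε
  set δ : ℝ := min δ₁ δ₂ with hδdef
  have hδ0 : 0 < δ := lt_min hδ₁0 hδ₂0
  set m : ℕ := max 3 ⌈2*n/δ⌉₊ with hm
  have hm3 : 3 ≤ m := le_max_left _ _
  have hm0 : (0:ℝ) < m := by
    have : (3:ℕ) ≤ m := hm3
    have : (3:ℝ) ≤ m := by exact_mod_cast this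
    linarith
  have hscale : 2*(n:ℝ)/m ≤ δ := by
    have h1 : 2*(n:ℝ)/δ ≤ ⌈2*n/δ⌉₊ := Nat.le_ceil _
    have h2 : (⌈2*(n:ℝ)/δ⌉₊ : ℝ) ≤ m := by
      have : ⌈2*(n:ℝ)/δ⌉₊ ≤ m := le_max_right 3 _
      exact_mod_cast this
    rw [div_le_iff₀ hm0]
    rw [div_le_iff₀ hδ0] at h1
    calc 2*(n:ℝ) ≤ (⌈2*n/δ⌉₊ : ℝ) * δ := h1
      _ ≤ m * δ := mul_le_mul_of_nonneg_right (le_trans h2 (le_refl _)) hδ0.le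
      _ = δ * m := by ring
  refine ⟨n, m, hn1, hm3, fun x => ⟨hbφ x, hbψ x⟩, fun x y hxy => ?_⟩
  have h1 : |x - y| ≤ δ := le_trans hxy hscale
  exact ⟨hδ₁ x y (le_trans h1 (min_le_left _ _)), hδ₂ x y (le_trans h1 (min_le_right _ _))⟩

end Diffeo


lemma tr_int {h : ℝ → ℝ} (hZ : ∀ x, h (x + 1) = h x + 1) :
    ∀ (k : ℤ) (x : ℝ), h (x + k) = h x + k := by
  intro k
  induction k using Int.induction_on with
  | zero => simp
  | succ n ih =>
      intro x
      have e : x + (((n:ℤ) + 1 : ℤ) : ℝ) = (x + (n:ℤ)) + 1 := by push_cast; ring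
      rw [e, hZ, ih]
      push_cast; ring
  | pred n ih =>
      intro x
      have e : x + ((-(n:ℤ) - 1 : ℤ) : ℝ) + 1 = x + ((-(n:ℤ) : ℤ) : ℝ) := by push_cast; ring
      have h2 : h (x + ((-(n:ℤ) - 1 : ℤ) : ℝ)) + 1 = h (x + ((-(n:ℤ) : ℤ) : ℝ)) := by
        rw [← hZ, e]
      have h3 := ih x
      rw [← h2] at h3
      push_cast at h3 ⊢
      linarith

lemma comp_osc {σ : ℝ} (hσ : 0 < σ) {n m : ℕ} (hn1 : 1 ≤ n) {φ ψ' : ℝ → ℝ}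
    (hdφ : Differentiable ℝ φ) (hdψ : Differentiable ℝ ψ')
    (hbφ : ∀ x, |deriv φ x| ≤ n) (hbψ : ∀ x, |deriv ψ' x| ≤ n)
    (hmφ : ∀ x y : ℝ, |x - y| ≤ 2*n/m → |deriv φ x - deriv φ y| ≤ σ/(16*n))
    (hmψ : ∀ x y : ℝ, |x - y| ≤ 2*n/m → |deriv ψ' x - deriv ψ' y| ≤ σ/(16*n)) :
    ∀ x y : ℝ, |x - y| ≤ 2/m → |deriv (ψ' ∘ φ) x - deriv (ψ' ∘ φ) y| ≤ σ/8 := by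
  intro x y hxy
  have hnR : (1:ℝ) ≤ n := by exact_mod_cast hn1
  have hm0 : (0:ℝ) ≤ m := Nat.cast_nonneg m
  have hsc : (2:ℝ)/m ≤ 2*n/m := by
    rcases eq_or_lt_of_le hm0 with h0 | h0
    · rw [← h0]; simp
    · rw [div_le_div_iff₀ h0 h0]
      nlinarith
  have hxy' : |x - y| ≤ 2*n/m := le_trans hxy hsc
  have hlip : |φ x - φ y| ≤ 2*n/m := by
    have := lip_of_bound hdφ hbφ x y
    calc |φ x - φ y| ≤ n * |x - y| := this
      _ ≤ n * (2/m) := mul_le_mul_of_nonneg_left hxy (by positivity)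
      _ = 2*n/m := by ring
  have e1 : deriv (ψ' ∘ φ) x = deriv ψ' (φ x) * deriv φ x :=
    deriv_comp x (hdψ _) (hdφ _)
  have e2 : deriv (ψ' ∘ φ) y = deriv ψ' (φ y) * deriv φ y :=
    deriv_comp y (hdψ _) (hdφ _)
  rw [e1, e2]
  have key : deriv ψ' (φ x) * deriv φ x - deriv ψ' (φ y) * deriv φ y =
      deriv ψ' (φ x) * (deriv φ x - deriv φ y) + deriv φ y * (deriv ψ' (φ x) - deriv ψ' (φ y)) := by
    ring
  rw [key]
  have hb1 : |deriv ψ' (φ x) * (deriv φ x - deriv φ y)| ≤ n * (σ/(16*n)) := by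
    rw [abs_mul]
    exact mul_le_mul (hbψ _) (hmφ x y hxy') (abs_nonneg _) (by positivity)
  have hb2 : |deriv φ y * (deriv ψ' (φ x) - deriv ψ' (φ y))| ≤ n * (σ/(16*n)) := by
    rw [abs_mul]
    exact mul_le_mul (hbφ _) (hmψ _ _ hlip) (abs_nonneg _) (by positivity)
  have hn0 : (0:ℝ) < n := by linarith
  have : (n:ℝ) * (σ/(16*n)) = σ/16 := by field_simp
  calc |deriv ψ' (φ x) * (deriv φ x - deriv φ y) + deriv φ y * (deriv ψ' (φ x) - deriv ψ' (φ y))|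
      ≤ |deriv ψ' (φ x) * (deriv φ x - deriv φ y)| + |deriv φ y * (deriv ψ' (φ x) - deriv ψ' (φ y))| :=
        abs_add_le _ _
    _ ≤ n * (σ/(16*n)) + n * (σ/(16*n)) := add_le_add hb1 hb2
    _ = σ/16 + σ/16 := by rw [this]
    _ ≤ σ/8 := by linarith

lemma psi_img {φ ψ : ℝ → ℝ} (hli : Function.LeftInverse ψ φ) (him : φ '' C = C) :
    ψ '' C = C := by
  calc ψ '' C = ψ '' (φ '' C) := by rw [him]
    _ = (ψ ∘ φ) '' C := (Set.image_comp ψ φ C).symm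
    _ = C := by
        have e : ψ ∘ φ = id := funext hli
        rw [e]; exact Set.image_id C

lemma same_on_C (hσ : 0 < σ) (hσ1 : σ ≤ 1) (hcl : IsClosed C) (hne : C.Nonempty)
    (hper : CirclePeriodic C) (hsp : CircleSparse σ C)
    {n m : ℕ} {φ₁ ψ₁ φ₂ ψ₂ : ℝ → ℝ}
    (h1 : IsCircleDiffeoLift φ₁ ψ₁) (h2 : IsCircleDiffeoLift φ₂ ψ₂)
    (him1 : φ₁ '' C = C) (him2 : φ₂ '' C = C)
    (hN1 : NiceClass σ n m φ₁ ψ₁) (hN2 : NiceClass σ n m φ₂ ψ₂)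
    (hsame : ∀ p q : ℝ, IsGap C p q → σ^2/(3*m) ≤ q - p → -1 ≤ p → q ≤ 2 →
      φ₁ p = φ₂ p ∧ φ₁ q = φ₂ q)
    (hmonoiff : StrictMono φ₁ ↔ StrictMono φ₂) :
    ∀ x ∈ C, φ₁ x = φ₂ x := by
  obtain ⟨⟨hc1, hc1', hli1, hri1⟩, hdeg1⟩ := h1
  obtain ⟨⟨hc2, hc2', hli2, hri2⟩, hdeg2⟩ := h2
  have hdφ₁ : Differentiable ℝ φ₁ := hc1.differentiable one_ne_zero
  have hdψ₁ : Differentiable ℝ ψ₁ := hc1'.differentiable one_ne_zero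
  have hdφ₂ : Differentiable ℝ φ₂ := hc2.differentiable one_ne_zero
  have hdψ₂ : Differentiable ℝ ψ₂ := hc2'.differentiable one_ne_zero
  set h : ℝ → ℝ := ψ₂ ∘ φ₁ with hh
  set hI : ℝ → ℝ := ψ₁ ∘ φ₂ with hhI
  have hψ₂mono_of : StrictMono φ₂ → StrictMono ψ₂ := by
    intro hm a b hab
    rw [← hm.lt_iff_lt, hri2 a, hri2 b]
    exact hab
  have hψ₂anti_of : StrictAnti φ₂ → StrictAnti ψ₂ := by
    intro hm a b hab
    rw [← hm.lt_iff_gt, hri2 a, hri2 b]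
    exact hab
  have hmono_h : StrictMono h := by
    rcases mono_or_anti hc1 hc1' hli1 with hm1 | ha1
    · exact (hψ₂mono_of (hmonoiff.1 hm1)).comp hm1
    · have hm2 : ¬ StrictMono φ₂ := fun hm2 => by
        have hm1 : StrictMono φ₁ := hmonoiff.2 hm2
        have := hm1 (show (0:ℝ) < 1 by norm_num)
        have := ha1 (show (0:ℝ) < 1 by norm_num)
        linarith
      have ha2 : StrictAnti φ₂ := (mono_or_anti hc2 hc2' hli2).resolve_left hm2
      exact (hψ₂anti_of ha2).comp ha1
  have hZ : ∀ x, h (x + 1) = h x + 1 := by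
    rcases mono_or_anti hc1 hc1' hli1 with hm1 | ha1
    · have hd1 := deg_plus_of_mono hm1 hdeg1
      have hd2 := deg_plus_of_mono (hmonoiff.1 hm1) hdeg2
      have hd2' := psi_plus hli2 hri2 hd2
      intro x
      simp only [hh, Function.comp_apply, hd1, hd2']
    · have hm2 : ¬ StrictMono φ₂ := fun hm2 => by
        have hm1 : StrictMono φ₁ := hmonoiff.2 hm2
        have := hm1 (show (0:ℝ) < 1 by norm_num)
        have := ha1 (show (0:ℝ) < 1 by norm_num)
        linarith
      have ha2 : StrictAnti φ₂ := (mono_or_anti hc2 hc2' hli2).resolve_left hm2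
      have hd1 := deg_minus_of_anti ha1 hdeg1
      have hd2 := deg_minus_of_anti ha2 hdeg2
      have hd2' := psi_minus hli2 hri2 hd2
      intro x
      have e1 : φ₁ (x + 1) = φ₁ x - 1 := hd1 x
      have e2 : ψ₂ (φ₁ x - 1) = ψ₂ (φ₁ x) + 1 := by
        have := hd2' (φ₁ x - 1)
        have e : φ₁ x - 1 + 1 = φ₁ x := by ring
        rw [e] at this
        linarith
      simp only [hh, Function.comp_apply, e1, e2]
  have hli_h : Function.LeftInverse hI h := by
    intro z
    simp only [hh, hhI, Function.comp_apply]
    rw [hri2, hli1]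
  have hri_h : Function.RightInverse hI h := by
    intro z
    simp only [hh, hhI, Function.comp_apply]
    rw [hri1, hli2]
  have hdh : Differentiable ℝ h := hdψ₂.comp hdφ₁
  have hdhI : Differentiable ℝ hI := hdψ₁.comp hdφ₂
  have himg_h : h '' C = C := by
    calc h '' C = ψ₂ '' (φ₁ '' C) := Set.image_comp ψ₂ φ₁ C
      _ = ψ₂ '' C := by rw [him1]
      _ = C := psi_img hli2 him2
  obtain ⟨hn1, hm3, hb1, hmod1⟩ := hN1
  obtain ⟨_, _, hb2, hmod2⟩ := hN2
  have hosc : ∀ x y : ℝ, |x - y| ≤ 2/m → |deriv h x - deriv h y| ≤ σ/8 :=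
    comp_osc hσ hn1 hdφ₁ hdψ₂ (fun x => (hb1 x).1) (fun x => (hb2 x).2)
      (fun x y hxy => (hmod1 x y hxy).1) (fun x y hxy => (hmod2 x y hxy).2)
  have hoscI : ∀ x y : ℝ, |x - y| ≤ 2/m → |deriv hI x - deriv hI y| ≤ σ/8 :=
    comp_osc hσ hn1 hdφ₂ hdψ₁ (fun x => (hb2 x).1) (fun x => (hb1 x).2)
      (fun x y hxy => (hmod2 x y hxy).1) (fun x y hxy => (hmod1 x y hxy).2)
  have hfix : ∀ p q, IsGap C p q → σ^2/(3*m) ≤ q - p → h p = p ∧ h q = q := by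
    intro p q hgap hlen
    set k : ℤ := -⌊p⌋ with hk
    have hgap' : IsGap C (p + k) (q + k) := gap_translate hper k hgap
    have hp1 : -1 ≤ p + (k:ℝ) := by
      simp only [hk]
      push_cast
      have := Int.floor_le p
      linarith
    have hq2 : q + (k:ℝ) ≤ 2 := by
      simp only [hk]
      push_cast
      have h1 := Int.lt_floor_add_one p
      have h2 : q - p ≤ 1 := gap_len_le_one hper hne hgap
      linarith
    have hlen' : σ^2/(3*m) ≤ (q + k) - (p + k) := by
      have e : (q + (k:ℝ)) - (p + k) = q - p := by ring
      rw [e]; exact hlen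
    obtain ⟨hsp', hsq'⟩ := hsame (p + k) (q + k) hgap' hlen' hp1 hq2
    have hfix' : h (p + k) = p + k ∧ h (q + k) = q + k := by
      constructor
      · simp only [hh, Function.comp_apply]
        rw [hsp', hli2]
      · simp only [hh, Function.comp_apply]
        rw [hsq', hli2]
    have htr := tr_int hZ
    constructor
    · have := htr (-k) (p + k)
      have e : p + (k:ℝ) + ((-k : ℤ):ℝ) = p := by push_cast; ring
      rw [e, hfix'.1] at this
      rw [this]
      push_cast; ring
    · have := htr (-k) (q + k)
      have e : q + (k:ℝ) + ((-k : ℤ):ℝ) = q := by push_cast; ring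
      rw [e, hfix'.2] at this
      rw [this]
      push_cast; ring
  have hrig := rigidity hσ hσ1 hcl hper hsp hmono_h hli_h hri_h hdh hdhI himg_h hm3
    hosc hoscI hfix
  intro x hx
  have := hrig x hx
  have happ : φ₂ (ψ₂ (φ₁ x)) = φ₂ x := by
    simp only [hh, Function.comp_apply] at this
    rw [this]
  rwa [hri2] at happ


lemma sigma_le_one (hσ : 0 < σ) (hperf : Perfect C) (hne : C.Nonempty)
    (hsp : CircleSparse σ C) : σ ≤ 1 := by
  obtain ⟨a, ha⟩ := hne
  have hacc := hperf.acc a ha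
  rw [accPt_iff_nhds] at hacc
  obtain ⟨y, ⟨hyb, hyC⟩, hya⟩ := hacc (Metric.ball a (1/2)) (Metric.ball_mem_nhds a (by norm_num))
  rw [Metric.mem_ball, Real.dist_eq, abs_lt] at hyb
  rcases lt_or_gt_of_ne hya with hlt | hlt
  · obtain ⟨α, β, h1, h2, h3, _, h5⟩ := hsp y hyC a ha hlt (by linarith)
    nlinarith
  · obtain ⟨α, β, h1, h2, h3, _, h5⟩ := hsp a ha y hyC hlt (by linarith)
    nlinarith

lemma Gnm_countable (hσ : 0 < σ) (hσ1 : σ ≤ 1) (hcl : IsClosed C) (hne : C.Nonempty)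
    (hper : CirclePeriodic C) (hsp : CircleSparse σ C) (n m : ℕ) :
    Set.Countable {f : C → AddCircle (1:ℝ) | ∃ φ ψ : ℝ → ℝ,
      (IsCircleDiffeoLift φ ψ ∧ φ '' C = C ∧
        ∀ x : C, f x = (↑(φ (x : ℝ)) : AddCircle (1 : ℝ))) ∧ NiceClass σ n m φ ψ} := by
  rcases lt_or_ge m 3 with hm3 | hm3
  · convert Set.countable_empty
    rw [eq_empty_iff_forall_notMem]
    rintro f ⟨φ, ψ, _, hN⟩
    exact absurd hN.2.1 (by omega)
  have hm0 : (0:ℝ) < m := by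
    have : (3:ℝ) ≤ m := by exact_mod_cast hm3
    linarith
  have hδ0 : 0 < σ^2/(3*m) := by positivity
  have hfin : Set.Finite {pq : ℝ × ℝ | IsGap C pq.1 pq.2 ∧ σ^2/(3*m) ≤ pq.2 - pq.1 ∧
      -1 ≤ pq.1 ∧ pq.2 ≤ 2} := bigGaps_finite C hδ0
  have hGS : Set.Countable {pq : ℝ × ℝ | IsGap C pq.1 pq.2} := gapSet_countable C
  haveI hfinI : Finite ↥{pq : ℝ × ℝ | IsGap C pq.1 pq.2 ∧ σ^2/(3*m) ≤ pq.2 - pq.1 ∧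
      -1 ≤ pq.1 ∧ pq.2 ≤ 2} := hfin.to_subtype
  haveI hGSI : Countable ↥{pq : ℝ × ℝ | IsGap C pq.1 pq.2} := hGS.to_subtype
  rw [← Set.countable_coe_iff]
  set S := {f : C → AddCircle (1:ℝ) | ∃ φ ψ : ℝ → ℝ,
      (IsCircleDiffeoLift φ ψ ∧ φ '' C = C ∧
        ∀ x : C, f x = (↑(φ (x : ℝ)) : AddCircle (1 : ℝ))) ∧ NiceClass σ n m φ ψ} with hS
  have hsel : ∀ f : ↥S, ∃ Φ : (ℝ → ℝ) × (ℝ → ℝ),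
      (IsCircleDiffeoLift Φ.1 Φ.2 ∧ Φ.1 '' C = C ∧
        ∀ x : C, f.1 x = (↑(Φ.1 (x : ℝ)) : AddCircle (1 : ℝ))) ∧ NiceClass σ n m Φ.1 Φ.2 := by
    rintro ⟨f, hf⟩
    obtain ⟨φ, ψ, h1, h2⟩ := hf
    exact ⟨(φ, ψ), h1, h2⟩
  choose Φ hΦ using hsel
  classical
  set D : ↥S → ↥{pq : ℝ × ℝ | IsGap C pq.1 pq.2 ∧ σ^2/(3*m) ≤ pq.2 - pq.1 ∧
      -1 ≤ pq.1 ∧ pq.2 ≤ 2} → ↥{pq : ℝ × ℝ | IsGap C pq.1 pq.2} := fun f s =>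
    if hmono : StrictMono (Φ f).1 then
      ⟨((Φ f).1 s.1.1, (Φ f).1 s.1.2), gap_image hmono (hΦ f).1.2.1 s.2.1⟩
    else
      ⟨((Φ f).1 s.1.2, (Φ f).1 s.1.1),
        gap_image_anti ((mono_or_anti (hΦ f).1.1.1.1 (hΦ f).1.1.1.2.1
          (hΦ f).1.1.1.2.2.1).resolve_left hmono) (hΦ f).1.2.1 s.2.1⟩
    with hD
  set Θ : ↥S → Prop × (↥{pq : ℝ × ℝ | IsGap C pq.1 pq.2 ∧ σ^2/(3*m) ≤ pq.2 - pq.1 ∧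
      -1 ≤ pq.1 ∧ pq.2 ≤ 2} → ↥{pq : ℝ × ℝ | IsGap C pq.1 pq.2}) :=
    fun f => (StrictMono (Φ f).1, D f) with hΘ
  have hinj : Function.Injective Θ := by
    intro f g heq
    have hPeq : StrictMono (Φ f).1 ↔ StrictMono (Φ g).1 :=
      iff_of_eq (congrArg Prod.fst heq)
    have hDeq : D f = D g := congrArg Prod.snd heq
    have hsame : ∀ p q : ℝ, IsGap C p q → σ^2/(3*m) ≤ q - p → -1 ≤ p → q ≤ 2 →
        (Φ f).1 p = (Φ g).1 p ∧ (Φ f).1 q = (Φ g).1 q := by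
      intro p q hgap hlen hp1 hq2
      have hs := congrFun hDeq ⟨(p, q), hgap, hlen, hp1, hq2⟩
      rw [Subtype.ext_iff] at hs
      by_cases hmono : StrictMono (Φ f).1
      · have hmono' : StrictMono (Φ g).1 := hPeq.1 hmono
        simp only [hD, dif_pos hmono, dif_pos hmono'] at hs
        exact ⟨congrArg Prod.fst hs, congrArg Prod.snd hs⟩
      · have hmono' : ¬ StrictMono (Φ g).1 := fun h => hmono (hPeq.2 h)
        simp only [hD, dif_neg hmono, dif_neg hmono'] at hs
        exact ⟨congrArg Prod.snd hs, congrArg Prod.fst hs⟩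
    have hCeq : ∀ x ∈ C, (Φ f).1 x = (Φ g).1 x :=
      same_on_C hσ hσ1 hcl hne hper hsp (hΦ f).1.1 (hΦ g).1.1 (hΦ f).1.2.1 (hΦ g).1.2.1
        (hΦ f).2 (hΦ g).2 hsame hPeq
    apply Subtype.ext
    funext z
    have e1 := (hΦ f).1.2.2 z
    have e2 := (hΦ g).1.2.2 z
    rw [e1, e2, hCeq z z.2]
  exact hinj.countable

end SparseRigidity

end

/-- If `C` is a sparse Cantor subset of the circle `S¹ = ℝ/ℤ`, the group of
transformations of `C` induced by `C¹` diffeomorphisms of `S¹` preserving `C`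
is countable. -/
theorem diff1_circle_of_sparse_countable (σ : ℝ) (hσ : 0 < σ) (C : Set ℝ)
    (hC : IsCircleCantorLift C) (hsp : CircleSparse σ C) :
    Set.Countable {f : C → AddCircle (1 : ℝ) | ∃ φ ψ : ℝ → ℝ,
      IsCircleDiffeoLift φ ψ ∧ φ '' C = C ∧
      ∀ x : C, f x = (↑(φ (x : ℝ)) : AddCircle (1 : ℝ))} := by
  obtain ⟨hne, hcl, hperf, htd, hper⟩ := hC
  have hσ1 : σ ≤ 1 := SparseRigidity.sigma_le_one hσ hperf hne hsp
  have hsub : {f : C → AddCircle (1 : ℝ) | ∃ φ ψ : ℝ → ℝ,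
      IsCircleDiffeoLift φ ψ ∧ φ '' C = C ∧
      ∀ x : C, f x = (↑(φ (x : ℝ)) : AddCircle (1 : ℝ))} ⊆
      ⋃ (n : ℕ), ⋃ (m : ℕ), {f : C → AddCircle (1:ℝ) | ∃ φ ψ : ℝ → ℝ,
        (IsCircleDiffeoLift φ ψ ∧ φ '' C = C ∧
          ∀ x : C, f x = (↑(φ (x : ℝ)) : AddCircle (1 : ℝ))) ∧
        SparseRigidity.NiceClass σ n m φ ψ} := by
    rintro f ⟨φ, ψ, h1, h2, h3⟩
    obtain ⟨n, m, hN⟩ := SparseRigidity.exists_class hσ h1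
    exact mem_iUnion.2 ⟨n, mem_iUnion.2 ⟨m, ⟨φ, ψ, ⟨h1, h2, h3⟩, hN⟩⟩⟩
  exact Set.Countable.mono hsub (Set.countable_iUnion fun n => Set.countable_iUnion fun m =>
    SparseRigidity.Gnm_countable hσ hσ1 hcl hne hper hsp n m)
end

section
/- Let C be a σ-sparse Cantor subset of ℝ and let φ be an orientation-preserving C¹ diffeomorphism of ℝ preserving C such that 1 − σ < φ'(x) < 1 + σ for all x ∈ C. Then φ restricted to C is the identity. -/
open Set Filter Topology Asymptotics

set_option maxHeartbeats 1000000 in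
theorem sparse_aux_move_le (σ : ℝ) (hσ : 0 < σ) (C : Set ℝ)
    (hcomp : IsCompact C) (hsp : SparseSet σ C)
    (g : ℝ → ℝ) (hg : ContDiff ℝ 1 g) (hmono : StrictMono g)
    (hpres : g '' C = C)
    (hder : ∀ x ∈ C, 1 - σ < deriv g x) :
    ∀ x ∈ C, g x ≤ x := by
  intro x₀ hx₀
  by_contra hlt
  push_neg at hlt
  have hclosed : IsClosed C := hcomp.isClosed
  have hmem : ∀ x ∈ C, g x ∈ C := fun x hx => hpres ▸ Set.mem_image_of_mem g hx
  have hdiff : Differentiable ℝ g := hg.differentiable one_ne_zero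
  have hcont' : Continuous (deriv g) := hg.continuous_deriv le_rfl
  -- the orbit
  set x : ℕ → ℝ := fun n => g^[n] x₀ with hxdef
  have hxsucc : ∀ n, x (n + 1) = g (x n) := fun n => Function.iterate_succ_apply' g n x₀
  have hxC : ∀ n, x n ∈ C := by
    intro n; induction n with
    | zero => exact hx₀
    | succ n ih => rw [hxsucc]; exact hmem _ ih
  have hxmono : StrictMono x := by
    apply strictMono_nat_of_lt_succ
    intro n
    induction n with
    | zero => simpa [hxdef] using hlt
    | succ n ih => simpa only [hxsucc] using hmono ih
  have hbdd : BddAbove (Set.range x) :=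
    hcomp.bddAbove.mono (Set.range_subset_iff.mpr hxC)
  set L : ℝ := ⨆ n, x n with hLdef
  have htend : Tendsto x atTop (𝓝 L) := tendsto_atTop_ciSup hxmono.monotone hbdd
  have hLC : L ∈ C := hclosed.mem_of_tendsto htend (Eventually.of_forall hxC)
  have hxleL : ∀ n, x n ≤ L := fun n => le_ciSup hbdd n
  have hxltL : ∀ n, x n < L := fun n => lt_of_lt_of_le (hxmono (Nat.lt_succ_self n)) (hxleL (n + 1))
  have hfix : g L = L := by
    have h1 : Tendsto (fun n => g (x n)) atTop (𝓝 (g L)) :=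
      (hdiff.continuous.continuousAt.tendsto).comp htend
    have h2 : Tendsto (fun n => x (n + 1)) atTop (𝓝 L) :=
      htend.comp (tendsto_add_atTop_nat 1)
    refine tendsto_nhds_unique ?_ h2
    simpa [hxsucc] using h1
  -- σ ≤ 1
  have hσ1 : σ ≤ 1 := by
    obtain ⟨α, β, h1, h2, h3, _, h5⟩ := hsp x₀ hx₀ L hLC (hxltL 0)
    nlinarith [hxltL 0]
  -- the claim: points in C ∩ [x N, L) move right
  have claim : ∀ N : ℕ, ∀ w, x N ≤ w → w < L → w < g w := by
    intro N w hw1 hw2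
    by_contra h
    push_neg at h
    have hall : ∀ n, x (N + n) ≤ w := by
      intro n; induction n with
      | zero => simpa using hw1
      | succ n ih =>
        have h2 := hmono.monotone ih
        show x ((N + n) + 1) ≤ w
        rw [hxsucc]
        exact le_trans h2 h
    have : L ≤ w := by
      refine ciSup_le fun n => ?_
      exact le_trans (hxmono.monotone (Nat.le_add_left n N)) (hall n)
    linarith
  -- derivative bound near L
  set c : ℝ := deriv g L with hcdef
  have hc : 1 - σ < c := hder L hLC
  set r : ℝ := ((1 - σ) + min c 1) / 2 with hrdef
  have hr1 : 1 - σ < r := by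
    have : 1 - σ < min c 1 := lt_min hc (by linarith)
    rw [hrdef]; linarith
  have hr2 : r < 1 := by
    have : min c 1 ≤ 1 := min_le_right _ _
    rw [hrdef]; linarith
  have hr3 : r < c := by
    have : min c 1 ≤ c := min_le_left _ _
    rw [hrdef]
    rcases lt_or_ge c 1 with h | h
    · have : min c 1 = c := min_eq_left h.le
      rw [this]; linarith
    · have h1 : min c 1 = 1 := min_eq_right h
      rw [h1]; linarith
  have hr0 : 0 < r := by linarith
  obtain ⟨δ, hδ0, hδ⟩ : ∃ δ > 0, ∀ y, dist y L < δ → r < deriv g y := by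
    have hopen : IsOpen {y : ℝ | r < deriv g y} := isOpen_lt continuous_const hcont'
    have hLmem : L ∈ {y : ℝ | r < deriv g y} := hr3
    rw [Metric.isOpen_iff] at hopen
    obtain ⟨δ, hδ0, h⟩ := hopen L hLmem
    exact ⟨δ, hδ0, fun y hy => h (Metric.mem_ball.mpr hy)⟩
  -- choose N with L - x N < δ
  obtain ⟨N, hN⟩ : ∃ N, dist (x N) L < δ := by
    have := (htend.eventually (Metric.ball_mem_nhds L hδ0)).exists
    obtain ⟨N, hN⟩ := this
    exact ⟨N, Metric.mem_ball.mp hN⟩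
  have hρpos : 0 < L - x N := by have := hxltL N; linarith
  set ρ : ℝ := L - x N with hρdef
  have hρδ : ρ < δ := by
    have : dist (x N) L = |x N - L| := Real.dist_eq _ _
    rw [this, abs_sub_comm, abs_of_pos hρpos] at hN
    exact hN
  have hIcc : ∀ y ∈ Icc (x N) L, r < deriv g y := by
    intro y hy
    apply hδ
    rw [Real.dist_eq, abs_sub_comm, abs_of_nonneg (by linarith [hy.2] : (0:ℝ) ≤ L - y)]
    have := hy.1
    simp only [hρdef] at hρδ
    linarith
  -- extract a gap with endpoints in C
  obtain ⟨α, β, hα1, hαβ, hβ1, hgap0, hlen0⟩ := hsp (x N) (hxC N) L hLC (hxltL N)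
  set A : Set ℝ := C ∩ Icc (x N) α with hAdef
  set B : Set ℝ := C ∩ Icc β L with hBdef
  have hAne : A.Nonempty := ⟨x N, hxC N, le_refl _, hα1⟩
  have hBne : B.Nonempty := ⟨L, hLC, hβ1, le_refl _⟩
  have hAclosed : IsClosed A := hclosed.inter isClosed_Icc
  have hBclosed : IsClosed B := hclosed.inter isClosed_Icc
  set u : ℝ := sSup A with hudef
  set v : ℝ := sInf B with hvdef
  have huA : u ∈ A := hAclosed.csSup_mem hAne ⟨α, fun y hy => hy.2.2⟩
  have hvB : v ∈ B := hBclosed.csInf_mem hBne ⟨β, fun y hy => hy.2.1⟩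
  have huC : u ∈ C := huA.1
  have hvC : v ∈ C := hvB.1
  have hxNu : x N ≤ u := huA.2.1
  have huα : u ≤ α := huA.2.2
  have hβv : β ≤ v := hvB.2.1
  have hvL : v ≤ L := hvB.2.2
  have huv : u < v := lt_of_le_of_lt huα (lt_of_lt_of_le hαβ hβv)
  have hgap : Ioo u v ∩ C = ∅ := by
    ext y
    simp only [Set.mem_inter_iff, Set.mem_Ioo, Set.mem_empty_iff_false, iff_false, not_and]
    rintro ⟨hy1, hy2⟩ hyC
    rcases le_or_gt y α with h | h
    · have : y ∈ A := ⟨hyC, le_trans hxNu hy1.le, h⟩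
      have : y ≤ u := le_csSup ⟨α, fun z hz => hz.2.2⟩ this
      linarith
    · rcases lt_or_ge y β with h' | h'
      · have : y ∈ Ioo α β ∩ C := ⟨⟨h, h'⟩, hyC⟩
        rw [hgap0] at this
        exact this
      · have : y ∈ B := ⟨hyC, h', le_trans hy2.le hvL⟩
        have : v ≤ y := csInf_le ⟨β, fun z hz => hz.2.1⟩ this
        linarith
  have hlen : σ * ρ ≤ v - u := by
    have h1 : β - α ≤ v - u := by linarith
    rw [hρdef]
    linarith [hlen0]
  -- the iterated gap
  set U : ℕ → ℝ := fun n => g^[n] u with hUdef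
  set V : ℕ → ℝ := fun n => g^[n] v with hVdef
  have hUsucc : ∀ n, U (n + 1) = g (U n) := fun n => Function.iterate_succ_apply' g n u
  have hVsucc : ∀ n, V (n + 1) = g (V n) := fun n => Function.iterate_succ_apply' g n v
  have Inv : ∀ n, U n ∈ C ∧ V n ∈ C ∧ x N ≤ U n ∧ U n < V n ∧ V n ≤ L ∧ Ioo (U n) (V n) ∩ C = ∅ ∧ V n ≤ U (n + 1) := by
    intro n
    induction n with
    | zero =>
      have base : U 0 ∈ C ∧ V 0 ∈ C ∧ x N ≤ U 0 ∧ U 0 < V 0 ∧ V 0 ≤ L ∧ Ioo (U 0) (V 0) ∩ C = ∅ :=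
        ⟨huC, hvC, hxNu, huv, hvL, hgap⟩
      obtain ⟨hU, hV, hxU, hUV, hVL, hgapn⟩ := base
      refine ⟨hU, hV, hxU, hUV, hVL, hgapn, ?_⟩
      have hUL : U 0 < L := lt_of_lt_of_le hUV hVL
      have hmove : U 0 < g (U 0) := claim N (U 0) hxU hUL
      have hgUC : g (U 0) ∈ C := hmem _ hU
      have : g (U 0) ∉ Ioo (U 0) (V 0) := by
        intro hmem'
        have : g (U 0) ∈ Ioo (U 0) (V 0) ∩ C := ⟨hmem', hgUC⟩
        rw [hgapn] at this; exact this
      rw [hUsucc]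
      by_contra hcon
      push_neg at hcon
      exact this ⟨hmove, hcon⟩
    | succ n ih =>
      obtain ⟨hU, hV, hxU, hUV, hVL, hgapn, hVU⟩ := ih
      have hU' : U (n + 1) ∈ C := by rw [hUsucc]; exact hmem _ hU
      have hV' : V (n + 1) ∈ C := by rw [hVsucc]; exact hmem _ hV
      have hxU' : x N ≤ U (n + 1) := le_trans hxU (le_trans hUV.le hVU)
      have hUV' : U (n + 1) < V (n + 1) := by rw [hUsucc, hVsucc]; exact hmono hUV
      have hVL' : V (n + 1) ≤ L := by
        rw [hVsucc, ← hfix]; exact hmono.monotone hVL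
      have hgapn' : Ioo (U (n + 1)) (V (n + 1)) ∩ C = ∅ := by
        ext y
        simp only [Set.mem_inter_iff, Set.mem_Ioo, Set.mem_empty_iff_false, iff_false, not_and]
        rintro ⟨hy1, hy2⟩ hyC
        have : y ∈ g '' C := hpres.symm ▸ hyC
        obtain ⟨z, hzC, hzy⟩ := this
        rw [hUsucc] at hy1
        rw [hVsucc] at hy2
        rw [← hzy] at hy1 hy2
        have hz1 : U n < z := hmono.lt_iff_lt.mp hy1
        have hz2 : z < V n := hmono.lt_iff_lt.mp hy2
        have : z ∈ Ioo (U n) (V n) ∩ C := ⟨⟨hz1, hz2⟩, hzC⟩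
        rw [hgapn] at this; exact this
      refine ⟨hU', hV', hxU', hUV', hVL', hgapn', ?_⟩
      have hUL : U (n + 1) < L := lt_of_lt_of_le hUV' hVL'
      have hmove : U (n + 1) < g (U (n + 1)) := claim N (U (n + 1)) hxU' hUL
      have hgUC : g (U (n + 1)) ∈ C := hmem _ hU'
      have hnotin : g (U (n + 1)) ∉ Ioo (U (n + 1)) (V (n + 1)) := by
        intro hmem'
        have : g (U (n + 1)) ∈ Ioo (U (n + 1)) (V (n + 1)) ∩ C := ⟨hmem', hgUC⟩
        rw [hgapn'] at this; exact this
      rw [hUsucc]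
      by_contra hcon
      push_neg at hcon
      exact hnotin ⟨hmove, hcon⟩
  -- growth of gap lengths
  have hgrow : ∀ n, V (n + 1) - U (n + 1) ≥ r * (V n - U n) := by
    intro n
    obtain ⟨hU, hV, hxU, hUV, hVL, _, _⟩ := Inv n
    obtain ⟨ξ, hξmem, hξ⟩ := exists_hasDerivAt_eq_slope g (deriv g) hUV
      (hdiff.continuous.continuousOn)
      (fun y _ => (hdiff y).hasDerivAt)
    have hξIcc : ξ ∈ Icc (x N) L :=
      ⟨le_trans hxU hξmem.1.le, le_trans hξmem.2.le hVL⟩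
    have hrξ : r < deriv g ξ := hIcc ξ hξIcc
    have hpos : 0 < V n - U n := by linarith
    rw [hUsucc, hVsucc]
    have : (g (V n) - g (U n)) / (V n - U n) = deriv g ξ := hξ.symm
    have h2 : g (V n) - g (U n) = deriv g ξ * (V n - U n) := by
      field_simp at this
      linarith [this]
    rw [h2]
    nlinarith
  have hgeom : ∀ n, r ^ n * (v - u) ≤ V n - U n := by
    intro n
    induction n with
    | zero => simp [hUdef, hVdef]
    | succ n ih =>
      have := hgrow n
      calc r ^ (n + 1) * (v - u) = r * (r ^ n * (v - u)) := by ring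
        _ ≤ r * (V n - U n) := by nlinarith
        _ ≤ V (n + 1) - U (n + 1) := this
  -- sum bound
  have hsum : ∀ k, ∑ n ∈ Finset.range k, (V n - U n) ≤ U k - u := by
    intro k
    induction k with
    | zero => simp [hUdef]
    | succ k ih =>
      obtain ⟨_, _, _, _, _, _, hVU⟩ := Inv k
      rw [Finset.sum_range_succ]
      linarith
  have hsum2 : ∀ k, (∑ n ∈ Finset.range k, r ^ n) * (v - u) ≤ ρ := by
    intro k
    have h1 : ∑ n ∈ Finset.range k, r ^ n * (v - u) ≤ ∑ n ∈ Finset.range k, (V n - U n) :=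
      Finset.sum_le_sum (fun n _ => hgeom n)
    have h2 : U k - u ≤ ρ := by
      obtain ⟨_, _, hxU, hUV, hVL, _, _⟩ := Inv k
      have : U k ≤ L := le_trans hUV.le hVL
      simp only [hρdef]
      linarith [hxNu]
    rw [Finset.sum_mul]
    exact le_trans h1 (le_trans (hsum k) h2)
  -- limit
  have hlim : (1 - r)⁻¹ * (v - u) ≤ ρ := by
    have hr1' : |r| < 1 := by rw [abs_of_pos hr0]; exact hr2
    have htend2 : Tendsto (fun k => (∑ n ∈ Finset.range k, r ^ n) * (v - u)) atTop
        (𝓝 ((1 - r)⁻¹ * (v - u))) := by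
      have := hasSum_geometric_of_abs_lt_one hr1'
      exact this.tendsto_sum_nat.mul_const (v - u)
    exact le_of_tendsto htend2 (Eventually.of_forall hsum2)
  have hvu : σ * ρ ≤ v - u := hlen
  have h1r : 0 < 1 - r := by linarith
  have h2 : v - u ≤ (1 - r) * ρ := by
    rw [inv_mul_le_iff₀ h1r] at hlim
    exact hlim
  have h3 : (1 - r) * ρ < σ * ρ :=
    mul_lt_mul_of_pos_right (by linarith) hρpos
  linarith

theorem strictMono_hasDerivAt_nonneg {f : ℝ → ℝ} (hf : StrictMono f) {x d : ℝ}
    (h : HasDerivAt f d x) : 0 ≤ d := by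
  have h1 := hasDerivAt_iff_tendsto_slope.mp h
  refine ge_of_tendsto h1 ?_
  filter_upwards [self_mem_nhdsWithin] with y hy
  have hy' : y ≠ x := hy
  rw [slope_def_field]
  rcases lt_or_gt_of_ne hy' with h' | h'
  · exact le_of_lt (div_pos_iff.mpr (Or.inr ⟨sub_neg.mpr (hf h'), sub_neg.mpr h'⟩))
  · exact le_of_lt (div_pos_iff.mpr (Or.inl ⟨sub_pos.mpr (hf h'), sub_pos.mpr h'⟩))

/-- An orientation-preserving `C¹` diffeomorphism of ℝ preserving a σ-sparse Cantor
set `C`, whose derivative on `C` lies strictly between `1-σ` and `1+σ`, is the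
identity on `C`. -/
theorem close_to_id_deriv_eq_id (σ : ℝ) (hσ : 0 < σ) (C : Set ℝ)
    (hC : IsCantorSet C) (hsp : SparseSet σ C)
    (φ ψ : ℝ → ℝ) (hφ : IsC1DiffeoPair φ ψ) (hmono : StrictMono φ)
    (hpres : φ '' C = C)
    (hder : ∀ x ∈ C, 1 - σ < deriv φ x ∧ deriv φ x < 1 + σ) :
    ∀ x ∈ C, φ x = x := by
  obtain ⟨hφ1, hψ1, hli, hri⟩ := hφ
  obtain ⟨-, hcomp, -, -⟩ := hC
  have hψmono : StrictMono ψ := by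
    intro a b hab
    by_contra h
    push_neg at h
    have := hmono.monotone h
    rw [hri a, hri b] at this
    exact absurd this (not_le.mpr hab)
  have hψpres : ψ '' C = C := by
    conv_lhs => rw [← hpres]
    rw [← Set.image_comp]
    have : ψ ∘ φ = id := funext hli
    rw [this, Set.image_id]
  have hφdiff : Differentiable ℝ φ := hφ1.differentiable one_ne_zero
  have hψdiff : Differentiable ℝ ψ := hψ1.differentiable one_ne_zero
  have hψder : ∀ y ∈ C, 1 - σ < deriv ψ y := by
    intro y hy
    have hψyC : ψ y ∈ C := hψpres ▸ Set.mem_image_of_mem ψ hy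
    have hchain : deriv φ (ψ y) * deriv ψ y = 1 := by
      have h1 : deriv (φ ∘ ψ) y = deriv φ (ψ y) * deriv ψ y :=
        deriv_comp y (hφdiff (ψ y)) (hψdiff y)
      have h2 : φ ∘ ψ = id := funext hri
      rw [h2, deriv_id'] at h1
      exact h1.symm
    obtain ⟨hd1, hd2⟩ := hder (ψ y) hψyC
    have hdnn : 0 ≤ deriv φ (ψ y) :=
      strictMono_hasDerivAt_nonneg hmono (hφdiff (ψ y)).hasDerivAt
    have hd0 : 0 < deriv φ (ψ y) := by
      rcases hdnn.lt_or_eq with h | h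
      · exact h
      · exfalso; rw [← h, zero_mul] at hchain; exact zero_ne_one hchain
    have hψd : deriv ψ y = (deriv φ (ψ y))⁻¹ := by
      field_simp
      linear_combination hchain
    rw [hψd]
    rcases le_or_gt (1 - σ) 0 with h | h
    · exact lt_of_le_of_lt h (inv_pos.mpr hd0)
    · rw [inv_eq_one_div, lt_div_iff₀ hd0]
      nlinarith
  have hφle : ∀ x ∈ C, φ x ≤ x :=
    sparse_aux_move_le σ hσ C hcomp hsp φ hφ1 hmono hpres (fun x hx => (hder x hx).1)
  have hψle : ∀ x ∈ C, ψ x ≤ x :=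
    sparse_aux_move_le σ hσ C hcomp hsp ψ hψ1 hψmono hψpres hψder
  intro x hx
  have h1 : φ x ≤ x := hφle x hx
  have h2 : ψ x ≤ x := hψle x hx
  have h3 : x ≤ φ x := by
    have := hmono.monotone h2
    rwa [hri x] at this
  linarith
end

section
/- For λ > 2, the central Cantor set C_λ is σ-sparse with σ = (λ−2)/λ: for any a, b ∈ C_λ with a < b there is an open interval (α, β) ⊆ (a, b) disjoint from C_λ with β − α ≥ ((λ−2)/λ)(b − a). -/
open Set Filter Topology Asymptotics

/-- `C` is the central Cantor set of parameter `l`: the attractor of the IFS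
`φ₀(x) = x/l`, `φ₁(x) = x/l + (l-1)/l`, i.e. the unique nonempty compact set with
`C = φ₀(C) ∪ φ₁(C)`. -/
def IsCentralCantor (l : ℝ) (C : Set ℝ) : Prop :=
  IsCompact C ∧ C.Nonempty ∧
    C = (fun x => x / l) '' C ∪ (fun x => x / l + (l - 1) / l) '' C

/-- For λ > 2 the central Cantor set `C_λ` is `(λ-2)/λ`-sparse. -/
theorem centralCantor_sparse (l : ℝ) (hl : 2 < l) (C : Set ℝ)
    (hC : IsCentralCantor l C) :
    SparseSet ((l - 2) / l) C := by
  obtain ⟨hcomp, hne, heq⟩ := hC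
  have hl0 : (0:ℝ) < l := by linarith
  have hmem : ∀ x ∈ C, x ∈ (fun x => x / l) '' C ∪ (fun x => x / l + (l - 1) / l) '' C := by
    intro x hx; rw [← heq]; exact hx
  have hup : ∀ x ∈ C, x ≤ 1 := by
    intro x hx
    have hMC : sSup C ∈ C := hcomp.sSup_mem hne
    have hxM : x ≤ sSup C := le_csSup hcomp.bddAbove hx
    rcases hmem _ hMC with ⟨y, hy, hxy⟩ | ⟨y, hy, hxy⟩ <;>
      have hyM : y ≤ sSup C := le_csSup hcomp.bddAbove hy <;>
      simp only at hxy <;> field_simp at hxy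
    · nlinarith
    · nlinarith
  have hlo : ∀ x ∈ C, 0 ≤ x := by
    intro x hx
    have hMC : sInf C ∈ C := hcomp.sInf_mem hne
    have hxM : sInf C ≤ x := csInf_le hcomp.bddBelow hx
    rcases hmem _ hMC with ⟨y, hy, hxy⟩ | ⟨y, hy, hxy⟩ <;>
      have hyM : sInf C ≤ y := csInf_le hcomp.bddBelow hy <;>
      simp only at hxy <;> field_simp at hxy
    · nlinarith
    · nlinarith
  have hsplit : ∀ x ∈ C, (x ≤ 1/l ∧ l*x ∈ C) ∨ ((l-1)/l ≤ x ∧ l*x - (l-1) ∈ C) := by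
    intro x hx
    rcases hmem _ hx with ⟨y, hy, hxy⟩ | ⟨y, hy, hxy⟩ <;> simp only at hxy
    · left
      have hy1 := hup y hy
      constructor
      · rw [← hxy]; gcongr
      · have h2 : l * x = y := by rw [← hxy]; field_simp
        rw [h2]; exact hy
    · right
      have hy0 := hlo y hy
      constructor
      · rw [← hxy]
        have : 0 ≤ y / l := by positivity
        linarith
      · have h2 : l * x - (l-1) = y := by rw [← hxy]; field_simp; ring
        rw [h2]; exact hy
  have hσ : 0 ≤ (l-2)/l := div_nonneg (by linarith) (le_of_lt hl0)
  have hmid : ∀ a ∈ C, ∀ b ∈ C, a ≤ 1/l → (l-1)/l ≤ b →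
      ∃ α β : ℝ, a ≤ α ∧ α < β ∧ β ≤ b ∧ Set.Ioo α β ∩ C = ∅ ∧ (l-2)/l * (b - a) ≤ β - α := by
    intro a ha b hb ha1 hb1
    refine ⟨1/l, (l-1)/l, ha1, ?_, hb1, ?_, ?_⟩
    · rw [div_lt_div_iff₀ hl0 hl0]; nlinarith
    · rw [eq_empty_iff_forall_notMem]
      rintro x ⟨⟨h1, h2⟩, hxC⟩
      rcases hsplit x hxC with ⟨h, _⟩ | ⟨h, _⟩ <;> linarith
    · have hba : b - a ≤ 1 := by
        have := hup b hb; have := hlo a ha; linarith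
      have h3 : (l-1)/l - 1/l = (l-2)/l := by ring
      rw [h3]; nlinarith
  have key : ∀ n : ℕ, ∀ a ∈ C, ∀ b ∈ C, a < b → 1 ≤ l^n * (b - a) →
      ∃ α β : ℝ, a ≤ α ∧ α < β ∧ β ≤ b ∧ Set.Ioo α β ∩ C = ∅ ∧ (l-2)/l * (b - a) ≤ β - α := by
    intro n
    induction n with
    | zero =>
      intro a ha b hb hab hone
      rw [pow_zero, one_mul] at hone
      have ha1 : a ≤ 1/l := by
        have := hup b hb
        have : a ≤ 0 := by linarith
        have : 0 < 1/l := by positivity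
        linarith
      have hb1 : (l-1)/l ≤ b := by
        have := hlo a ha
        have hb2 : 1 ≤ b := by linarith
        have : (l-1)/l ≤ 1 := by rw [div_le_one hl0]; linarith
        linarith
      exact hmid a ha b hb ha1 hb1
    | succ n ih =>
      intro a ha b hb hab hone
      rcases hsplit a ha with ⟨ha1, ha2⟩ | ⟨ha1, ha2⟩ <;>
        rcases hsplit b hb with ⟨hb1, hb2⟩ | ⟨hb1, hb2⟩
      · -- both left
        have hab' : l * a < l * b := by nlinarith
        have hone' : 1 ≤ l^n * (l*b - l*a) := by
          have : l^n * (l*b - l*a) = l^(n+1) * (b - a) := by ring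
          rw [this]; exact hone
        obtain ⟨α, β, h1, h2, h3, h4, h5⟩ := ih (l*a) ha2 (l*b) hb2 hab' hone'
        refine ⟨α/l, β/l, ?_, by gcongr, ?_, ?_, ?_⟩
        · rw [le_div_iff₀ hl0]; linarith
        · rw [div_le_iff₀ hl0]; linarith
        · rw [eq_empty_iff_forall_notMem]
          rintro x ⟨⟨hx1, hx2⟩, hxC⟩
          rcases hsplit x hxC with ⟨hx3, hx4⟩ | ⟨hx3, hx4⟩
          · have hmem2 : l*x ∈ Set.Ioo α β ∩ C := by
              refine ⟨⟨?_, ?_⟩, hx4⟩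
              · have := (div_lt_iff₀ hl0).mp hx1; linarith
              · have := (lt_div_iff₀ hl0).mp hx2; linarith
            rw [h4] at hmem2; exact hmem2
          · have hβb : β/l ≤ b := by rw [div_le_iff₀ hl0]; linarith
            have h1l : 1/l < (l-1)/l := by rw [div_lt_div_iff₀ hl0 hl0]; nlinarith
            linarith
        · rw [div_sub_div _ _ (ne_of_gt hl0) (ne_of_gt hl0)]
          rw [le_div_iff₀ (by positivity)]
          nlinarith
      · -- a left, b right
        exact hmid a ha b hb ha1 hb1
      · -- a right, b left : contradiction
        exfalso
        have : 1/l < (l-1)/l := by rw [div_lt_div_iff₀ hl0 hl0]; nlinarith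
        linarith
      · -- both right
        have hab' : l*a - (l-1) < l*b - (l-1) := by nlinarith
        have hone' : 1 ≤ l^n * ((l*b - (l-1)) - (l*a - (l-1))) := by
          have : l^n * ((l*b - (l-1)) - (l*a - (l-1))) = l^(n+1) * (b - a) := by ring
          rw [this]; exact hone
        obtain ⟨α, β, h1, h2, h3, h4, h5⟩ := ih _ ha2 _ hb2 hab' hone'
        refine ⟨(α + (l-1))/l, (β + (l-1))/l, ?_, by gcongr, ?_, ?_, ?_⟩
        · rw [le_div_iff₀ hl0]; linarith
        · rw [div_le_iff₀ hl0]; linarith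
        · rw [eq_empty_iff_forall_notMem]
          rintro x ⟨⟨hx1, hx2⟩, hxC⟩
          rcases hsplit x hxC with ⟨hx3, hx4⟩ | ⟨hx3, hx4⟩
          · have ha1' : l - 1 ≤ a * l := (div_le_iff₀ hl0).mp ha1
            have hα0 : 0 ≤ α := by nlinarith
            have haα : (l-1)/l ≤ (α + (l-1))/l := by gcongr; linarith
            have h1l : 1/l < (l-1)/l := by rw [div_lt_div_iff₀ hl0 hl0]; nlinarith
            linarith
          · have hmem2 : l*x - (l-1) ∈ Set.Ioo α β ∩ C := by
              refine ⟨⟨?_, ?_⟩, hx4⟩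
              · rw [div_lt_iff₀ hl0] at hx1; linarith
              · rw [lt_div_iff₀ hl0] at hx2; linarith
            rw [h4] at hmem2; exact hmem2
        · rw [div_sub_div _ _ (ne_of_gt hl0) (ne_of_gt hl0)]
          rw [le_div_iff₀ (by positivity)]
          nlinarith
  intro a ha b hb hab
  obtain ⟨n, hn⟩ := pow_unbounded_of_one_lt (1/(b-a)) (by linarith : (1:ℝ) < l)
  refine key n a ha b hb hab ?_
  rw [div_lt_iff₀ (by linarith : (0:ℝ) < b - a)] at hn
  linarith
end

section
/- Let C_λ (λ > 2) be the central Cantor set and φ an orientation-preserving C¹ diffeomorphism of ℝ with φ(C_λ) = C_λ. Then there is a finite covering of C_λ by disjoint closed intervals I₁, …, I_m such that on each I_k ∩ C_λ the map φ is affine: φ(x) = φ(c_k) + λ^{j_k}(x − c_k) for some integer j_k and some point c_k ∈ C_λ ∩ I_k. -/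
open Set Filter Topology Asymptotics

namespace CCantor

variable {l : ℝ}

/-- value of a binary code -/
noncomputable def gv (l : ℝ) (ε : ℕ → Bool) : ℝ := ∑' i, if ε i then (l-1)/l^(i+1) else 0

def shf (n : ℕ) (ε : ℕ → Bool) : ℕ → Bool := fun i => ε (i + n)

noncomputable def pref (l : ℝ) (n : ℕ) (ε : ℕ → Bool) : ℝ :=
  ∑ i ∈ Finset.range n, if ε i then (l-1)/l^(i+1) else 0

lemma term_nonneg (hl : 2 < l) (ε : ℕ → Bool) (i : ℕ) :
    0 ≤ if ε i then (l-1)/l^(i+1) else 0 := by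
  have h1 : (0:ℝ) < l - 1 := by linarith
  have h2 : (0:ℝ) < l := by linarith
  split
  · positivity
  · exact le_rfl

lemma term_eq (hl : 2 < l) (i : ℕ) : (l-1)/l^(i+1) = (l-1)/l * (1/l)^i := by
  have hlp : l ≠ 0 := by linarith
  have h1 : l - 1 ≠ 0 := by linarith
  rw [div_pow, one_pow, pow_succ]
  field_simp

lemma term_le (hl : 2 < l) (ε : ℕ → Bool) (i : ℕ) :
    (if ε i then (l-1)/l^(i+1) else 0) ≤ (l-1)/l * (1/l)^i := by
  have h1 : (0:ℝ) < l - 1 := by linarith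
  have hlp : (0:ℝ) < l := by linarith
  rw [term_eq hl]
  split
  · exact le_rfl
  · positivity

lemma summable_geom_aux (hl : 2 < l) : Summable (fun i : ℕ => (l-1)/l * (1/l)^i) := by
  have hlp : (0:ℝ) < l := by linarith
  exact (summable_geometric_of_lt_one (by positivity) (by rw [div_lt_one hlp]; linarith)).mul_left _

lemma summable_term (hl : 2 < l) (ε : ℕ → Bool) :
    Summable (fun i => if ε i then (l-1)/l^(i+1) else 0) :=
  Summable.of_nonneg_of_le (term_nonneg hl ε) (term_le hl ε) (summable_geom_aux hl)

lemma gv_nonneg (hl : 2 < l) (ε : ℕ → Bool) : 0 ≤ gv l ε :=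
  tsum_nonneg (term_nonneg hl ε)

lemma tsum_geom_aux (hl : 2 < l) : ∑' i : ℕ, (l-1)/l * (1/l)^i = 1 := by
  have hlp : (0:ℝ) < l := by linarith
  have h1 : l - 1 ≠ 0 := by linarith
  rw [tsum_mul_left, tsum_geometric_of_lt_one (by positivity) (by rw [div_lt_one hlp]; linarith)]
  rw [one_div]
  rw [inv_eq_one_div, div_mul_div_comm, mul_one, div_eq_one_iff_eq (by
    intro h; apply h1; field_simp at h; linarith)]
  field_simp
lemma gv_le_one (hl : 2 < l) (ε : ℕ → Bool) : gv l ε ≤ 1 := by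
  have := Summable.tsum_le_tsum (term_le hl ε) (summable_term hl ε) (summable_geom_aux hl)
  rw [tsum_geom_aux hl] at this
  exact this

lemma gv_tail (hl : 2 < l) (n : ℕ) (ε : ℕ → Bool) :
    gv l ε = pref l n ε + (1/l^n) * gv l (shf n ε) := by
  have hlp : (0:ℝ) < l := by linarith
  have hs := summable_term hl ε
  have h1 := (Summable.sum_add_tsum_nat_add (f := fun i => if ε i then (l-1)/l^(i+1) else 0) n hs).symm
  rw [gv, h1, pref]
  congr 1
  rw [gv, ← tsum_mul_left]
  congr 1; funext i
  show (if ε (i + n) then (l-1)/l^(i+n+1) else 0) = 1/l^n * (if ε (i + n) then (l-1)/l^(i+1) else 0)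
  have h1 : l - 1 ≠ 0 := by linarith
  have h2 : l ≠ 0 := by linarith
  split_ifs
  · rw [div_mul_div_comm, one_mul, ← pow_add, show n + (i + 1) = i + n + 1 by ring]
  · simp

lemma gv_tail_lb (hl : 2 < l) (n : ℕ) (ε : ℕ → Bool) : pref l n ε ≤ gv l ε := by
  have h := gv_tail hl n ε
  have h2 := gv_nonneg hl (shf n ε)
  have h3 : (0:ℝ) < l := by linarith
  nlinarith [pow_pos h3 n, mul_nonneg (le_of_lt (one_div_pos.mpr (pow_pos h3 n))) h2]

lemma gv_tail_ub (hl : 2 < l) (n : ℕ) (ε : ℕ → Bool) : gv l ε ≤ pref l n ε + 1/l^n := by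
  have h := gv_tail hl n ε
  have h2 := gv_le_one hl (shf n ε)
  have h3 : (0:ℝ) < l := by linarith
  have h4 : (0:ℝ) < 1/l^n := one_div_pos.mpr (pow_pos h3 n)
  nlinarith [gv_nonneg hl (shf n ε)]

lemma pref_congr (n : ℕ) {ε δ : ℕ → Bool} (h : ∀ i < n, ε i = δ i) :
    pref l n ε = pref l n δ := by
  unfold pref
  exact Finset.sum_congr rfl (fun i hi => by rw [h i (Finset.mem_range.mp hi)])

lemma pref_succ (n : ℕ) (ε : ℕ → Bool) :
    pref l (n+1) ε = pref l n ε + (if ε n then (l-1)/l^(n+1) else 0) := by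
  unfold pref
  rw [Finset.sum_range_succ]

lemma le_of_digit_false (hl : 2 < l) {ε : ℕ → Bool} {n : ℕ} (h : ε n = false) :
    gv l ε ≤ pref l n ε + 1/l^(n+1) := by
  have h1 := gv_tail_ub hl (n+1) ε
  rw [pref_succ, h] at h1
  simpa using h1

lemma ge_of_digit_true (hl : 2 < l) {ε : ℕ → Bool} {n : ℕ} (h : ε n = true) :
    pref l n ε + (l-1)/l^(n+1) ≤ gv l ε := by
  have h1 := gv_tail_lb hl (n+1) ε
  rw [pref_succ, h] at h1
  simpa using h1

/-- left endpoint of the central gap of the level-`n` cylinder of `ε` -/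
def pcode (n : ℕ) (ε : ℕ → Bool) : ℕ → Bool :=
  fun i => if i < n then ε i else if i = n then false else true

/-- right endpoint of the central gap of the level-`n` cylinder of `ε` -/
def qcode (n : ℕ) (ε : ℕ → Bool) : ℕ → Bool :=
  fun i => if i < n then ε i else if i = n then true else false

lemma gv_const_true (hl : 2 < l) : gv l (fun _ => true) = 1 := by
  rw [gv]
  rw [show (fun i : ℕ => if (fun _ => true) i then (l-1)/l^(i+1) else 0)
      = fun i : ℕ => (l-1)/l * (1/l)^i from funext fun i => by simp [term_eq hl]]
  exact tsum_geom_aux hl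

lemma gv_const_false : gv l (fun _ => false) = 0 := by
  simp [gv]

lemma gv_pcode (hl : 2 < l) (n : ℕ) (ε : ℕ → Bool) :
    gv l (pcode n ε) = pref l n ε + 1/l^(n+1) := by
  have ht := gv_tail hl (n+1) (pcode n ε)
  have hshf : shf (n+1) (pcode n ε) = fun _ => true := by
    funext i
    simp only [shf, pcode]
    rw [if_neg (by omega), if_neg (by omega)]
  rw [hshf, gv_const_true hl, mul_one] at ht
  have hdig : pcode n ε n = false := by simp [pcode]
  have hpc : pref l n (pcode n ε) = pref l n ε := pref_congr n (fun i hi => by simp [pcode, hi])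
  rw [ht, pref_succ, hdig, hpc]
  simp

lemma gv_qcode (hl : 2 < l) (n : ℕ) (ε : ℕ → Bool) :
    gv l (qcode n ε) = pref l n ε + (l-1)/l^(n+1) := by
  have ht := gv_tail hl (n+1) (qcode n ε)
  have hshf : shf (n+1) (qcode n ε) = fun _ => false := by
    funext i
    simp only [shf, qcode]
    rw [if_neg (by omega), if_neg (by omega)]
  rw [hshf, gv_const_false, mul_zero, add_zero] at ht
  have hdig : qcode n ε n = true := by simp [qcode]
  have hpc : pref l n (qcode n ε) = pref l n ε := pref_congr n (fun i hi => by simp [qcode, hi])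
  rw [ht, pref_succ, hdig, hpc]
  simp

/-- every code value avoids the open central gap of every cylinder -/
lemma gap_avoid (hl : 2 < l) (n : ℕ) (ε θ : ℕ → Bool) :
    gv l θ ≤ gv l (pcode n ε) ∨ gv l (qcode n ε) ≤ gv l θ := by
  have hl1 : (1:ℝ) ≤ l - 1 := by linarith
  have hlp : (0:ℝ) < l := by linarith
  by_cases hpre : ∀ i < n, θ i = ε i
  · cases hθn : θ n
    · left
      calc gv l θ ≤ pref l n θ + 1/l^(n+1) := le_of_digit_false hl hθn
        _ = pref l n ε + 1/l^(n+1) := by rw [pref_congr n hpre]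
        _ = gv l (pcode n ε) := (gv_pcode hl n ε).symm
    · right
      calc gv l (qcode n ε) = pref l n ε + (l-1)/l^(n+1) := gv_qcode hl n ε
        _ = pref l n θ + (l-1)/l^(n+1) := by rw [pref_congr n hpre]
        _ ≤ gv l θ := ge_of_digit_true hl hθn
  · push_neg at hpre
    have hex : ∃ m, θ m ≠ ε m ∧ m < n := by
      obtain ⟨m, hm1, hm2⟩ := hpre; exact ⟨m, hm2, hm1⟩
    classical
    set m := Nat.find hex with hm
    obtain ⟨hdiff, hmn⟩ := Nat.find_spec hex
    have hmin : ∀ i < m, θ i = ε i := by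
      intro i hi
      have := Nat.find_min hex hi
      push_neg at this
      by_contra hne
      exact absurd (this hne) (by omega)
    have h1m : (1:ℝ)/l^(m+1) ≤ (l-1)/l^(m+1) :=
      (div_le_div_iff_of_pos_right (pow_pos hlp (m+1))).mpr (by linarith)
    cases hθm : θ m <;> cases hεm : ε m
    · rw [hθm, hεm] at hdiff; exact absurd rfl hdiff
    · -- θ m = false, ε m = true : θ lies left of the cylinder
      left
      have hpd : pcode n ε m = true := by rw [pcode, if_pos hmn]; exact hεm
      have hpm : pref l m θ = pref l m (pcode n ε) :=
        pref_congr m (fun i hi => by rw [hmin i hi, pcode, if_pos (by omega)])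
      calc gv l θ ≤ pref l m θ + 1/l^(m+1) := le_of_digit_false hl hθm
        _ ≤ pref l m (pcode n ε) + (l-1)/l^(m+1) := by rw [hpm]; linarith
        _ ≤ gv l (pcode n ε) := ge_of_digit_true hl hpd
    · -- θ m = true, ε m = false : θ lies right of the cylinder
      right
      have hqd : qcode n ε m = false := by rw [qcode, if_pos hmn]; exact hεm
      have hpm : pref l m (qcode n ε) = pref l m θ :=
        pref_congr m (fun i hi => by rw [hmin i hi, qcode, if_pos (by omega)])
      calc gv l (qcode n ε) ≤ pref l m (qcode n ε) + 1/l^(m+1) := le_of_digit_false hl hqd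
        _ ≤ pref l m θ + (l-1)/l^(m+1) := by rw [hpm]; linarith
        _ ≤ gv l θ := ge_of_digit_true hl hθm
    · rw [hθm, hεm] at hdiff; exact absurd rfl hdiff

/-- if `gv θ < gv δ` then the codes first differ with `θ` going left, `δ` right -/
lemma first_diff (hl : 2 < l) {θ δ : ℕ → Bool} (h : gv l θ < gv l δ) :
    ∃ n, (∀ i < n, θ i = δ i) ∧ θ n = false ∧ δ n = true := by
  classical
  have hlp : (0:ℝ) < l := by linarith
  have hne : θ ≠ δ := by rintro rfl; exact lt_irrefl _ h
  have hex : ∃ m, θ m ≠ δ m := by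
    by_contra hc; push_neg at hc; exact hne (funext hc)
  set m := Nat.find hex with hm
  have hdiff := Nat.find_spec hex
  have hmin : ∀ i < m, θ i = δ i := by
    intro i hi
    have := Nat.find_min hex hi
    by_contra hne2
    exact this hne2
  refine ⟨m, hmin, ?_⟩
  have hpm : pref l m θ = pref l m δ := pref_congr m hmin
  cases hθm : θ m <;> cases hδm : δ m
  · rw [hθm, hδm] at hdiff; exact absurd rfl hdiff
  · exact ⟨rfl, rfl⟩
  · exfalso
    have h1 : pref l m θ + (l-1)/l^(m+1) ≤ gv l θ := ge_of_digit_true hl hθm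
    have h2 : gv l δ ≤ pref l m δ + 1/l^(m+1) := le_of_digit_false hl hδm
    have h3 : (1:ℝ)/l^(m+1) < (l-1)/l^(m+1) :=
      (div_lt_div_iff_of_pos_right (pow_pos hlp (m+1))).mpr (by linarith)
    rw [hpm] at h1
    linarith
  · rw [hθm, hδm] at hdiff; exact absurd rfl hdiff

section WithC

variable (hl : 2 < l) {C : Set ℝ}
variable (hCc : IsCompact C) (hne : C.Nonempty)
variable (heq : C = (fun x => x / l) '' C ∪ (fun x => x / l + (l - 1) / l) '' C)

/-- basic branch map -/
noncomputable def br (l : ℝ) (b : Bool) (y : ℝ) : ℝ := y / l + (if b then (l-1)/l else 0)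

include hl hCc hne heq

lemma subset_Icc : C ⊆ Icc 0 1 := by
  have hlp : (0:ℝ) < l := by linarith
  have hbdd := hCc.bddAbove
  have hbdd' := hCc.bddBelow
  have hM : sSup C ∈ C := hCc.sSup_mem hne
  have hm : sInf C ∈ C := hCc.sInf_mem hne
  have hMub : ∀ x ∈ C, x ≤ sSup C := fun x hx => le_csSup hbdd hx
  have hmlb : ∀ x ∈ C, sInf C ≤ x := fun x hx => csInf_le hbdd' hx
  set M := sSup C with hMdef
  set m' := sInf C with hmdef
  clear_value M m'
  have hM1 : M ≤ 1 := by
    have := hM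
    rw [heq] at this
    rcases this with ⟨y, hy, hxy⟩ | ⟨y, hy, hxy⟩
    · -- M = y / l with y ≤ M
      have hyM := hMub y hy
      simp only at hxy
      have hy2 : y = M * l := by field_simp at hxy; linarith
      have h4 : M * l ≤ M := by rw [← hy2]; exact hyM
      have hM0 : M ≤ 0 := by
        by_contra hc; push_neg at hc
        nlinarith [mul_pos hc (show (0:ℝ) < l - 1 by linarith)]
      linarith
    · have hyM := hMub y hy
      simp only at hxy
      have hy2 : y + (l - 1) = M * l := by field_simp at hxy; linarith
      have h4 : M * l ≤ M + l - 1 := by nlinarith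
      by_contra hc; push_neg at hc
      nlinarith [mul_pos (show (0:ℝ) < M - 1 by linarith) (show (0:ℝ) < l - 1 by linarith)]
  have hm0 : 0 ≤ m' := by
    have := hm
    rw [heq] at this
    rcases this with ⟨y, hy, hxy⟩ | ⟨y, hy, hxy⟩
    · have hym := hmlb y hy
      simp only at hxy
      have hy2 : y = m' * l := by field_simp at hxy; linarith
      have h4 : m' ≤ m' * l := by rw [← hy2]; exact hym
      by_contra hc; push_neg at hc
      nlinarith [mul_pos (show (0:ℝ) < -m' by linarith) (show (0:ℝ) < l - 1 by linarith)]
    · have hym := hmlb y hy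
      simp only at hxy
      have hy2 : y + (l - 1) = m' * l := by field_simp at hxy; linarith
      have h4 : m' + l - 1 ≤ m' * l := by nlinarith
      by_contra hc; push_neg at hc
      nlinarith [mul_pos (show (0:ℝ) < 1 - m' by linarith) (show (0:ℝ) < l - 1 by linarith)]
  exact fun x hx => ⟨le_trans hm0 (hmlb x hx), le_trans (hMub x hx) hM1⟩

lemma br_mem (b : Bool) {y : ℝ} (hy : y ∈ C) : br l b y ∈ C := by
  rw [heq]
  cases b
  · left; exact ⟨y, hy, by simp [br]⟩
  · right; exact ⟨y, hy, by simp [br]⟩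

lemma mem_br (x : ℝ) (hx : x ∈ C) : ∃ b y, y ∈ C ∧ x = br l b y := by
  rw [heq] at hx
  rcases hx with ⟨y, hy, hxy⟩ | ⟨y, hy, hxy⟩
  · exact ⟨false, y, hy, by simp [br, ← hxy]⟩
  · exact ⟨true, y, hy, by simp [br, ← hxy]⟩

end WithC

/-- cons of a bit onto a code -/
def bcons (b : Bool) (ε : ℕ → Bool) : ℕ → Bool := fun n => Nat.casesOn n b ε

lemma gv_bcons (hl : 2 < l) (b : Bool) (ε : ℕ → Bool) :
    gv l (bcons b ε) = br l b (gv l ε) := by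
  have hlp : (0:ℝ) < l := by linarith
  have ht := gv_tail hl 1 (bcons b ε)
  have hshf : shf 1 (bcons b ε) = ε := funext fun i => rfl
  have hpref : pref l 1 (bcons b ε) = (if b then (l-1)/l else 0) := by
    rw [pref, Finset.sum_range_one]
    simp [bcons]
  rw [hshf, hpref] at ht
  rw [ht, br]
  rw [pow_one]
  ring

section WithC2

variable {C : Set ℝ}

lemma inv_pow_tendsto (hl : 2 < l) : Filter.Tendsto (fun n : ℕ => 1/l^n) atTop (nhds 0) := by
  have hlp : (0:ℝ) < l := by linarith
  have h1 : ∀ n : ℕ, (1:ℝ)/l^n = (1/l)^n := fun n => by rw [div_pow, one_pow]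
  simp only [h1]
  exact tendsto_pow_atTop_nhds_zero_of_lt_one (by positivity) (by rw [div_lt_one hlp]; linarith)

lemma eq_of_abs_le_pow (hl : 2 < l) {d : ℝ} (h : ∀ n : ℕ, |d| ≤ 1/l^n) : d = 0 := by
  have h0 : |d| ≤ 0 := ge_of_tendsto (inv_pow_tendsto hl) (Filter.Eventually.of_forall h)
  have := abs_nonneg d
  have : |d| = 0 := le_antisymm h0 this
  exact abs_eq_zero.mp this

variable (hl : 2 < l)
variable (hCc : IsCompact C) (hne : C.Nonempty)
variable (heq : C = (fun x => x / l) '' C ∪ (fun x => x / l + (l - 1) / l) '' C)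

include hl hCc hne heq

/-- iterated branch point -/
noncomputable def itbr (l : ℝ) : ℕ → (ℕ → Bool) → ℝ → ℝ
  | 0, _, y => y
  | (n+1), ε, y => br l (ε 0) (itbr l n (shf 1 ε) y)

omit hCc hne heq in
lemma abs_gv_sub_itbr (y : ℝ) (hy : y ∈ Icc (0:ℝ) 1) :
    ∀ n ε, |gv l ε - itbr l n ε y| ≤ 1/l^n := by
  have hlp : (0:ℝ) < l := by linarith
  intro n
  induction n with
  | zero =>
    intro ε
    simp only [itbr, pow_zero]
    have h1 := gv_nonneg hl ε
    have h2 := gv_le_one hl ε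
    rw [abs_le]
    constructor <;> [linarith [hy.2]; linarith [hy.1]]
  | succ n ih =>
    intro ε
    have hcons : ε = bcons (ε 0) (shf 1 ε) := by
      funext i; cases i <;> rfl
    have h1 : gv l ε = br l (ε 0) (gv l (shf 1 ε)) := by
      conv_lhs => rw [hcons]
      exact gv_bcons hl _ _
    have h2 : itbr l (n+1) ε y = br l (ε 0) (itbr l n (shf 1 ε) y) := rfl
    rw [h1, h2]
    have h3 : br l (ε 0) (gv l (shf 1 ε)) - br l (ε 0) (itbr l n (shf 1 ε) y)
        = (gv l (shf 1 ε) - itbr l n (shf 1 ε) y) / l := by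
      simp only [br]; ring
    rw [h3, abs_div, abs_of_pos hlp]
    have h4 := ih (shf 1 ε)
    have h5 : |gv l (shf 1 ε) - itbr l n (shf 1 ε) y| * l^n ≤ 1 :=
      (le_div_iff₀ (pow_pos hlp n)).mp (by simpa using h4)
    rw [div_le_div_iff₀ (by positivity) (by positivity : (0:ℝ) < l^(n+1))]
    rw [pow_succ]
    nlinarith [abs_nonneg (gv l (shf 1 ε) - itbr l n (shf 1 ε) y), pow_pos hlp n, hlp]

lemma itbr_mem (y : ℝ) (hy : y ∈ C) : ∀ n ε, itbr l n ε y ∈ C := by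
  intro n
  induction n with
  | zero => intro ε; exact hy
  | succ n ih => intro ε; exact br_mem hl hCc hne heq (ε 0) (ih (shf 1 ε))

lemma gv_mem (ε : ℕ → Bool) : gv l ε ∈ C := by
  obtain ⟨y, hy⟩ := id hne
  have hy01 : y ∈ Icc (0:ℝ) 1 := subset_Icc hl hCc hne heq hy
  have hcl : IsClosed C := hCc.isClosed
  rw [← hcl.closure_eq]
  rw [Metric.mem_closure_iff]
  intro δ hδ
  have hlp : (0:ℝ) < l := by linarith
  obtain ⟨n, hn⟩ := exists_pow_lt_of_lt_one hδ (show 1/l < 1 by rw [div_lt_one hlp]; linarith)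
  refine ⟨itbr l n ε y, itbr_mem hl hCc hne heq y hy n ε, ?_⟩
  have := abs_gv_sub_itbr hl y hy01 n ε
  rw [Real.dist_eq]
  calc |gv l ε - itbr l n ε y| ≤ 1/l^n := this
    _ = (1/l)^n := by rw [div_pow, one_pow]
    _ < δ := hn

/-- every point of C has a code -/
lemma mem_gv (x : ℝ) (hx : x ∈ C) : ∃ ε, x = gv l ε := by
  classical
  have hstep : ∀ z : C, ∃ p : Bool × C, (z:ℝ) = br l p.1 p.2 := by
    intro z
    obtain ⟨b, y, hy, hz⟩ := mem_br hl hCc hne heq z z.2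
    exact ⟨(b, ⟨y, hy⟩), hz⟩
  choose step hstep using hstep
  let nxt : C → C := fun z => (step z).2
  let code : C → ℕ → Bool := fun z n => (step (nxt^[n] z)).1
  have hcode_cons : ∀ z : C, code z = bcons ((step z).1) (code (nxt z)) := by
    intro z
    funext i
    cases i with
    | zero => rfl
    | succ i =>
      show (step (nxt^[i+1] z)).1 = (step (nxt^[i] (nxt z))).1
      rw [Function.iterate_succ_apply]
  have key : ∀ n (z : C), |(z:ℝ) - gv l (code z)| ≤ 1/l^n := by
    intro n
    induction n with
    | zero =>
      intro z
      have h1 := subset_Icc hl hCc hne heq z.2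
      have h2 := gv_nonneg hl (code z)
      have h3 := gv_le_one hl (code z)
      simp only [pow_zero]
      rw [abs_le]
      constructor <;> linarith [h1.1, h1.2, h2, h3]
    | succ n ih =>
      intro z
      have hlp : (0:ℝ) < l := by linarith
      have h1 : (z:ℝ) = br l ((step z).1) (nxt z) := hstep z
      have h2 : gv l (code z) = br l ((step z).1) (gv l (code (nxt z))) := by
        rw [hcode_cons z]
        exact gv_bcons hl _ _
      have h3 : (z:ℝ) - gv l (code z) = ((nxt z : ℝ) - gv l (code (nxt z))) / l := by
        rw [h1, h2]; simp only [br]; ring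
      rw [h3, abs_div, abs_of_pos hlp]
      have h4 := ih (nxt z)
      have h5 : |(nxt z : ℝ) - gv l (code (nxt z))| * l^n ≤ 1 :=
        (le_div_iff₀ (pow_pos hlp n)).mp (by simpa using h4)
      rw [div_le_div_iff₀ (by positivity) (by positivity : (0:ℝ) < l^(n+1))]
      rw [pow_succ]
      nlinarith [abs_nonneg ((nxt z : ℝ) - gv l (code (nxt z))), pow_pos hlp n, hlp]
  refine ⟨code ⟨x, hx⟩, ?_⟩
  have := eq_of_abs_le_pow hl (fun n => key n ⟨x, hx⟩)
  linarith [abs_nonneg (x - gv l (code ⟨x, hx⟩))]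

lemma C_eq_range : C = Set.range (gv l) := by
  ext x
  constructor
  · intro hx
    obtain ⟨ε, hε⟩ := mem_gv hl hCc hne heq x hx
    exact ⟨ε, hε.symm⟩
  · rintro ⟨ε, rfl⟩
    exact gv_mem hl hCc hne heq ε

end WithC2

section Gaps

variable {C : Set ℝ}
variable (hl : 2 < l)
variable (hCc : IsCompact C) (hne : C.Nonempty)
variable (heq : C = (fun x => x / l) '' C ∪ (fun x => x / l + (l - 1) / l) '' C)

include hl hCc hne heq

/-- gap lengths are quantized -/
lemma gap_length {a b : ℝ} (ha : a ∈ C) (hb : b ∈ C) (hab : a < b)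
    (hgap : Ioo a b ∩ C = ∅) : ∃ n : ℕ, b - a = (l-2)/l^(n+1) := by
  have hlp : (0:ℝ) < l := by linarith
  have hrange := C_eq_range hl hCc hne heq
  obtain ⟨θ, hθ⟩ := mem_gv hl hCc hne heq a ha
  obtain ⟨δ, hδ⟩ := mem_gv hl hCc hne heq b hb
  obtain ⟨n, hpre, hθn, hδn⟩ := first_diff (θ := θ) (δ := δ) hl
    (by rw [← hθ, ← hδ]; exact hab)
  refine ⟨n, ?_⟩
  set p := gv l (pcode n θ) with hp
  set q := gv l (qcode n θ) with hq
  have hpC : p ∈ C := gv_mem hl hCc hne heq _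
  have hqC : q ∈ C := gv_mem hl hCc hne heq _
  have hpv : p = pref l n θ + 1/l^(n+1) := gv_pcode hl n θ
  have hqv : q = pref l n θ + (l-1)/l^(n+1) := gv_qcode hl n θ
  have hap : a ≤ p := by
    rw [hθ, hpv]; exact le_of_digit_false hl hθn
  have hqb : q ≤ b := by
    rw [hδ, hqv, pref_congr n hpre]; exact ge_of_digit_true hl hδn
  have hpq : p < q := by
    rw [hpv, hqv]
    have : (1:ℝ)/l^(n+1) < (l-1)/l^(n+1) :=
      (div_lt_div_iff_of_pos_right (pow_pos hlp (n+1))).mpr (by linarith)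
    linarith
  have hpa : p = a := by
    by_contra hpa
    have h1 : p ∈ Ioo a b := ⟨lt_of_le_of_ne hap (Ne.symm hpa), lt_of_lt_of_le hpq hqb⟩
    exact absurd (mem_inter h1 hpC) (by rw [hgap]; exact notMem_empty p)
  have hqb' : q = b := by
    by_contra hqb'
    have h1 : q ∈ Ioo a b := ⟨lt_of_le_of_lt hap hpq, lt_of_le_of_ne hqb hqb'⟩
    exact absurd (mem_inter h1 hqC) (by rw [hgap]; exact notMem_empty q)
  have h5 : (l-1)/l^(n+1) - 1/l^(n+1) = (l-2)/l^(n+1) := by rw [← sub_div]; ring_nf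
  rw [← hpa, ← hqb', hpv, hqv]
  linarith

/-- bridge lemma : between any two points of C there is a definite gap -/
lemma bridge {a b : ℝ} (ha : a ∈ C) (hb : b ∈ C) (hab : a < b) :
    ∃ p q, p ∈ C ∧ q ∈ C ∧ a ≤ p ∧ p < q ∧ q ≤ b ∧ Ioo p q ∩ C = ∅ ∧
      (p - a) + (b - q) ≤ (2/l) * (b - a) := by
  have hlp : (0:ℝ) < l := by linarith
  obtain ⟨θ, hθ⟩ := mem_gv hl hCc hne heq a ha
  obtain ⟨δ, hδ⟩ := mem_gv hl hCc hne heq b hb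
  obtain ⟨n, hpre, hθn, hδn⟩ := first_diff (θ := θ) (δ := δ) hl
    (by rw [← hθ, ← hδ]; exact hab)
  set p := gv l (pcode n θ) with hp
  set q := gv l (qcode n θ) with hq
  have hpC : p ∈ C := gv_mem hl hCc hne heq _
  have hqC : q ∈ C := gv_mem hl hCc hne heq _
  have hpv : p = pref l n θ + 1/l^(n+1) := gv_pcode hl n θ
  have hqv : q = pref l n θ + (l-1)/l^(n+1) := gv_qcode hl n θ
  have hap : a ≤ p := by rw [hθ, hpv]; exact le_of_digit_false hl hθn
  have hqb : q ≤ b := by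
    rw [hδ, hqv, pref_congr n hpre]; exact ge_of_digit_true hl hδn
  have hpq : p < q := by
    rw [hpv, hqv]
    have : (1:ℝ)/l^(n+1) < (l-1)/l^(n+1) :=
      (div_lt_div_iff_of_pos_right (pow_pos hlp (n+1))).mpr (by linarith)
    linarith
  refine ⟨p, q, hpC, hqC, hap, hpq, hqb, ?_, ?_⟩
  · -- no point of C in the open gap
    ext c
    simp only [mem_inter_iff, mem_Ioo, mem_empty_iff_false, iff_false, not_and]
    rintro ⟨hc1, hc2⟩ hcC
    obtain ⟨ρ, hρ⟩ := mem_gv hl hCc hne heq c hcC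
    rcases gap_avoid hl n θ ρ with h | h
    · rw [← hρ, ← hp] at h; exact absurd (lt_of_lt_of_le hc1 h) (lt_irrefl _)
    · rw [← hρ, ← hq] at h; exact absurd (lt_of_lt_of_le hc2 (by linarith)) (lt_irrefl _)
  · -- length estimate
    have hbn : b ≤ pref l n θ + 1/l^n := by
      have h6 := gv_tail_ub hl n δ
      rw [pref_congr n (fun i hi => (hpre i hi).symm)] at h6
      rw [hδ]; exact h6
    have han : pref l n θ ≤ a := by rw [hθ]; exact gv_tail_lb hl n θ
    have hba : b - a ≤ 1/l^n := by linarith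
    have hqp : q - p = (l-2)/l^(n+1) := by
      have h5 : (l-1)/l^(n+1) - 1/l^(n+1) = (l-2)/l^(n+1) := by rw [← sub_div]; ring_nf
      rw [hpv, hqv]; linarith
    have hgl : ((l-2)/l) * (b - a) ≤ q - p := by
      have h1 : ((l-2)/l) * (1/l^n) = (l-2)/l^(n+1) := by
        rw [div_mul_div_comm, mul_one, ← pow_succ']
      rw [hqp, ← h1]
      have h2 : (0:ℝ) < (l-2)/l := div_pos (by linarith) hlp
      exact mul_le_mul_of_nonneg_left hba h2.le
    have hid : (l-2)/l * (b-a) + (2/l) * (b-a) = b - a := by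
      have : l ≠ 0 := by linarith
      field_simp
      ring
    linarith [hgl]

/-- arbitrarily small gaps near every point of C -/
lemma gaps_near (x : ℝ) (hx : x ∈ C) (n : ℕ) :
    ∃ p q, p ∈ C ∧ q ∈ C ∧ p < q ∧ Ioo p q ∩ C = ∅ ∧
      q - p = (l-2)/l^(n+1) ∧ |p - x| ≤ 1/l^n ∧ |q - x| ≤ 1/l^n := by
  have hlp : (0:ℝ) < l := by linarith
  obtain ⟨θ, hθ⟩ := mem_gv hl hCc hne heq x hx
  set p := gv l (pcode n θ) with hp
  set q := gv l (qcode n θ) with hq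
  have hpC : p ∈ C := gv_mem hl hCc hne heq _
  have hqC : q ∈ C := gv_mem hl hCc hne heq _
  have hpv : p = pref l n θ + 1/l^(n+1) := gv_pcode hl n θ
  have hqv : q = pref l n θ + (l-1)/l^(n+1) := gv_qcode hl n θ
  have hpq : p < q := by
    rw [hpv, hqv]
    have : (1:ℝ)/l^(n+1) < (l-1)/l^(n+1) :=
      (div_lt_div_iff_of_pos_right (pow_pos hlp (n+1))).mpr (by linarith)
    linarith
  have hxl : pref l n θ ≤ x := by rw [hθ]; exact gv_tail_lb hl n θ
  have hxu : x ≤ pref l n θ + 1/l^n := by rw [hθ]; exact gv_tail_ub hl n θ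
  have hbound : ∀ y : ℝ, pref l n θ ≤ y → y ≤ pref l n θ + 1/l^n → |y - x| ≤ 1/l^n := by
    intro y h1 h2
    rw [abs_le]; constructor <;> linarith
  have hple : (1:ℝ)/l^(n+1) ≤ 1/l^n := by
    rw [div_le_div_iff₀ (by positivity) (by positivity)]
    rw [one_mul, one_mul, pow_succ]
    nlinarith [pow_pos hlp n]
  refine ⟨p, q, hpC, hqC, hpq, ?_, ?_, ?_, ?_⟩
  · ext c
    simp only [mem_inter_iff, mem_Ioo, mem_empty_iff_false, iff_false, not_and]
    rintro ⟨hc1, hc2⟩ hcC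
    obtain ⟨ρ, hρ⟩ := mem_gv hl hCc hne heq c hcC
    rcases gap_avoid hl n θ ρ with h | h
    · rw [← hρ, ← hp] at h; exact absurd (lt_of_lt_of_le hc1 h) (lt_irrefl _)
    · rw [← hρ, ← hq] at h; exact absurd (lt_of_lt_of_le hc2 (by linarith)) (lt_irrefl _)
  · have h5 : (l-1)/l^(n+1) - 1/l^(n+1) = (l-2)/l^(n+1) := by rw [← sub_div]; ring_nf
    rw [hpv, hqv]; linarith
  · refine hbound p ?_ ?_
    · rw [hpv]; linarith [one_div_pos.mpr (pow_pos hlp (n+1))]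
    · rw [hpv]; linarith
  · have h1 : (l-1)/l^(n+1) ≤ 1/l^n := by
      rw [div_le_div_iff₀ (by positivity) (by positivity), one_mul, pow_succ]
      nlinarith [pow_pos hlp n]
    refine hbound q ?_ ?_
    · rw [hqv]; linarith [div_nonneg (show (0:ℝ) ≤ l-1 by linarith) (pow_pos hlp (n+1)).le]
    · rw [hqv]; linarith

end Gaps

section Analysis

lemma deriv_ne_zero {φ ψ : ℝ → ℝ} (hφ1 : ContDiff ℝ 1 φ) (hψ1 : ContDiff ℝ 1 ψ)
    (hli : Function.LeftInverse ψ φ) (x : ℝ) : deriv φ x ≠ 0 := by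
  have h1 : HasDerivAt φ (deriv φ x) x := (hφ1.differentiable one_ne_zero x).hasDerivAt
  have h2 : HasDerivAt ψ (deriv ψ (φ x)) (φ x) := (hψ1.differentiable one_ne_zero (φ x)).hasDerivAt
  have h3 : HasDerivAt (ψ ∘ φ) (deriv ψ (φ x) * deriv φ x) x := h2.comp x h1
  have h4 : (ψ ∘ φ) = id := funext hli
  rw [h4] at h3
  have h5 : deriv ψ (φ x) * deriv φ x = 1 := h3.unique (hasDerivAt_id x)
  intro h
  rw [h, mul_zero] at h5
  exact zero_ne_one h5

lemma gap_image {C : Set ℝ} {φ : ℝ → ℝ} (hmono : StrictMono φ) (hpres : φ '' C = C)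
    {p q : ℝ} (hp : p ∈ C) (hq : q ∈ C) (hpq : p < q) (hgap : Ioo p q ∩ C = ∅) :
    φ p ∈ C ∧ φ q ∈ C ∧ φ p < φ q ∧ Ioo (φ p) (φ q) ∩ C = ∅ := by
  refine ⟨hpres ▸ mem_image_of_mem φ hp, hpres ▸ mem_image_of_mem φ hq, hmono hpq, ?_⟩
  ext c
  simp only [mem_inter_iff, mem_Ioo, mem_empty_iff_false, iff_false, not_and]
  rintro ⟨hc1, hc2⟩ hcC
  rw [← hpres] at hcC
  obtain ⟨y, hyC, hyc⟩ := hcC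
  rw [← hyc] at hc1 hc2
  have h1 : p < y := hmono.lt_iff_lt.mp hc1
  have h2 : y < q := hmono.lt_iff_lt.mp hc2
  have : y ∈ Ioo p q ∩ C := ⟨⟨h1, h2⟩, hyC⟩
  rw [hgap] at this
  exact this

/-- the slope of `φ` across a gap is an integer power of `l` -/
lemma gap_slope (hl : 2 < l) {C : Set ℝ}
    (hCc : IsCompact C) (hne : C.Nonempty)
    (heq : C = (fun x => x / l) '' C ∪ (fun x => x / l + (l - 1) / l) '' C)
    {φ : ℝ → ℝ} (hmono : StrictMono φ) (hpres : φ '' C = C)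
    {p q : ℝ} (hp : p ∈ C) (hq : q ∈ C) (hpq : p < q) (hgap : Ioo p q ∩ C = ∅) :
    ∃ k : ℤ, φ q - φ p = l ^ k * (q - p) := by
  obtain ⟨hφp, hφq, hφlt, hφgap⟩ := gap_image hmono hpres hp hq hpq hgap
  obtain ⟨n, hn⟩ := gap_length hl hCc hne heq hp hq hpq hgap
  obtain ⟨m, hm⟩ := gap_length hl hCc hne heq hφp hφq hφlt hφgap
  refine ⟨(n : ℤ) - m, ?_⟩
  have hlp : (0:ℝ) < l := by linarith
  have hlne : (l:ℝ) ≠ 0 := ne_of_gt hlp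
  rw [hm, hn]
  rw [show ((n:ℤ) - m) = ((n:ℤ)+1) - ((m:ℤ)+1) by ring, zpow_sub₀ hlne]
  rw [show ((n:ℤ)+1) = ((n+1 : ℕ) : ℤ) by push_cast; ring,
      show ((m:ℤ)+1) = ((m+1 : ℕ) : ℤ) by push_cast; ring, zpow_natCast, zpow_natCast]
  have h1 : (l:ℝ)^(n+1) ≠ 0 := pow_ne_zero _ hlne
  have h2 : (l:ℝ)^(m+1) ≠ 0 := pow_ne_zero _ hlne
  field_simp

/-- two integer powers of `l` within a factor `√l` of each other are equal -/
lemma zpow_unique (hl : 2 < l) {j k : ℤ} (h1 : l ^ j / Real.sqrt l < l ^ k)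
    (h2 : (l:ℝ) ^ k < l ^ j * Real.sqrt l) : k = j := by
  have hlp : (0:ℝ) < l := by linarith
  have hl1 : (1:ℝ) < l := by linarith
  have hs1 : 1 < Real.sqrt l := by
    rw [show (1:ℝ) = Real.sqrt 1 by simp]
    exact Real.sqrt_lt_sqrt (by norm_num) hl1
  have hsl : Real.sqrt l < l := by
    nlinarith [Real.sq_sqrt hlp.le, Real.sqrt_nonneg l]
  have hjp : (0:ℝ) < l ^ j := zpow_pos hlp j
  by_contra hne
  rcases lt_or_gt_of_ne hne with h | h
  · have hk1 : (k:ℤ) ≤ j - 1 := by omega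
    have h3 : (l:ℝ) ^ k ≤ l ^ (j-1) := zpow_le_zpow_right₀ hl1.le hk1
    have h4 : (l:ℝ) ^ (j-1) = l ^ j / l := by
      rw [zpow_sub₀ (ne_of_gt hlp), zpow_one]
    rw [h4] at h3
    have h5 : l ^ j / l < l ^ j / Real.sqrt l :=
      div_lt_div_of_pos_left hjp (by linarith) hsl
    linarith
  · have hk1 : j + 1 ≤ k := by omega
    have h3 : (l:ℝ) ^ (j+1) ≤ l ^ k := zpow_le_zpow_right₀ hl1.le hk1
    have h4 : (l:ℝ) ^ (j+1) = l ^ j * l := by rw [zpow_add₀ (ne_of_gt hlp), zpow_one]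
    rw [h4] at h3
    nlinarith

lemma mvt_slope {φ : ℝ → ℝ} (hφ1 : ContDiff ℝ 1 φ) {a b : ℝ} (hab : a < b) :
    ∃ ξ ∈ Ioo a b, deriv φ ξ = (φ b - φ a) / (b - a) :=
  exists_deriv_eq_slope φ hab (hφ1.continuous.continuousOn)
    (fun x _ => ((hφ1.differentiable one_ne_zero) x).differentiableWithinAt)

/-- the derivative of `φ` at points of `C` is an integer power of `l` -/
lemma deriv_zpow (hl : 2 < l) {C : Set ℝ}
    (hCc : IsCompact C) (hne : C.Nonempty)
    (heq : C = (fun x => x / l) '' C ∪ (fun x => x / l + (l - 1) / l) '' C)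
    {φ ψ : ℝ → ℝ} (hφ1 : ContDiff ℝ 1 φ) (hψ1 : ContDiff ℝ 1 ψ)
    (hli : Function.LeftInverse ψ φ)
    (hmono : StrictMono φ) (hpres : φ '' C = C)
    (x : ℝ) (hx : x ∈ C) : ∃ j : ℤ, deriv φ x = l ^ j := by
  have hlp : (0:ℝ) < l := by linarith
  have hl1 : (1:ℝ) < l := by linarith
  have key : ∀ n : ℕ, ∃ (ξ : ℝ) (k : ℤ), |ξ - x| ≤ 1/l^n ∧ deriv φ ξ = l ^ k := by
    intro n
    obtain ⟨p, q, hp, hq, hpq, hgap, _, hpx, hqx⟩ := gaps_near hl hCc hne heq x hx n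
    obtain ⟨k, hk⟩ := gap_slope hl hCc hne heq hmono hpres hp hq hpq hgap
    obtain ⟨ξ, hξ, hslope⟩ := mvt_slope hφ1 hpq
    refine ⟨ξ, k, ?_, ?_⟩
    · rw [abs_le] at hpx hqx ⊢
      constructor <;> [linarith [hξ.1.le, hpx.1]; linarith [hξ.2.le, hqx.2]]
    · have hqp : q - p ≠ 0 := sub_ne_zero.mpr (ne_of_gt hpq)
      rw [hslope, hk, mul_div_assoc, div_self hqp, mul_one]
  choose ξ k hξx hk using key
  have hξt : Filter.Tendsto ξ atTop (nhds x) := by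
    rw [tendsto_iff_dist_tendsto_zero]
    apply squeeze_zero (fun n => dist_nonneg) (fun n => ?_) (inv_pow_tendsto hl)
    rw [Real.dist_eq]; exact hξx n
  have hcont : Continuous (deriv φ) := hφ1.continuous_deriv le_rfl
  have hLt : Filter.Tendsto (fun n => deriv φ (ξ n)) atTop (nhds (deriv φ x)) :=
    (hcont.continuousAt.tendsto).comp hξt
  set L := deriv φ x with hL
  have hLne : L ≠ 0 := deriv_ne_zero hφ1 hψ1 hli x
  have hkpos : ∀ n, (0:ℝ) < l ^ (k n) := fun n => zpow_pos hlp _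
  have hLt2 : Filter.Tendsto (fun n => (l:ℝ) ^ (k n)) atTop (nhds L) := by
    apply hLt.congr
    intro n; rw [hk n]
  have hLpos : 0 < L := by
    rcases lt_trichotomy 0 L with h | h | h
    · exact h
    · exact absurd h.symm hLne
    · exfalso
      have := ge_of_tendsto hLt2 (Filter.Eventually.of_forall (fun n => (hkpos n).le))
      linarith
  have hlogl : (0:ℝ) < Real.log l := Real.log_pos hl1
  have hklim : Filter.Tendsto (fun n => (k n : ℝ)) atTop
      (nhds (Real.log L / Real.log l)) := by
    have h1 : Filter.Tendsto (fun n => Real.log ((l:ℝ) ^ (k n))) atTop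
        (nhds (Real.log L)) := ((Real.continuousAt_log hLne).tendsto).comp hLt2
    have h2 : (fun n => Real.log ((l:ℝ) ^ (k n))) = fun n => (k n : ℝ) * Real.log l :=
      funext fun n => Real.log_zpow l (k n)
    rw [h2] at h1
    have h3 := h1.div_const (Real.log l)
    have h4 : (fun n => (k n : ℝ) * Real.log l / Real.log l) = fun n => (k n : ℝ) := by
      funext n; field_simp
    rw [h4] at h3
    exact h3
  set t := Real.log L / Real.log l
  obtain ⟨N, hN⟩ := (Metric.tendsto_atTop.mp hklim) (1/2) (by norm_num)
  have hkconst : ∀ n ≥ N, k n = k N := by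
    intro n hn
    have h1 := hN n hn
    have h2 := hN N le_rfl
    rw [Real.dist_eq] at h1 h2
    have h3 : |(k n : ℝ) - (k N : ℝ)| < 1 := by
      have h5 := abs_sub_le ((k n : ℝ)) t ((k N : ℝ))
      rw [abs_sub_comm t ((k N:ℝ))] at h5
      linarith
    have h4 : |k n - k N| < 1 := by
      have h6 : |((k n - k N : ℤ) : ℝ)| < 1 := by push_cast; exact h3
      exact_mod_cast h6
    have h7 : (0:ℤ) ≤ |k n - k N| := abs_nonneg _
    have h8 : |k n - k N| = 0 := by omega
    have := abs_eq_zero.mp h8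
    omega
  refine ⟨k N, ?_⟩
  have hconst : Filter.Tendsto (fun n => (l:ℝ) ^ (k n)) atTop (nhds ((l:ℝ) ^ (k N))) := by
    apply Filter.Tendsto.congr' ?_ tendsto_const_nhds
    filter_upwards [Filter.eventually_atTop.mpr ⟨N, fun n hn => hkconst n hn⟩] with n hn
    rw [hn]
  exact tendsto_nhds_unique hLt2 hconst

/-- Main local rigidity: near each point of `C`, `φ` is affine on `C` with slope `l^j`. -/
lemma local_affine (hl : 2 < l) {C : Set ℝ}
    (hCc : IsCompact C) (hne : C.Nonempty)
    (heq : C = (fun x => x / l) '' C ∪ (fun x => x / l + (l - 1) / l) '' C)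
    {φ ψ : ℝ → ℝ} (hφ1 : ContDiff ℝ 1 φ) (hψ1 : ContDiff ℝ 1 ψ)
    (hli : Function.LeftInverse ψ φ)
    (hmono : StrictMono φ) (hpres : φ '' C = C)
    (x : ℝ) (hx : x ∈ C) :
    ∃ δ : ℝ, 0 < δ ∧ ∃ j : ℤ, ∀ a b, a ∈ C → b ∈ C → |a - x| ≤ δ → |b - x| ≤ δ →
      φ b - φ a = l ^ j * (b - a) := by
  have hlp : (0:ℝ) < l := by linarith
  have hl1 : (1:ℝ) < l := by linarith
  obtain ⟨j, hj⟩ := deriv_zpow hl hCc hne heq hφ1 hψ1 hli hmono hpres x hx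
  set s := Real.sqrt l with hs
  have hs1 : 1 < s := by
    rw [hs, show (1:ℝ) = Real.sqrt 1 by simp]
    exact Real.sqrt_lt_sqrt (by norm_num) hl1
  have hjp : (0:ℝ) < l ^ j := zpow_pos hlp j
  have hcont : Continuous (deriv φ) := hφ1.continuous_deriv le_rfl
  set U : Set ℝ := (deriv φ) ⁻¹' (Ioo (l^j/s) (l^j*s)) with hU
  have hUopen : IsOpen U := isOpen_Ioo.preimage hcont
  have hxU : x ∈ U := by
    rw [hU, mem_preimage, mem_Ioo, hj]
    constructor
    · rw [div_lt_iff₀ (by linarith)]; nlinarith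
    · nlinarith
  obtain ⟨ε, hε, hball⟩ := Metric.isOpen_iff.mp hUopen x hxU
  refine ⟨ε/2, by linarith, j, ?_⟩
  have hD : ∀ t, |t - x| ≤ ε/2 → l^j/s < deriv φ t ∧ deriv φ t < l^j*s := by
    intro t ht
    have : t ∈ U := hball (by rw [Metric.mem_ball, Real.dist_eq]; linarith)
    rw [hU, mem_preimage, mem_Ioo] at this
    exact this
  set K := l^j * s + l^j with hK
  have hKpos : 0 < K := by positivity
  -- the inductive contraction estimate
  have key : ∀ kk : ℕ, ∀ a b, a ∈ C → b ∈ C → |a - x| ≤ ε/2 → |b - x| ≤ ε/2 → a ≤ b →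
      |φ b - φ a - l^j * (b - a)| ≤ K * (2/l)^kk * (b - a) := by
    intro kk
    induction kk with
    | zero =>
      intro a b ha hb hax hbx hab
      rcases eq_or_lt_of_le hab with rfl | hab'
      · simp
      · obtain ⟨ξ, hξ, hsl⟩ := mvt_slope hφ1 hab'
        have hξx : |ξ - x| ≤ ε/2 := by
          rw [abs_le] at hax hbx ⊢
          constructor <;> [linarith [hξ.1.le, hax.1]; linarith [hξ.2.le, hbx.2]]
        obtain ⟨hd1, hd2⟩ := hD ξ hξx
        have hba : (0:ℝ) < b - a := by linarith
        have hphi : φ b - φ a = deriv φ ξ * (b - a) := by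
          rw [hsl]; field_simp
        rw [hphi, pow_zero, mul_one]
        have h1 : deriv φ ξ * (b-a) - l^j * (b-a) = (deriv φ ξ - l^j) * (b-a) := by ring
        rw [h1, abs_mul, abs_of_pos hba]
        apply mul_le_mul_of_nonneg_right ?_ hba.le
        rw [abs_le]
        have h2 : 0 < l^j/s := by positivity
        constructor <;> nlinarith
    | succ kk ih =>
      intro a b ha hb hax hbx hab
      rcases eq_or_lt_of_le hab with rfl | hab'
      · simp
      · obtain ⟨p, q, hpC, hqC, hap, hpq, hqb, hgapC, hlen⟩ :=
          bridge hl hCc hne heq ha hb hab'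
        have hpx : |p - x| ≤ ε/2 := by
          rw [abs_le] at hax hbx ⊢
          constructor <;> [linarith [hap, hax.1]; linarith [hqb, hpq.le, hbx.2]]
        have hqx : |q - x| ≤ ε/2 := by
          rw [abs_le] at hax hbx ⊢
          constructor <;> [linarith [hap, hpq.le, hax.1]; linarith [hqb, hbx.2]]
        -- exact slope over the bridge gap
        obtain ⟨k', hk'⟩ := gap_slope hl hCc hne heq hmono hpres hpC hqC hpq hgapC
        obtain ⟨ξ, hξ, hsl⟩ := mvt_slope hφ1 hpq
        have hξx : |ξ - x| ≤ ε/2 := by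
          rw [abs_le] at hpx hqx ⊢
          constructor <;> [linarith [hξ.1.le, hpx.1]; linarith [hξ.2.le, hqx.2]]
        obtain ⟨hd1, hd2⟩ := hD ξ hξx
        have hqp : (0:ℝ) < q - p := by linarith
        have hderiv : deriv φ ξ = l ^ k' := by
          rw [hsl, hk', mul_div_assoc, div_self (ne_of_gt hqp), mul_one]
        have hkj : k' = j := by
          apply zpow_unique hl (j := j)
          · rw [← hderiv]; exact hd1
          · rw [← hderiv]; exact hd2
        have hmid : φ q - φ p = l ^ j * (q - p) := by rw [hk', hkj]
        have h1 := ih a p ha hpC hax hpx hap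
        have h2 := ih q b hqC hb hqx hbx hqb
        have hsplit : φ b - φ a - l^j * (b - a)
            = (φ p - φ a - l^j * (p - a)) + (φ b - φ q - l^j * (b - q))
              + (φ q - φ p - l^j * (q - p)) := by ring
        have hmid0 : φ q - φ p - l^j * (q - p) = 0 := by rw [hmid]; ring
        rw [hsplit, hmid0, add_zero]
        have h3 : |(φ p - φ a - l^j * (p - a)) + (φ b - φ q - l^j * (b - q))|
            ≤ K * (2/l)^kk * (p - a) + K * (2/l)^kk * (b - q) :=
          le_trans (abs_add_le _ _) (add_le_add h1 h2)
        have h4 : K * (2/l)^kk * (p - a) + K * (2/l)^kk * (b - q)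
            = K * (2/l)^kk * ((p - a) + (b - q)) := by ring
        have h5 : (0:ℝ) ≤ K * (2/l)^kk := by positivity
        calc |(φ p - φ a - l^j * (p - a)) + (φ b - φ q - l^j * (b - q))|
            ≤ K * (2/l)^kk * ((p - a) + (b - q)) := by rw [← h4]; exact h3
          _ ≤ K * (2/l)^kk * ((2/l) * (b - a)) := mul_le_mul_of_nonneg_left hlen h5
          _ = K * (2/l)^(kk+1) * (b - a) := by ring
  -- pass to the limit
  have main_le : ∀ a b, a ∈ C → b ∈ C → |a - x| ≤ ε/2 → |b - x| ≤ ε/2 → a ≤ b →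
      φ b - φ a = l ^ j * (b - a) := by
    intro a b ha hb hax hbx hab
    have h0 : ∀ kk : ℕ, |φ b - φ a - l^j * (b - a)| ≤ (2/l)^kk * (K * (b - a)) := by
      intro kk
      have := key kk a b ha hb hax hbx hab
      calc |φ b - φ a - l^j * (b - a)| ≤ K * (2/l)^kk * (b - a) := this
        _ = (2/l)^kk * (K * (b - a)) := by ring
    have htend : Filter.Tendsto (fun kk : ℕ => (2/l)^kk * (K * (b - a))) atTop (nhds 0) := by
      have h1 : Filter.Tendsto (fun kk : ℕ => (2/l)^kk) atTop (nhds 0) :=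
        tendsto_pow_atTop_nhds_zero_of_lt_one (by positivity)
          (by rw [div_lt_one hlp]; linarith)
      simpa using h1.mul_const (K * (b - a))
    have h2 : |φ b - φ a - l^j * (b - a)| ≤ 0 :=
      ge_of_tendsto htend (Filter.Eventually.of_forall h0)
    have h3 := abs_nonneg (φ b - φ a - l^j * (b - a))
    have h4 : |φ b - φ a - l^j * (b - a)| = 0 := le_antisymm h2 h3
    have h5 := abs_eq_zero.mp h4
    linarith
  intro a b ha hb hax hbx
  rcases le_total a b with h | h
  · exact main_le a b ha hb hax hbx h
  · have := main_le b a hb ha hbx hax h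
    linarith [this]

end Analysis

section Cover

/-- extension of a finite word by `false` -/
def wext (N : ℕ) (w : Fin N → Bool) : ℕ → Bool := fun i => if h : i < N then w ⟨i, h⟩ else false

/-- extension of a finite word by `true` -/
def uext (N : ℕ) (w : Fin N → Bool) : ℕ → Bool := fun i => if h : i < N then w ⟨i, h⟩ else true

lemma gv_wext (hl : 2 < l) (N : ℕ) (w : Fin N → Bool) :
    gv l (wext N w) = pref l N (wext N w) := by
  have h1 := gv_tail hl N (wext N w)
  have h2 : shf N (wext N w) = fun _ => false := by
    funext i; simp only [shf, wext]; rw [dif_neg (by omega)]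
  rw [h2, gv_const_false, mul_zero, add_zero] at h1
  exact h1

lemma gv_uext (hl : 2 < l) (N : ℕ) (w : Fin N → Bool) :
    gv l (uext N w) = pref l N (wext N w) + 1/l^N := by
  have h1 := gv_tail hl N (uext N w)
  have h2 : shf N (uext N w) = fun _ => true := by
    funext i; simp only [shf, uext]; rw [dif_neg (by omega)]
  rw [h2, gv_const_true hl, mul_one] at h1
  rw [h1, pref_congr (ε := uext N w) (δ := wext N w) N
    (fun i hi => by simp only [uext, wext, dif_pos hi])]

/-- distinct level-`N` cylinders are disjoint -/
lemma cyl_disjoint (hl : 2 < l) (N : ℕ) (w w' : Fin N → Bool) (hww : w ≠ w') :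
    Icc (pref l N (wext N w)) (pref l N (wext N w) + 1/l^N) ∩
      Icc (pref l N (wext N w')) (pref l N (wext N w') + 1/l^N) = ∅ := by
  classical
  have hlp : (0:ℝ) < l := by linarith
  have hex : ∃ i, wext N w i ≠ wext N w' i := by
    by_contra hc; push_neg at hc
    apply hww; funext i
    have := hc i.val
    simp only [wext, dif_pos i.isLt] at this
    simpa using this
  set m := Nat.find hex with hm
  have hdiff := Nat.find_spec hex
  have hmin : ∀ i < m, wext N w i = wext N w' i := by
    intro i hi
    by_contra hne2
    exact Nat.find_min hex hi hne2
  have hmN : m < N := by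
    by_contra hc; push_neg at hc
    apply hdiff
    have key : ∀ i, N ≤ i → wext N w i = wext N w' i := fun i hi => by
      simp only [wext, dif_neg (show ¬ i < N by omega)]
    exact key _ hc
  have hgap : (1:ℝ)/l^(m+1) < (l-1)/l^(m+1) :=
    (div_lt_div_iff_of_pos_right (pow_pos hlp (m+1))).mpr (by linarith)
  -- one-sided separation
  have main : ∀ a b : Fin N → Bool, wext N a m = false → wext N b m = true →
      (∀ i < m, wext N a i = wext N b i) →
      pref l N (wext N a) + 1/l^N < pref l N (wext N b) := by
    intro a b ham hbm hpre
    have hua : uext N a m = false := by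
      simp only [uext]; rw [dif_pos hmN]
      simpa only [wext, dif_pos hmN] using ham
    have h1 : pref l N (wext N a) + 1/l^N ≤ pref l m (uext N a) + 1/l^(m+1) := by
      rw [← gv_uext hl]
      exact le_of_digit_false hl hua
    have h2 : pref l m (wext N b) + (l-1)/l^(m+1) ≤ pref l N (wext N b) := by
      rw [← gv_wext hl]
      exact ge_of_digit_true hl hbm
    have h3 : pref l m (uext N a) = pref l m (wext N b) := by
      apply pref_congr
      intro i hi
      rw [show uext N a i = wext N a i by
        simp only [uext, wext]; rw [dif_pos (by omega), dif_pos (by omega)]]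
      exact hpre i hi
    rw [h3] at h1
    linarith
  cases haw : wext N w m <;> cases hbw : wext N w' m
  · rw [haw, hbw] at hdiff; exact absurd rfl hdiff
  · have := main w w' haw hbw hmin
    apply eq_empty_iff_forall_notMem.mpr
    rintro y ⟨h1, h2⟩
    rw [mem_Icc] at h1 h2
    linarith [h1.1, h1.2, h2.1, h2.2]
  · have := main w' w hbw haw (fun i hi => (hmin i hi).symm)
    apply eq_empty_iff_forall_notMem.mpr
    rintro y ⟨h1, h2⟩
    rw [mem_Icc] at h1 h2
    linarith [h1.1, h1.2, h2.1, h2.2]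
  · rw [haw, hbw] at hdiff; exact absurd rfl hdiff

end Cover

end CCantor


/-- Any orientation-preserving `C¹` diffeomorphism of ℝ preserving the central Cantor
set `C_λ` (λ > 2) is, on a finite covering of `C_λ` by disjoint closed intervals,
affine with slopes integer powers of λ. -/
theorem diffeo_centralCantor_locally_affine (l : ℝ) (hl : 2 < l) (C : Set ℝ)
    (hC : IsCentralCantor l C) (φ ψ : ℝ → ℝ) (hφ : IsC1DiffeoPair φ ψ)
    (hmono : StrictMono φ) (hpres : φ '' C = C) :
    ∃ (m : ℕ) (u v : Fin m → ℝ),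
      (∀ k, u k ≤ v k) ∧
      (∀ k k', k ≠ k' → Set.Icc (u k) (v k) ∩ Set.Icc (u k') (v k') = ∅) ∧
      C ⊆ ⋃ k, Set.Icc (u k) (v k) ∧
      ∀ k, ∃ (j : ℤ) (c : ℝ), c ∈ C ∩ Set.Icc (u k) (v k) ∧
        ∀ x ∈ C ∩ Set.Icc (u k) (v k), φ x = φ c + l ^ j * (x - c) := by
  classical
  obtain ⟨hCc, hne, heq⟩ := hC
  obtain ⟨hφ1, hψ1, hli, hri⟩ := hφ
  have hlp : (0:ℝ) < l := by linarith
  have hloc := fun z : C =>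
    CCantor.local_affine hl hCc hne heq hφ1 hψ1 hli hmono hpres z z.2
  choose δf hδf jf hjf using hloc
  have hcover : C ⊆ ⋃ z : C, Metric.ball (z : ℝ) (δf z) := by
    intro y hy
    exact mem_iUnion.mpr ⟨⟨y, hy⟩, Metric.mem_ball_self (hδf ⟨y, hy⟩)⟩
  obtain ⟨ρ, hρ, hleb⟩ :=
    lebesgue_number_lemma_of_metric hCc (fun z => Metric.isOpen_ball) hcover
  obtain ⟨N, hN⟩ := exists_pow_lt_of_lt_one hρ
    (show 1/l < 1 by rw [div_lt_one hlp]; linarith)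
  have hN' : 1/l^N < ρ := by
    rw [show (1:ℝ)/l^N = (1/l)^N by rw [div_pow, one_pow]]; exact hN
  set E : Fin (2^N) ≃ (Fin N → Bool) :=
    finFunctionFinEquiv.symm.trans (Equiv.arrowCongr (Equiv.refl (Fin N)) finTwoEquiv) with hE
  have hpowpos : (0:ℝ) < 1/l^N := by positivity
  refine ⟨2^N, fun k => CCantor.pref l N (CCantor.wext N (E k)),
    fun k => CCantor.pref l N (CCantor.wext N (E k)) + 1/l^N, ?_, ?_, ?_, ?_⟩
  · intro k
    linarith
  · intro k k' hkk
    exact CCantor.cyl_disjoint hl N (E k) (E k') (fun h => hkk (E.injective h))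
  · intro x hx
    obtain ⟨θ, hθ⟩ := CCantor.mem_gv hl hCc hne heq x hx
    set w : Fin N → Bool := fun i => θ i.val with hw
    refine mem_iUnion.mpr ⟨E.symm w, ?_⟩
    simp only [Equiv.apply_symm_apply]
    rw [mem_Icc]
    have hpr : CCantor.pref l N (CCantor.wext N w) = CCantor.pref l N θ :=
      CCantor.pref_congr N (fun i hi => by simp [CCantor.wext, hi, hw])
    rw [hpr, hθ]
    exact ⟨CCantor.gv_tail_lb hl N θ, CCantor.gv_tail_ub hl N θ⟩
  · intro k
    set c := CCantor.pref l N (CCantor.wext N (E k)) with hcdef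
    have hcgv : c = CCantor.gv l (CCantor.wext N (E k)) := (CCantor.gv_wext hl N (E k)).symm
    have hcC : c ∈ C := by rw [hcgv]; exact CCantor.gv_mem hl hCc hne heq _
    obtain ⟨z, hz⟩ := hleb c hcC
    have hcz : |c - (z:ℝ)| ≤ δf z := by
      have h1 : c ∈ Metric.ball (z:ℝ) (δf z) := hz (Metric.mem_ball_self hρ)
      rw [Metric.mem_ball, Real.dist_eq] at h1
      exact h1.le
    refine ⟨jf z, c, ⟨hcC, by rw [mem_Icc]; constructor <;> linarith⟩, ?_⟩
    rintro x' ⟨hx'C, hx'I⟩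
    rw [mem_Icc] at hx'I
    have hx'z : |x' - (z:ℝ)| ≤ δf z := by
      have h1 : x' ∈ Metric.ball c ρ := by
        rw [Metric.mem_ball, Real.dist_eq, abs_lt]
        constructor <;> [linarith [hx'I.1]; linarith [hx'I.2]]
      have h2 := hz h1
      rw [Metric.mem_ball, Real.dist_eq] at h2
      exact h2.le
    have := hjf z c x' hcC hx'C hcz hx'z
    linarith
end

section
/- For every point a of the central Cantor set C_λ (λ > 2) and every C¹ diffeomorphism φ of ℝ preserving C_λ, the derivative φ'(a) is an integer power of λ (up to sign). Moreover, for a fixed such φ, the restriction of φ' to C_λ takes only finitely many values. -/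
open Set Filter Topology Asymptotics

/-- Every gap of the central Cantor set has length `(l-2) * l^(-(m+1))` for some `m`. -/
lemma centralCantor_gap_length (l : ℝ) (hl : 2 < l) (C : Set ℝ)
    (hsub : C ⊆ Set.Icc 0 1)
    (hA : ∀ x ∈ C, x / l ∈ C) (hB : ∀ x ∈ C, x / l + (l - 1) / l ∈ C)
    (hsplit : ∀ x ∈ C, (∃ c ∈ C, c / l = x) ∨ (∃ c ∈ C, c / l + (l - 1) / l = x))
    (h1l : (1 / l : ℝ) ∈ C) (hll : ((l - 1) / l : ℝ) ∈ C) :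
    ∀ n : ℕ, ∀ x ∈ C, ∀ y ∈ C, x < y → Set.Ioo x y ∩ C = ∅ →
      1 < (y - x) * l ^ n → ∃ m : ℕ, (y - x) * l ^ (m + 1) = l - 2 := by
  have l0 : (0:ℝ) < l := by linarith
  have hmid : (1:ℝ)/l < (l-1)/l := by
    rw [div_lt_div_iff₀ l0 l0]; nlinarith
  have hAle : ∀ x : ℝ, (∃ c ∈ C, c / l = x) → x ≤ 1/l := by
    rintro x ⟨c, hc, rfl⟩
    exact (div_le_div_iff_of_pos_right l0).mpr (hsub hc).2
  have hBge : ∀ x : ℝ, (∃ c ∈ C, c / l + (l-1)/l = x) → (l-1)/l ≤ x := by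
    rintro x ⟨c, hc, rfl⟩
    have h0 : (0:ℝ) ≤ c / l := div_nonneg (hsub hc).1 l0.le
    linarith
  have hclassA : ∀ x ∈ C, x < (l-1)/l → ∃ c ∈ C, c / l = x := by
    intro x hx hlt
    rcases hsplit x hx with h | h
    · exact h
    · exact absurd (hBge x h) (by linarith)
  have hclassB : ∀ x ∈ C, 1/l < x → ∃ c ∈ C, c / l + (l-1)/l = x := by
    intro x hx hlt
    rcases hsplit x hx with h | h
    · exact absurd (hAle x h) (by linarith)
    · exact h
  intro n
  induction n with
  | zero =>
    intro x hx y hy hxy hgap hlen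
    have h1 := (hsub hx).1
    have h2 := (hsub hy).2
    simp only [pow_zero, mul_one] at hlen
    linarith
  | succ n ih =>
    intro x hx y hy hxy hgap hlen
    by_cases hyl : y ≤ 1/l
    · -- gap lies in the left piece; rescale by l
      obtain ⟨cx, hcx, hcxe⟩ := hclassA x hx (by linarith)
      obtain ⟨cy, hcy, hcye⟩ := hclassA y hy (by linarith)
      have hcxv : cx = x * l := by
        have := (div_eq_iff (ne_of_gt l0)).mp hcxe; linarith
      have hcyv : cy = y * l := by
        have := (div_eq_iff (ne_of_gt l0)).mp hcye; linarith
      have hgap' : Set.Ioo (x*l) (y*l) ∩ C = ∅ := by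
        rw [Set.eq_empty_iff_forall_notMem]
        rintro c ⟨⟨h1, h2⟩, hcC⟩
        have hmem : c / l ∈ C := hA c hcC
        have hx1 : x < c / l := (lt_div_iff₀ l0).mpr h1
        have hy1 : c / l < y := (div_lt_iff₀ l0).mpr h2
        exact (Set.eq_empty_iff_forall_notMem.mp hgap (c/l)) ⟨⟨hx1, hy1⟩, hmem⟩
      have hlen' : 1 < (y*l - x*l) * l ^ n := by
        have : (y*l - x*l) * l ^ n = (y - x) * l ^ (n+1) := by ring
        rw [this]; exact hlen
      obtain ⟨m, hm⟩ := ih (x*l) (hcxv ▸ hcx) (y*l) (hcyv ▸ hcy)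
        (by nlinarith) hgap' hlen'
      refine ⟨m + 1, ?_⟩
      have : (y - x) * l ^ (m + 1 + 1) = (y*l - x*l) * l ^ (m+1) := by ring
      rw [this]; exact hm
    · by_cases hxr : (l-1)/l ≤ x
      · -- gap lies in the right piece; rescale by l
        obtain ⟨cx, hcx, hcxe⟩ := hclassB x hx (by linarith)
        obtain ⟨cy, hcy, hcye⟩ := hclassB y hy (by linarith)
        have hcxv : cx = x * l - (l - 1) := by field_simp at hcxe; linarith
        have hcyv : cy = y * l - (l - 1) := by field_simp at hcye; linarith
        have hgap' : Set.Ioo (x*l - (l-1)) (y*l - (l-1)) ∩ C = ∅ := by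
          rw [Set.eq_empty_iff_forall_notMem]
          rintro c ⟨⟨h1, h2⟩, hcC⟩
          have hmem : c / l + (l-1)/l ∈ C := hB c hcC
          have hx1 : x < c / l + (l-1)/l := by
            have : x < (c + (l-1)) / l := (lt_div_iff₀ l0).mpr (by linarith)
            rwa [add_div] at this
          have hy1 : c / l + (l-1)/l < y := by
            have : (c + (l-1)) / l < y := (div_lt_iff₀ l0).mpr (by linarith)
            rwa [add_div] at this
          exact (Set.eq_empty_iff_forall_notMem.mp hgap _) ⟨⟨hx1, hy1⟩, hmem⟩
        have hlen' : 1 < ((y*l - (l-1)) - (x*l - (l-1))) * l ^ n := by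
          have : ((y*l - (l-1)) - (x*l - (l-1))) * l ^ n = (y - x) * l ^ (n+1) := by ring
          rw [this]; exact hlen
        obtain ⟨m, hm⟩ := ih (x*l - (l-1)) (hcxv ▸ hcx) (y*l - (l-1)) (hcyv ▸ hcy)
          (by nlinarith) hgap' hlen'
        refine ⟨m + 1, ?_⟩
        have : (y - x) * l ^ (m + 1 + 1) = ((y*l - (l-1)) - (x*l - (l-1))) * l ^ (m+1) := by ring
        rw [this]; exact hm
      · -- the gap straddles the middle: it must be exactly the middle gap
        push_neg at hyl hxr
        have hx1 : x ≤ 1/l := hAle x (hclassA x hx (by linarith))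
        have hxeq : x = 1/l := by
          rcases lt_or_eq_of_le hx1 with h | h
          · exact absurd ⟨⟨h, by linarith⟩, h1l⟩
              (Set.eq_empty_iff_forall_notMem.mp hgap (1/l))
          · exact h
        have hy1 : (l-1)/l ≤ y := hBge y (hclassB y hy (by linarith))
        have hyeq : y = (l-1)/l := by
          rcases lt_or_eq_of_le hy1 with h | h
          · exact absurd ⟨⟨by rw [hxeq]; exact hmid, h⟩, hll⟩
              (Set.eq_empty_iff_forall_notMem.mp hgap ((l-1)/l))
          · exact h.symm
        refine ⟨0, ?_⟩
        rw [hxeq, hyeq]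
        field_simp
        ring

/-- Near every point of the central Cantor set there are gaps at every scale. -/
lemma centralCantor_gap_near (l : ℝ) (hl : 2 < l) (C : Set ℝ)
    (hsub : C ⊆ Set.Icc 0 1)
    (hA : ∀ x ∈ C, x / l ∈ C) (hB : ∀ x ∈ C, x / l + (l - 1) / l ∈ C)
    (hsplit : ∀ x ∈ C, (∃ c ∈ C, c / l = x) ∨ (∃ c ∈ C, c / l + (l - 1) / l = x))
    (h1l : (1 / l : ℝ) ∈ C) (hll : ((l - 1) / l : ℝ) ∈ C) :
    ∀ n : ℕ, ∀ a ∈ C, ∃ x y : ℝ, x ∈ C ∧ y ∈ C ∧ x < y ∧ Set.Ioo x y ∩ C = ∅ ∧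
      a - (1/l)^n ≤ x ∧ y ≤ a + (1/l)^n := by
  have l0 : (0:ℝ) < l := by linarith
  have hmid : (1:ℝ)/l < (l-1)/l := by
    rw [div_lt_div_iff₀ l0 l0]; nlinarith
  have hAle : ∀ x : ℝ, (∃ c ∈ C, c / l = x) → x ≤ 1/l := by
    rintro x ⟨c, hc, rfl⟩
    exact (div_le_div_iff_of_pos_right l0).mpr (hsub hc).2
  have hBge : ∀ x : ℝ, (∃ c ∈ C, c / l + (l-1)/l = x) → (l-1)/l ≤ x := by
    rintro x ⟨c, hc, rfl⟩
    have h0 : (0:ℝ) ≤ c / l := div_nonneg (hsub hc).1 l0.le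
    linarith
  have hclassA : ∀ x ∈ C, x < (l-1)/l → ∃ c ∈ C, c / l = x := by
    intro x hx hlt
    rcases hsplit x hx with h | h
    · exact h
    · exact absurd (hBge x h) (by linarith)
  have hclassB : ∀ x ∈ C, 1/l < x → ∃ c ∈ C, c / l + (l-1)/l = x := by
    intro x hx hlt
    rcases hsplit x hx with h | h
    · exact absurd (hAle x h) (by linarith)
    · exact h
  intro n
  induction n with
  | zero =>
    intro a ha
    refine ⟨1/l, (l-1)/l, h1l, hll, hmid, ?_, ?_, ?_⟩
    · rw [Set.eq_empty_iff_forall_notMem]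
      rintro c ⟨⟨h1, h2⟩, hcC⟩
      rcases hsplit c hcC with h | h
      · exact absurd (hAle c h) (by linarith)
      · exact absurd (hBge c h) (by linarith)
    · have ha1 := (hsub ha).2
      have : (0:ℝ) < 1/l := by positivity
      simp only [pow_zero]
      linarith
    · have ha0 := (hsub ha).1
      have : (l-1)/l < 1 := (div_lt_one l0).mpr (by linarith)
      simp only [pow_zero]
      linarith
  | succ n ih =>
    intro a ha
    rcases hsplit a ha with ⟨b, hb, hbe⟩ | ⟨b, hb, hbe⟩
    · -- a = b / l, in the left piece
      obtain ⟨x, y, hxC, hyC, hxy, hgap, hxl, hyu⟩ := ih b hb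
      refine ⟨x/l, y/l, hA x hxC, hA y hyC,
        (div_lt_div_iff_of_pos_right l0).mpr hxy, ?_, ?_, ?_⟩
      · rw [Set.eq_empty_iff_forall_notMem]
        rintro c ⟨⟨h1, h2⟩, hcC⟩
        have hy1 : y / l ≤ 1/l := (div_le_div_iff_of_pos_right l0).mpr (hsub hyC).2
        obtain ⟨d, hd, hde⟩ := hclassA c hcC (by linarith)
        have hdx : x < d := by
          rw [← hde] at h1
          exact (div_lt_div_iff_of_pos_right l0).mp h1
        have hdy : d < y := by
          rw [← hde] at h2
          exact (div_lt_div_iff_of_pos_right l0).mp h2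
        exact (Set.eq_empty_iff_forall_notMem.mp hgap d) ⟨⟨hdx, hdy⟩, hd⟩
      · have h1 : (b - (1/l)^n)/l ≤ x/l := (div_le_div_iff_of_pos_right l0).mpr hxl
        have h2 : (b - (1/l)^n)/l = a - (1/l)^(n+1) := by
          rw [sub_div, hbe, pow_succ, mul_one_div]
        linarith
      · have h1 : y/l ≤ (b + (1/l)^n)/l := (div_le_div_iff_of_pos_right l0).mpr hyu
        have h2 : (b + (1/l)^n)/l = a + (1/l)^(n+1) := by
          rw [add_div, hbe, pow_succ, mul_one_div]
        linarith
    · -- a = b / l + (l-1)/l, in the right piece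
      obtain ⟨x, y, hxC, hyC, hxy, hgap, hxl, hyu⟩ := ih b hb
      refine ⟨x/l + (l-1)/l, y/l + (l-1)/l, hB x hxC, hB y hyC,
        by have := (div_lt_div_iff_of_pos_right l0).mpr hxy; linarith, ?_, ?_, ?_⟩
      · rw [Set.eq_empty_iff_forall_notMem]
        rintro c ⟨⟨h1, h2⟩, hcC⟩
        have hx0 : (0:ℝ) ≤ x / l := div_nonneg (hsub hxC).1 l0.le
        obtain ⟨d, hd, hde⟩ := hclassB c hcC (by linarith)
        have hdx : x < d := by
          rw [← hde] at h1
          have : x / l < d / l := by linarith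
          exact (div_lt_div_iff_of_pos_right l0).mp this
        have hdy : d < y := by
          rw [← hde] at h2
          have : d / l < y / l := by linarith
          exact (div_lt_div_iff_of_pos_right l0).mp this
        exact (Set.eq_empty_iff_forall_notMem.mp hgap d) ⟨⟨hdx, hdy⟩, hd⟩
      · have h1 : (b - (1/l)^n)/l ≤ x/l := (div_le_div_iff_of_pos_right l0).mpr hxl
        have h2 : (b - (1/l)^n)/l + (l-1)/l = a - (1/l)^(n+1) := by
          rw [sub_div, ← hbe, pow_succ, mul_one_div]
          ring
        linarith
      · have h1 : y/l ≤ (b + (1/l)^n)/l := (div_le_div_iff_of_pos_right l0).mpr hyu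
        have h2 : (b + (1/l)^n)/l + (l-1)/l = a + (1/l)^(n+1) := by
          rw [add_div, ← hbe, pow_succ, mul_one_div]
          ring
        linarith

/-- If a sequence of integer powers of `l > 1` converges to a positive limit, then the
limit is itself an integer power of `l`. -/
lemma tendsto_zpow_limit {l A : ℝ} (hl : 1 < l) (hA : 0 < A) {d : ℕ → ℤ}
    (h : Tendsto (fun n => l ^ (d n)) atTop (𝓝 A)) : ∃ k : ℤ, A = l ^ k := by
  have l0 : (0:ℝ) < l := lt_trans one_pos hl
  have hlog : (0:ℝ) < Real.log l := Real.log_pos hl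
  have h2 : Tendsto (fun n => ((d n : ℝ))) atTop (𝓝 (Real.log A / Real.log l)) := by
    have hcomp : Tendsto (fun n => Real.log (l ^ (d n))) atTop (𝓝 (Real.log A)) :=
      ((Real.continuousAt_log (ne_of_gt hA)).tendsto).comp h
    have h3 := hcomp.div_const (Real.log l)
    refine h3.congr (fun n => ?_)
    rw [Real.log_zpow]
    field_simp
  rw [Metric.tendsto_atTop] at h2
  obtain ⟨N, hN⟩ := h2 (1/2) (by norm_num)
  have hdc : ∀ n, N ≤ n → d n = d N := by
    intro n hn
    have h1 := hN n hn
    have h2' := hN N le_rfl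
    rw [Real.dist_eq] at h1 h2'
    have habs : |((d n : ℝ)) - (d N : ℝ)| < 1 := by
      have := abs_sub_abs_le_abs_sub ((d n : ℝ) - Real.log A / Real.log l)
        ((d N : ℝ) - Real.log A / Real.log l)
      calc |((d n : ℝ)) - (d N : ℝ)|
          = |((d n : ℝ) - Real.log A / Real.log l) - ((d N : ℝ) - Real.log A / Real.log l)| := by
            ring_nf
        _ ≤ |(d n : ℝ) - Real.log A / Real.log l| + |(d N : ℝ) - Real.log A / Real.log l| :=
            abs_sub _ _
        _ < 1 := by linarith
    have habs' : |((d n - d N : ℤ) : ℝ)| < 1 := by push_cast; exact habs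
    have : ((|d n - d N| : ℤ) : ℝ) < 1 := by rw [Int.cast_abs]; exact habs'
    have hint : |d n - d N| < 1 := by exact_mod_cast this
    rcases abs_lt.mp hint with ⟨h1'', h2''⟩
    omega
  refine ⟨d N, tendsto_nhds_unique h ?_⟩
  have hconst : Tendsto (fun _ : ℕ => (l : ℝ) ^ (d N)) atTop (𝓝 (l ^ (d N))) :=
    tendsto_const_nhds
  refine hconst.congr' ?_
  filter_upwards [eventually_ge_atTop N] with n hn
  rw [hdc n hn]

/-- For any `C¹` diffeomorphism `φ` of ℝ preserving the central Cantor set `C_λ`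
(λ > 2), at every point of `C_λ` the derivative of `φ` is, up to sign, an integer
power of λ; moreover `φ'` takes only finitely many values on `C_λ`. -/
theorem deriv_on_centralCantor_powers (l : ℝ) (hl : 2 < l) (C : Set ℝ)
    (hC : IsCentralCantor l C) (φ ψ : ℝ → ℝ) (hφ : IsC1DiffeoPair φ ψ)
    (hpres : φ '' C = C) :
    (∀ a ∈ C, ∃ k : ℤ, deriv φ a = l ^ k ∨ deriv φ a = -(l ^ k)) ∧
    Set.Finite ((fun a => deriv φ a) '' C) := by
  obtain ⟨hcomp, hne, hun⟩ := hC
  obtain ⟨hφ1, hψ1, hlinv, hrinv⟩ := hφ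
  have l0 : (0:ℝ) < l := by linarith
  have l1 : (1:ℝ) < l := by linarith
  -- basic membership facts
  have hA : ∀ x ∈ C, x / l ∈ C := by
    intro x hx
    have hmem : x / l ∈ (fun x => x / l) '' C ∪ (fun x => x / l + (l - 1) / l) '' C :=
      Or.inl ⟨x, hx, rfl⟩
    rwa [← hun] at hmem
  have hB : ∀ x ∈ C, x / l + (l - 1) / l ∈ C := by
    intro x hx
    have hmem : x / l + (l - 1) / l ∈
        (fun x => x / l) '' C ∪ (fun x => x / l + (l - 1) / l) '' C :=
      Or.inr ⟨x, hx, rfl⟩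
    rwa [← hun] at hmem
  have hsplit : ∀ x ∈ C, (∃ c ∈ C, c / l = x) ∨ (∃ c ∈ C, c / l + (l - 1) / l = x) := by
    intro x hx
    rw [hun] at hx
    rcases hx with ⟨c, hc, hcl⟩ | ⟨c, hc, hcl⟩
    · exact Or.inl ⟨c, hc, hcl⟩
    · exact Or.inr ⟨c, hc, hcl⟩
  -- C ⊆ [0,1], with 0, 1 ∈ C
  have hbdd := hcomp.bddAbove
  have hbddb := hcomp.bddBelow
  have hMmem : sSup C ∈ C := hcomp.sSup_mem hne
  have hmmem : sInf C ∈ C := hcomp.sInf_mem hne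
  have hM1 : sSup C = 1 := by
    set M := sSup C with hMdef
    have hup : M / l + (l - 1) / l ≤ M := le_csSup hbdd (hB M hMmem)
    have hup' : M + (l - 1) ≤ M * l := by
      rw [← add_div, div_le_iff₀ l0] at hup; linarith
    have hM_ge : 1 ≤ M := by nlinarith
    rcases hsplit M hMmem with ⟨c, hc, hcl⟩ | ⟨c, hc, hcl⟩
    · exfalso
      have hcM : c ≤ M := le_csSup hbdd hc
      have hc' : c = M * l := (div_eq_iff (ne_of_gt l0)).mp hcl
      nlinarith
    · have hcM : c ≤ M := le_csSup hbdd hc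
      have h1 : M ≤ M / l + (l - 1) / l := by
        calc M = c / l + (l - 1) / l := hcl.symm
          _ ≤ M / l + (l - 1) / l := by
              have : c / l ≤ M / l := (div_le_div_iff_of_pos_right l0).mpr hcM
              linarith
      have h2 : M * l ≤ M + (l - 1) := by
        rw [← add_div, le_div_iff₀ l0] at h1; linarith
      nlinarith
  have hm0 : sInf C = 0 := by
    set m := sInf C with hmdef
    have hlow : m ≤ m / l := csInf_le hbddb (hA m hmmem)
    have hlow' : m * l ≤ m := by rw [le_div_iff₀ l0] at hlow; linarith
    have hm_le : m ≤ 0 := by nlinarith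
    rcases hsplit m hmmem with ⟨c, hc, hcl⟩ | ⟨c, hc, hcl⟩
    · have hcm : m ≤ c := csInf_le hbddb hc
      have hc' : c = m * l := (div_eq_iff (ne_of_gt l0)).mp hcl
      have hml : m ≤ m * l := by rw [← hc']; exact hcm
      have hge : 0 ≤ m := by nlinarith
      linarith
    · exfalso
      have hcm : m ≤ c := csInf_le hbddb hc
      have h1 : m / l + (l - 1) / l ≤ m := by
        calc m / l + (l - 1) / l ≤ c / l + (l - 1) / l := by
              have : m / l ≤ c / l := (div_le_div_iff_of_pos_right l0).mpr hcm
              linarith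
          _ = m := hcl
      have h2 : m + (l - 1) ≤ m * l := by
        rw [← add_div, div_le_iff₀ l0] at h1; linarith
      nlinarith
  have hsub : C ⊆ Set.Icc 0 1 := by
    intro x hx
    exact ⟨hm0 ▸ csInf_le hbddb hx, hM1 ▸ le_csSup hbdd hx⟩
  have h0C : (0:ℝ) ∈ C := hm0 ▸ hmmem
  have h1C : (1:ℝ) ∈ C := hM1 ▸ hMmem
  have h1l : (1/l : ℝ) ∈ C := by simpa using hA 1 h1C
  have hll : ((l-1)/l : ℝ) ∈ C := by simpa using hB 0 h0C
  -- facts about the diffeomorphism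
  have hφd : Differentiable ℝ φ := hφ1.differentiable one_ne_zero
  have hψd : Differentiable ℝ ψ := hψ1.differentiable one_ne_zero
  have hder0 : ∀ x, deriv φ x ≠ 0 := by
    intro x hx0
    have hid : ψ ∘ φ = id := funext hlinv
    have hcomp' : deriv (ψ ∘ φ) x = deriv ψ (φ x) * deriv φ x :=
      deriv_comp x (hψd _) (hφd _)
    rw [hid, deriv_id, hx0, mul_zero] at hcomp'
    exact one_ne_zero hcomp'
  have hcont : Continuous (deriv φ) := hφ1.continuous_deriv le_rfl
  have hmono : StrictMono φ ∨ StrictAnti φ := by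
    by_cases hpos : ∀ x, 0 < deriv φ x
    · exact Or.inl (strictMono_of_deriv_pos hpos)
    · push_neg at hpos
      obtain ⟨x0, hx0⟩ := hpos
      have hx0' : deriv φ x0 < 0 := lt_of_le_of_ne hx0 (hder0 x0)
      refine Or.inr (strictAnti_of_deriv_neg ?_)
      intro x
      by_contra hge
      push_neg at hge
      have hxpos : 0 < deriv φ x := lt_of_le_of_ne hge (Ne.symm (hder0 x))
      have h0mem : (0:ℝ) ∈ Set.uIcc (deriv φ x0) (deriv φ x) :=
        Set.mem_uIcc.mpr (Or.inl ⟨hx0'.le, hxpos.le⟩)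
      obtain ⟨c, _, hc⟩ := intermediate_value_uIcc (f := deriv φ)
        (hcont.continuousOn) h0mem
      exact hder0 c hc
  have hto : ∀ c ∈ C, φ c ∈ C := fun c hc => hpres ▸ ⟨c, hc, rfl⟩
  have hfrom : ∀ c ∈ C, ∃ d ∈ C, φ d = c := by
    intro c hc
    rw [← hpres] at hc
    exact hc
  -- images of gaps are gaps (up to orientation), so ratios of gap lengths are powers of l
  have hgaplen := centralCantor_gap_length l hl C hsub hA hB hsplit h1l hll
  have himg : ∀ x ∈ C, ∀ y ∈ C, x < y → Set.Ioo x y ∩ C = ∅ →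
      ∃ m : ℕ, |φ y - φ x| * l ^ (m+1) = l - 2 := by
    intro x hx y hy hxy hgap
    rcases hmono with hM | hM
    · have hlt : φ x < φ y := hM hxy
      have hgap' : Set.Ioo (φ x) (φ y) ∩ C = ∅ := by
        rw [Set.eq_empty_iff_forall_notMem]
        rintro c ⟨⟨h1, h2⟩, hcC⟩
        obtain ⟨d, hd, rfl⟩ := hfrom c hcC
        have hd1 : x < d := hM.lt_iff_lt.mp h1
        have hd2 : d < y := hM.lt_iff_lt.mp h2
        exact (Set.eq_empty_iff_forall_notMem.mp hgap d) ⟨⟨hd1, hd2⟩, hd⟩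
      obtain ⟨N, hN⟩ := pow_unbounded_of_one_lt ((φ y - φ x)⁻¹) l1
      have hNpos : 1 < (φ y - φ x) * l ^ N := by
        have hd0 : 0 < φ y - φ x := sub_pos.mpr hlt
        have := mul_lt_mul_of_pos_left hN hd0
        rwa [mul_inv_cancel₀ (ne_of_gt hd0)] at this
      obtain ⟨m, hm⟩ := hgaplen N (φ x) (hto x hx) (φ y) (hto y hy) hlt hgap' hNpos
      exact ⟨m, by rwa [abs_of_pos (sub_pos.mpr hlt)]⟩
    · have hlt : φ y < φ x := hM hxy
      have hgap' : Set.Ioo (φ y) (φ x) ∩ C = ∅ := by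
        rw [Set.eq_empty_iff_forall_notMem]
        rintro c ⟨⟨h1, h2⟩, hcC⟩
        obtain ⟨d, hd, rfl⟩ := hfrom c hcC
        have hd1 : d < y := hM.lt_iff_gt.mp h1
        have hd2 : x < d := hM.lt_iff_gt.mp h2
        exact (Set.eq_empty_iff_forall_notMem.mp hgap d) ⟨⟨hd2, hd1⟩, hd⟩
      obtain ⟨N, hN⟩ := pow_unbounded_of_one_lt ((φ x - φ y)⁻¹) l1
      have hNpos : 1 < (φ x - φ y) * l ^ N := by
        have hd0 : 0 < φ x - φ y := sub_pos.mpr hlt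
        have := mul_lt_mul_of_pos_left hN hd0
        rwa [mul_inv_cancel₀ (ne_of_gt hd0)] at this
      obtain ⟨m, hm⟩ := hgaplen N (φ y) (hto y hy) (φ x) (hto x hx) hlt hgap' hNpos
      refine ⟨m, ?_⟩
      rwa [abs_sub_comm, abs_of_pos (sub_pos.mpr hlt)]
  -- main pointwise statement
  have hpow : ∀ a ∈ C, ∃ k : ℤ, deriv φ a = l ^ k ∨ deriv φ a = -(l ^ k) := by
    intro a ha
    have hseq : ∀ n : ℕ, ∃ x y : ℝ, x ∈ C ∧ y ∈ C ∧ x < y ∧ Set.Ioo x y ∩ C = ∅ ∧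
        a - (1/l)^n ≤ x ∧ y ≤ a + (1/l)^n := fun n =>
      centralCantor_gap_near l hl C hsub hA hB hsplit h1l hll n a ha
    choose x y hxC hyC hxy hgap hxl hyu using hseq
    -- lengths of the gaps and their images
    have hkex : ∀ n : ℕ, ∃ k : ℕ, (y n - x n) * l ^ (k+1) = l - 2 := by
      intro n
      obtain ⟨N, hN⟩ := pow_unbounded_of_one_lt ((y n - x n)⁻¹) l1
      have hd0 : 0 < y n - x n := sub_pos.mpr (hxy n)
      have hNpos : 1 < (y n - x n) * l ^ N := by
        have := mul_lt_mul_of_pos_left hN hd0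
        rwa [mul_inv_cancel₀ (ne_of_gt hd0)] at this
      exact hgaplen N (x n) (hxC n) (y n) (hyC n) (hxy n) (hgap n) hNpos
    choose k hk using hkex
    have hmex : ∀ n : ℕ, ∃ m : ℕ, |φ (y n) - φ (x n)| * l ^ (m+1) = l - 2 := fun n =>
      himg (x n) (hxC n) (y n) (hyC n) (hxy n) (hgap n)
    choose mm hmm using hmex
    set d : ℕ → ℤ := fun n => (k n : ℤ) - (mm n : ℤ) with hd
    have hratio : ∀ n : ℕ, |φ (y n) - φ (x n)| / (y n - x n) = l ^ (d n) := by
      intro n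
      have hd0 : 0 < y n - x n := sub_pos.mpr (hxy n)
      have hpm : (0:ℝ) < l ^ (mm n + 1) := pow_pos l0 _
      have hpk : (0:ℝ) < l ^ (k n + 1) := pow_pos l0 _
      have heq : |φ (y n) - φ (x n)| * l ^ (mm n + 1) = (y n - x n) * l ^ (k n + 1) := by
        rw [hk n, hmm n]
      have h1 : |φ (y n) - φ (x n)| / (y n - x n) = l ^ (k n + 1) / l ^ (mm n + 1) := by
        rw [div_eq_div_iff (ne_of_gt hd0) (ne_of_gt hpm)]
        linarith [heq]
      rw [h1, ← zpow_natCast (l:ℝ) (k n + 1), ← zpow_natCast (l:ℝ) (mm n + 1),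
        ← zpow_sub₀ (ne_of_gt l0)]
      congr 1
      push_cast
      ring
    -- mean value theorem
    have hmvt : ∀ n : ℕ, ∃ ξ ∈ Set.Ioo (x n) (y n),
        deriv φ ξ = (φ (y n) - φ (x n)) / (y n - x n) := by
      intro n
      exact exists_hasDerivAt_eq_slope φ (deriv φ) (hxy n)
        (hφd.continuous.continuousOn) (fun z _ => (hφd z).hasDerivAt)
    choose ξ hξmem hξeq using hmvt
    -- ξ n → a
    have hinv1 : (0:ℝ) ≤ 1/l := by positivity
    have hinv2 : (1:ℝ)/l < 1 := (div_lt_one l0).mpr l1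
    have hpow0 : Tendsto (fun n : ℕ => ((1:ℝ)/l)^n) atTop (𝓝 0) :=
      tendsto_pow_atTop_nhds_zero_of_lt_one hinv1 hinv2
    have hbound : ∀ n : ℕ, |ξ n - a| ≤ (1/l)^n := by
      intro n
      have h1 := (hξmem n).1
      have h2 := (hξmem n).2
      have h3 := hxl n
      have h4 := hyu n
      rw [abs_le]
      constructor <;> linarith
    have hξto : Tendsto ξ atTop (𝓝 a) := by
      have habs : Tendsto (fun n => |ξ n - a|) atTop (𝓝 0) :=
        squeeze_zero (fun n => abs_nonneg _) hbound hpow0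
      have hsub' : Tendsto (fun n => ξ n - a) atTop (𝓝 0) :=
        (tendsto_zero_iff_abs_tendsto_zero _).mpr habs
      have := hsub'.add (tendsto_const_nhds (x := a))
      simpa using this
    -- |deriv φ ξₙ| = l ^ dₙ tends to |deriv φ a|
    have habsval : ∀ n : ℕ, |deriv φ (ξ n)| = l ^ (d n) := by
      intro n
      have hd0 : 0 < y n - x n := sub_pos.mpr (hxy n)
      rw [hξeq n, abs_div, abs_of_pos hd0, hratio n]
    have hdtend : Tendsto (fun n => (l:ℝ) ^ (d n)) atTop (𝓝 |deriv φ a|) := by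
      have h1 : Tendsto (fun n => deriv φ (ξ n)) atTop (𝓝 (deriv φ a)) :=
        (hcont.tendsto a).comp hξto
      have h2 : Tendsto (fun n => |deriv φ (ξ n)|) atTop (𝓝 |deriv φ a|) :=
        (continuous_abs.tendsto _).comp h1
      exact h2.congr (fun n => habsval n)
    have hA0 : 0 < |deriv φ a| := abs_pos.mpr (hder0 a)
    obtain ⟨kk, hkk⟩ := tendsto_zpow_limit l1 hA0 hdtend
    refine ⟨kk, ?_⟩
    rcases le_or_gt 0 (deriv φ a) with h | h
    · left; rw [← abs_of_nonneg h, hkk]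
    · right
      have : |deriv φ a| = -(deriv φ a) := abs_of_neg h
      rw [this] at hkk
      linarith
  refine ⟨hpow, ?_⟩
  -- finiteness: |deriv φ| is bounded away from 0 and ∞ on the compact set C
  obtain ⟨p, hpC, hpmin⟩ := hcomp.exists_isMinOn hne (hcont.abs.continuousOn)
  obtain ⟨q, hqC, hqmax⟩ := hcomp.exists_isMaxOn hne (hcont.abs.continuousOn)
  have hmpos : 0 < |deriv φ p| := abs_pos.mpr (hder0 p)
  have hlogl : (0:ℝ) < Real.log l := Real.log_pos l1
  set lo : ℤ := ⌈Real.log |deriv φ p| / Real.log l⌉ with hlo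
  set hi : ℤ := ⌊Real.log |deriv φ q| / Real.log l⌋ with hhi
  have hfin : Set.Finite (((fun k : ℤ => (l:ℝ) ^ k) '' Set.Icc lo hi) ∪
      ((fun k : ℤ => -((l:ℝ) ^ k)) '' Set.Icc lo hi)) :=
    ((Set.finite_Icc lo hi).image _).union ((Set.finite_Icc lo hi).image _)
  refine Set.Finite.subset hfin ?_
  rintro v ⟨a, ha, rfl⟩
  obtain ⟨kk, hkk⟩ := hpow a ha
  have habs : |deriv φ a| = l ^ kk := by
    rcases hkk with h | h
    · rw [h, abs_of_pos (zpow_pos l0 kk)]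
    · rw [h, abs_neg, abs_of_pos (zpow_pos l0 kk)]
  have hge : |deriv φ p| ≤ (l:ℝ) ^ kk := habs ▸ hpmin ha
  have hle : (l:ℝ) ^ kk ≤ |deriv φ q| := habs ▸ hqmax ha
  have hkk_lo : lo ≤ kk := by
    rw [hlo, Int.ceil_le]
    rw [div_le_iff₀ hlogl]
    have := Real.log_le_log hmpos hge
    rwa [Real.log_zpow] at this
  have hkk_hi : kk ≤ hi := by
    rw [hhi, Int.le_floor]
    rw [le_div_iff₀ hlogl]
    have := Real.log_le_log (zpow_pos l0 kk) hle
    rwa [Real.log_zpow] at this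
  rcases hkk with h | h
  · exact Or.inl ⟨kk, ⟨hkk_lo, hkk_hi⟩, h.symm⟩
  · exact Or.inr ⟨kk, ⟨hkk_lo, hkk_hi⟩, h.symm⟩
end
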